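/- arXiv:1610.03999 — 5 statements merged into one kernel-verified Lean document; each statement's English description precedes it below -/
import Mathlib

section
/- The projective hypercube PC(2k) has odd-girth exactly 2k+1. -/
open SimpleGraph

/-- The projective hypercube `PC(2k)`: the Cayley graph on `ℤ₂^{2k}` with connection
set consisting of the `2k` standard basis vectors and the all-ones vector. -/
def PC (k : ℕ) : SimpleGraph (Fin (2*k) → ZMod 2) :=
  SimpleGraph.fromRel fun x y =>
    (∃ i : Fin (2*k), y = x + fun j => if j = i then 1 else 0) ∨
    y = x + fun _ => 1

/-- `G` has odd-girth at least `n`: every odd cycle has length at least `n`. -/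
def oddGirthAtLeast {V : Type*} (G : SimpleGraph V) (n : ℕ) : Prop :=
  ∀ (x : V) (w : G.Walk x x), w.IsCycle → Odd w.length → n ≤ w.length

/-- `G` has odd-girth exactly `n`. -/
def hasOddGirth {V : Type*} (G : SimpleGraph V) (n : ℕ) : Prop :=
  oddGirthAtLeast G n ∧ ∃ (x : V) (w : G.Walk x x), w.IsCycle ∧ w.length = n

namespace PCaux

variable {k : ℕ}

abbrev V (k : ℕ) := Fin (2*k) → ZMod 2

def e (i : Fin (2*k)) : V k := fun j => if j = i then 1 else 0

def jj (k : ℕ) : V k := fun _ => 1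

lemma add_self (x : V k) : x + x = 0 := by
  funext j
  have : ∀ a : ZMod 2, a + a = 0 := by decide
  exact this (x j)

lemma add_cancel (a b c : V k) : a + b + (b + c) = a + c := by
  have : a + b + (b + c) = a + (b + b) + c := by ring
  rw [this, add_self, add_zero]

lemma e_inj {i i' : Fin (2*k)} (h : e i = e i') : i = i' := by
  by_contra hne
  have := congrFun h i
  simp only [e, if_pos rfl, if_neg hne] at this
  exact one_ne_zero this

lemma e_ne_jj (hk : 1 ≤ k) (i : Fin (2*k)) : e i ≠ jj k := by
  intro h
  have h2 : 2 ≤ 2*k := by omega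
  -- pick a coordinate different from i
  obtain ⟨j, hj⟩ : ∃ j : Fin (2*k), j ≠ i := by
    by_cases h0 : (⟨0, by omega⟩ : Fin (2*k)) = i
    · exact ⟨⟨1, by omega⟩, by rw [← h0]; simp [Fin.ext_iff]⟩
    · exact ⟨⟨0, by omega⟩, h0⟩
  have := congrFun h j
  simp only [e, jj, if_neg hj] at this
  exact zero_ne_one this

lemma diff_mem {x y : V k} (h : (PC k).Adj x y) :
    (∃ i, x + y = e i) ∨ x + y = jj k := by
  rw [PC, fromRel_adj] at h
  obtain ⟨-, h | h⟩ := h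
  · rcases h with ⟨i, rfl⟩ | rfl
    · exact Or.inl ⟨i, by rw [← add_assoc, add_self, zero_add]; rfl⟩
    · exact Or.inr (by rw [← add_assoc, add_self, zero_add]; rfl)
  · rcases h with ⟨i, rfl⟩ | rfl
    · exact Or.inl ⟨i, by rw [add_comm, ← add_assoc, add_self, zero_add]; rfl⟩
    · exact Or.inr (by rw [add_comm, ← add_assoc, add_self, zero_add]; rfl)

lemma darts_sum {u v : V k} (w : (PC k).Walk u v) :
    (w.darts.map fun d => d.toProd.1 + d.toProd.2).sum = u + v := by
  induction w with
  | nil => simp [add_self]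
  | cons h p ih =>
    simp only [Walk.darts_cons, List.map_cons, List.sum_cons, ih]
    exact add_cancel _ _ _

lemma list_sum_apply (l : List (V k)) (j : Fin (2*k)) :
    l.sum j = (l.map (fun d => d j)).sum := by
  induction l with
  | nil => rfl
  | cons d l ih => simp [ih]

lemma cast_zmod2_eq_zero_of_even {n : ℕ} (h : n % 2 = 0) : (n : ZMod 2) = 0 := by
  rw [ZMod.natCast_eq_zero_iff, Nat.dvd_iff_mod_eq_zero]; exact h

lemma odd_cast {n : ℕ} (h : Odd n) : (n : ZMod 2) = 1 := by
  obtain ⟨m, rfl⟩ := h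
  push_cast
  have h2 : (2 : ZMod 2) = 0 := rfl
  rw [h2]; ring

lemma odd_of_cast {n : ℕ} (h : (n : ZMod 2) = 1) : Odd n := by
  rcases Nat.even_or_odd n with he | ho
  · rw [cast_zmod2_eq_zero_of_even (Nat.even_iff.mp he)] at h
    exact absurd h (by decide)
  · exact ho

lemma count_cons' (a b : V k) (l : List (V k)) :
    (b :: l).count a = l.count a + if b = a then 1 else 0 := by
  rw [List.count_cons]
  simp only [beq_iff_eq]

lemma length_eq (hk : 1 ≤ k) (l : List (V k))
    (hmem : ∀ d ∈ l, (∃ i, d = e i) ∨ d = jj k) :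
    l.length = l.count (jj k) + ∑ j : Fin (2*k), l.count (e j) := by
  induction l with
  | nil => simp
  | cons d l ih =>
    have ih' := ih (fun d hd => hmem d (List.mem_cons_of_mem _ hd))
    rcases hmem d List.mem_cons_self with ⟨i, rfl⟩ | rfl
    · have h1 : (e i :: l).count (jj k) = l.count (jj k) := by
        rw [count_cons', if_neg (e_ne_jj hk i), add_zero]
      have h2 : ∑ j : Fin (2*k), (e i :: l).count (e j)
          = (∑ j : Fin (2*k), l.count (e j)) + 1 := by
        have key : ∀ j : Fin (2*k), (e i :: l).count (e j)
            = l.count (e j) + if j = i then 1 else 0 := by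
          intro j
          rw [count_cons']
          congr 1
          by_cases h : j = i
          · simp [h]
          · rw [if_neg (fun he => h (e_inj he).symm), if_neg h]
        simp only [key, Finset.sum_add_distrib, Finset.sum_ite_eq' Finset.univ,
          Finset.mem_univ, if_true]
      rw [List.length_cons, ih', h1, h2]
      omega
    · have h1 : (jj k :: l).count (jj k) = l.count (jj k) + 1 := by
        rw [count_cons', if_pos rfl]
      have h2 : ∑ j : Fin (2*k), (jj k :: l).count (e j)
          = ∑ j : Fin (2*k), l.count (e j) := by
        refine Finset.sum_congr rfl fun j _ => ?_
        rw [count_cons', if_neg (fun h => e_ne_jj hk j h.symm), add_zero]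
      rw [List.length_cons, ih', h1, h2]
      omega

lemma coord_count (hk : 1 ≤ k) (l : List (V k))
    (hmem : ∀ d ∈ l, (∃ i, d = e i) ∨ d = jj k) (j : Fin (2*k)) :
    (l.map (fun d => d j)).sum = ((l.count (e j) + l.count (jj k) : ℕ) : ZMod 2) := by
  induction l with
  | nil => simp
  | cons d l ih =>
    have ih' := ih (fun d hd => hmem d (List.mem_cons_of_mem _ hd))
    rw [List.map_cons, List.sum_cons, ih', count_cons', count_cons']
    rcases hmem d List.mem_cons_self with ⟨i, rfl⟩ | rfl
    · rw [if_neg (e_ne_jj hk i)]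
      by_cases hij : j = i
      · subst hij
        rw [if_pos rfl]
        have hv : e j j = 1 := by simp [e]
        rw [hv]; push_cast; ring
      · rw [if_neg (fun he => hij (e_inj he).symm)]
        have hv : e i j = 0 := by simp [e, hij]
        rw [hv]; push_cast; ring
    · rw [if_pos rfl, if_neg (fun h => e_ne_jj hk j h.symm)]
      have hv : jj k j = 1 := rfl
      rw [hv]; push_cast; ring

lemma lower (k : ℕ) (hk : 1 ≤ k) (x : V k) (w : (PC k).Walk x x)
    (hodd : Odd w.length) : 2*k+1 ≤ w.length := by
  set L := w.darts.map (fun d => d.toProd.1 + d.toProd.2) with hL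
  have hmem : ∀ d ∈ L, (∃ i, d = e i) ∨ d = jj k := by
    intro d hd
    rw [hL, List.mem_map] at hd
    obtain ⟨dt, _, rfl⟩ := hd
    exact diff_mem dt.adj
  have hlen : L.length = w.length := by simp [hL]
  have hsum : L.sum = 0 := by rw [hL, darts_sum, add_self]
  clear_value L
  set b := L.count (jj k) with hb
  have h2 : (2 : ZMod 2) = 0 := rfl
  have hcj : ∀ j : Fin (2*k), ((L.count (e j) : ℕ) : ZMod 2) = (b : ZMod 2) := by
    intro j
    have h0 : (L.map (fun d => d j)).sum = 0 := by
      rw [← list_sum_apply, hsum]; rfl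
    have h := (coord_count hk L hmem j).symm.trans h0
    push_cast at h
    linear_combination h - (b : ZMod 2) * h2
  have hlen2 : L.length = b + ∑ j : Fin (2*k), L.count (e j) := length_eq hk L hmem
  have hLcast : ((L.length : ℕ) : ZMod 2) = (b : ZMod 2) := by
    rw [hlen2]
    push_cast
    rw [Finset.sum_congr rfl (fun j _ => hcj j), Finset.sum_const, Finset.card_univ,
      Fintype.card_fin, nsmul_eq_mul]
    push_cast
    linear_combination (k : ZMod 2) * (b : ZMod 2) * h2
  have hbodd : Odd b := by
    apply odd_of_cast
    rw [← hLcast, hlen]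
    exact odd_cast hodd
  have hcodd : ∀ j : Fin (2*k), 1 ≤ L.count (e j) := by
    intro j
    have : Odd (L.count (e j)) := by
      apply odd_of_cast
      rw [hcj j, ← hLcast, hlen]
      exact odd_cast hodd
    rcases this with ⟨m, hm⟩; omega
  have hsum1 : (2*k : ℕ) ≤ ∑ j : Fin (2*k), L.count (e j) := by
    calc (2*k : ℕ) = ∑ _j : Fin (2*k), 1 := by
          rw [Finset.sum_const, Finset.card_univ, Fintype.card_fin, smul_eq_mul, mul_one]
      _ ≤ _ := Finset.sum_le_sum fun j _ => hcodd j
  have hb1 : 1 ≤ b := by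
    rcases hbodd with ⟨m, hm⟩; omega
  rw [← hlen, hlen2]
  calc 2*k+1 = 1 + 2*k := by ring
    _ ≤ b + ∑ j : Fin (2*k), L.count (e j) := Nat.add_le_add hb1 hsum1

def s (k : ℕ) (m : ℕ) : V k := fun j => if (j : ℕ) < m then 1 else 0

lemma s_apply (m : ℕ) (j : Fin (2*k)) : s k m j = if (j:ℕ) < m then 1 else 0 := rfl

lemma s_ne {m m' : ℕ} (hlt : m < m') (hm' : m' ≤ 2*k) : s k m ≠ s k m' := by
  intro h
  have hcoord := congrFun h ⟨m, by omega⟩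
  rw [s_apply, s_apply] at hcoord
  rw [if_neg (Nat.lt_irrefl m), if_pos hlt] at hcoord
  exact absurd hcoord (by decide)

lemma s_inj {m m' : ℕ} (hm : m ≤ 2*k) (hm' : m' ≤ 2*k) (h : s k m = s k m') : m = m' := by
  rcases Nat.lt_trichotomy m m' with hlt | heq | hlt
  · exact absurd h (s_ne hlt hm')
  · exact heq
  · exact absurd h.symm (s_ne hlt hm)

lemma adj_step {m : ℕ} (hm : m < 2*k) : (PC k).Adj (s k m) (s k (m+1)) := by
  rw [PC, fromRel_adj]
  constructor
  · exact s_ne (Nat.lt_succ_self m) (by omega)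
  · left; left
    refine ⟨⟨m, hm⟩, ?_⟩
    funext j
    rw [Pi.add_apply, s_apply, s_apply]
    have hiff : (j = (⟨m, hm⟩ : Fin (2*k))) ↔ (j : ℕ) = m := by rw [Fin.ext_iff]
    rcases Nat.lt_trichotomy (j:ℕ) m with h | h | h
    · rw [if_pos (by omega), if_pos h, if_neg (by rw [hiff]; omega), add_zero]
    · rw [if_pos (by omega), if_neg (by omega), if_pos (hiff.mpr h), zero_add]
    · rw [if_neg (by omega), if_neg (by omega), if_neg (by rw [hiff]; omega), add_zero]

lemma adj_last (hk : 1 ≤ k) : (PC k).Adj (s k 0) (s k (2*k)) := by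
  rw [PC, fromRel_adj]
  refine ⟨s_ne (by omega) le_rfl, Or.inl (Or.inr ?_)⟩
  funext j
  rw [Pi.add_apply, s_apply, s_apply]
  rw [if_pos j.isLt, if_neg (by omega), zero_add]

def pwalk (k : ℕ) : (m : ℕ) → m ≤ 2*k → (PC k).Walk (s k 0) (s k m)
  | 0, _ => Walk.nil
  | m+1, h => (pwalk k m (by omega)).concat (adj_step (by omega))

lemma length_pwalk : ∀ (m : ℕ) (h : m ≤ 2*k), (pwalk k m h).length = m
  | 0, _ => rfl
  | m+1, h => by
    rw [pwalk, Walk.length_concat, length_pwalk m (by omega)]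

lemma support_pwalk : ∀ (m : ℕ) (h : m ≤ 2*k),
    (pwalk k m h).support = (List.range (m+1)).map (s k)
  | 0, _ => rfl
  | m+1, h => by
    rw [pwalk, Walk.support_concat, support_pwalk m (by omega)]
    simp [List.range_succ]

lemma edges_pwalk : ∀ (m : ℕ) (h : m ≤ 2*k),
    (pwalk k m h).edges = (List.range m).map (fun i => s(s k i, s k (i+1)))
  | 0, _ => rfl
  | m+1, h => by
    rw [pwalk, Walk.edges_concat, edges_pwalk m (by omega), List.range_succ]
    simp

lemma pwalk_isPath (m : ℕ) (h : m ≤ 2*k) : (pwalk k m h).IsPath := by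
  rw [Walk.isPath_def, support_pwalk]
  refine List.Nodup.map_on ?_ List.nodup_range
  intro a ha b hb hab
  rw [List.mem_range] at ha hb
  exact s_inj (by omega) (by omega) hab

def cyc (k : ℕ) (hk : 1 ≤ k) : (PC k).Walk (s k 0) (s k 0) :=
  Walk.cons (adj_last hk) (pwalk k (2*k) le_rfl).reverse

lemma cyc_isCycle (hk : 1 ≤ k) : (cyc k hk).IsCycle := by
  rw [cyc, Walk.cons_isCycle_iff]
  constructor
  · exact (pwalk_isPath _ _).reverse
  · rw [Walk.edges_reverse, List.mem_reverse, edges_pwalk]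
    intro hmem
    rw [List.mem_map] at hmem
    obtain ⟨i, hi, hedge⟩ := hmem
    rw [List.mem_range] at hi
    rw [Sym2.eq_iff] at hedge
    rcases hedge with ⟨h1, h2⟩ | ⟨h1, h2⟩
    · have e1 := s_inj (by omega) (by omega) h1
      have e2 := s_inj (by omega) (by omega) h2
      omega
    · have e2 := s_inj (by omega) (by omega) h2
      omega

lemma cyc_length (hk : 1 ≤ k) : (cyc k hk).length = 2*k+1 := by
  rw [cyc, Walk.length_cons, Walk.length_reverse, length_pwalk]

end PCaux

/-- The projective hypercube `PC(2k)` has odd-girth exactly `2k+1`. -/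
theorem PC_oddGirth (k : ℕ) (hk : 1 ≤ k) : hasOddGirth (PC k) (2*k+1) := by
  refine ⟨fun x w _ hodd => PCaux.lower k hk x w hodd,
    ⟨PCaux.s k 0, PCaux.cyc k hk, PCaux.cyc_isCycle hk, PCaux.cyc_length hk⟩⟩
end

section
/- Every K_4-minor-free graph of odd-girth at least 2k+1 admits a homomorphism to the Kneser graph K(2k+1, k). -/
open SimpleGraph

/-- The Kneser graph `K(n,r)`: vertices are the `r`-element subsets of an `n`-set,
adjacent iff disjoint. -/
def Kneser (n r : ℕ) : SimpleGraph {s : Finset (Fin n) // s.card = r} :=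
  SimpleGraph.fromRel fun a b => Disjoint a.1 b.1

/-- `G` has a `K₄` minor: there are four nonempty, pairwise disjoint, connected
branch sets with an edge of `G` between every two of them. -/
def HasK4Minor {V : Type*} (G : SimpleGraph V) : Prop :=
  ∃ S : Fin 4 → Set V,
    (∀ i, (S i).Nonempty) ∧
    (∀ i, (G.induce (S i)).Connected) ∧
    (Pairwise fun i j => Disjoint (S i) (S j)) ∧
    (Pairwise fun i j => ∃ a ∈ S i, ∃ b ∈ S j, G.Adj a b)

namespace SPK

variable {V : Type*}

/-- Walk in an induced set, projected into `G`. -/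
def toInduceWalk {G : SimpleGraph V} {S : Set V} :
    ∀ {a b : V} (w : G.Walk a b) (_ : ∀ z ∈ w.support, z ∈ S),
      (G.induce S).Walk ⟨a, by simp_all [Walk.start_mem_support]⟩
        ⟨b, by simp_all [Walk.end_mem_support]⟩
  | _, _, Walk.nil, hw => Walk.nil
  | _, _, Walk.cons h p, hw =>
      Walk.cons (by exact h)
        (toInduceWalk p (fun z hz => hw z (by simp [Walk.support_cons, hz])))

lemma induce_connected_of_walks {G : SimpleGraph V} {S : Set V} {v0 : V} (hv0 : v0 ∈ S)
    (h : ∀ u ∈ S, ∃ w : G.Walk u v0, ∀ z ∈ w.support, z ∈ S) :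
    (G.induce S).Connected := by
  rw [connected_iff]
  refine ⟨fun a b => ?_, ⟨⟨v0, hv0⟩⟩⟩
  obtain ⟨u, hu⟩ := a
  obtain ⟨v, hv⟩ := b
  obtain ⟨wu, hwu⟩ := h u hu
  obtain ⟨wv, hwv⟩ := h v hv
  exact ⟨(toInduceWalk wu hwu).append (toInduceWalk wv hwv).reverse⟩

lemma walks_of_induce_connected {G : SimpleGraph V} {S : Set V}
    (h : (G.induce S).Connected) {u v : V} (hu : u ∈ S) (hv : v ∈ S) :
    ∃ w : G.Walk u v, ∀ z ∈ w.support, z ∈ S := by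
  obtain ⟨p⟩ := h.preconnected ⟨u, hu⟩ ⟨v, hv⟩
  refine ⟨p.map ⟨Subtype.val, fun {a b} hab => hab⟩, fun z hz => ?_⟩
  rw [Walk.support_map, List.mem_map] at hz
  obtain ⟨z', _, rfl⟩ := hz
  exact z'.2

lemma mem_of_mem_induce_support {G : SimpleGraph V} {S : Set V} : True := trivial

/-- rotate preserves length -/
lemma length_rotate {G : SimpleGraph V} [DecidableEq V] {u v : V} (c : G.Walk v v)
    (h : u ∈ c.support) : (c.rotate u h).length = c.length := by
  have := congrArg Walk.length (c.take_spec h)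
  rw [Walk.length_append] at this
  rw [Walk.rotate, Walk.length_append]
  omega

/-- split a closed walk at a repeated root -/
lemma split_closed_walk {G : SimpleGraph V} [DecidableEq V] {x : V} (w : G.Walk x x)
    (h2 : 2 ≤ w.support.tail.count x) :
    ∃ (w₁ w₂ : G.Walk x x), w₁.length + w₂.length = w.length ∧
      1 ≤ w₁.length ∧ 1 ≤ w₂.length := by
  cases w with
  | nil => simp at h2
  | cons h p =>
    have htail : (Walk.cons h p).support.tail = p.support := by
      simp [Walk.support_cons]
    rw [htail] at h2
    have hx : x ∈ p.support := by
      have := h2; exact List.count_pos_iff.mp (by omega)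
    refine ⟨Walk.cons h (p.takeUntil x hx), p.dropUntil x hx, ?_, by simp, ?_⟩
    · have := congrArg Walk.length (p.take_spec hx)
      rw [Walk.length_append] at this
      simp only [Walk.length_cons]
      omega
    · by_contra hlen
      have h0 : (p.dropUntil x hx).length = 0 := by omega
      have hnil : p.dropUntil x hx = Walk.nil := Walk.nil_iff_eq_nil.mp (Walk.length_eq_zero_iff.mp h0)
      have hsp : p.support = (p.takeUntil x hx).support := by
        conv_lhs => rw [← p.take_spec hx]
        rw [Walk.support_append, hnil]
        simp
      rw [hsp, p.count_support_takeUntil_eq_one hx] at h2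
      omega

/-- an edge from the tip back into a path forces length one -/
lemma path_edge_start {G : SimpleGraph V} {a x : V} (p : G.Walk a x) (hax : x ≠ a)
    (hp : p.IsPath) (he : s(x, a) ∈ p.edges) : p.length = 1 := by
  cases p with
  | nil => simp at he
  | @cons _ b _ h' q =>
    rw [Walk.edges_cons, List.mem_cons] at he
    rcases he with he | he
    · have hbx : b = x := by
        rw [Sym2.eq_iff] at he
        rcases he with ⟨h1, _⟩ | ⟨h1, _⟩
        · exact absurd h1 hax
        · exact h1.symm
      subst hbx
      have hq : q.IsPath := hp.of_cons
      have : (⟨q, hq⟩ : G.Path b b) = Path.nil := Path.loop_eq _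
      have hqnil : q = Walk.nil := congrArg Subtype.val this
      rw [Walk.length_cons, hqnil]; rfl
    · exfalso
      have : a ∈ q.support := Walk.snd_mem_support_of_mem_edges q he
      have hnd := hp.support_nodup
      rw [Walk.support_cons] at hnd
      exact (List.nodup_cons.mp hnd).1 this

/-- a closed walk of odd length contains an odd cycle of no greater length -/
lemma odd_closed_walk_cycle {G : SimpleGraph V} [DecidableEq V] :
    ∀ (n : ℕ) {x : V} (w : G.Walk x x), w.length ≤ n → Odd w.length →
      ∃ (y : V) (c : G.Walk y y), c.IsCycle ∧ Odd c.length ∧ c.length ≤ w.length := by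
  intro n
  induction n with
  | zero =>
    intro x w hle hodd
    interval_cases h : w.length <;> simp_all
  | succ n ih =>
    intro x w hle hodd
    by_cases hnodup : w.support.tail.Nodup
    · -- w is a cycle
      cases w with
      | nil => simp at hodd
      | cons h p =>
        refine ⟨x, Walk.cons h p, ?_, hodd, le_refl _⟩
        rw [Walk.cons_isCycle_iff]
        have hps : p.support = (Walk.cons h p).support.tail := by simp [Walk.support_cons]
        have hpath : p.IsPath := by rw [Walk.isPath_def, hps]; exact hnodup
        refine ⟨hpath, fun hmem => ?_⟩
        have hlen := path_edge_start p h.ne hpath hmem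
        rw [Walk.length_cons, hlen] at hodd
        simp [Nat.odd_iff] at hodd
    · -- there is a repeated vertex in the tail
      obtain ⟨v, hv⟩ : ∃ v, 2 ≤ w.support.tail.count v := by
        by_contra hno
        push_neg at hno
        exact hnodup (List.nodup_iff_count_le_one.mpr (fun a => by have := hno a; omega))
      have hvs : v ∈ w.support := by
        have : v ∈ w.support.tail := List.count_pos_iff.mp (by omega)
        exact List.mem_of_mem_tail this
      set w' := w.rotate v hvs with hw'
      have hlen' : w'.length = w.length := length_rotate w hvs
      have hcount : 2 ≤ w'.support.tail.count v := by
        have hrot := w.support_rotate v hvs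
        show 2 ≤ (w.rotate v hvs).support.tail.count v
        rw [List.Perm.count_eq hrot.perm]
        exact hv
      obtain ⟨w₁, w₂, hsum, h1, h2⟩ := split_closed_walk w' hcount
      have hw12 : Odd w₁.length ∨ Odd w₂.length := by
        rw [hlen'] at hsum
        rcases Nat.even_or_odd w₁.length with he | ho
        · right
          rcases Nat.even_or_odd w₂.length with he2 | ho2
          · exfalso; rw [← hsum] at hodd; rcases hodd with ⟨t, ht⟩
            rcases he with ⟨t1, ht1⟩; rcases he2 with ⟨t2, ht2⟩; omega
          · exact ho2
        · left; exact ho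
      rcases hw12 with ho | ho
      · obtain ⟨y, c, hc⟩ := ih w₁ (by omega) ho
        exact ⟨y, c, hc.1, hc.2.1, by omega⟩
      · obtain ⟨y, c, hc⟩ := ih w₂ (by omega) ho
        exact ⟨y, c, hc.1, hc.2.1, by omega⟩


section Surgery

variable {G H : SimpleGraph V}

/-- delete a vertex -/
def dver (G : SimpleGraph V) (v : V) : SimpleGraph V where
  Adj a b := G.Adj a b ∧ a ≠ v ∧ b ≠ v
  symm := ⟨by rintro a b ⟨h, h1, h2⟩; exact ⟨h.symm, h2, h1⟩⟩
  loopless := ⟨by rintro a ⟨h, _⟩; exact G.irrefl h⟩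

/-- a single edge graph -/
def aedge (p q : V) : SimpleGraph V where
  Adj a b := a ≠ b ∧ ((a = p ∧ b = q) ∨ (a = q ∧ b = p))
  symm := ⟨by rintro a b ⟨h, hc⟩; exact ⟨h.symm, by tauto⟩⟩
  loopless := ⟨by rintro a ⟨h, _⟩; exact h rfl⟩

/-- restrict a graph to a set -/
def rest (G : SimpleGraph V) (t : Set V) : SimpleGraph V where
  Adj a b := G.Adj a b ∧ a ∈ t ∧ b ∈ t
  symm := ⟨by rintro a b ⟨h, h1, h2⟩; exact ⟨h.symm, h2, h1⟩⟩
  loopless := ⟨by rintro a ⟨h, _⟩; exact G.irrefl h⟩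

/-- contract `q` onto `p` (`q` becomes isolated) -/
def contr (G : SimpleGraph V) (p q : V) : SimpleGraph V where
  Adj a b := a ≠ b ∧ a ≠ q ∧ b ≠ q ∧
    (G.Adj a b ∨ (a = p ∧ G.Adj q b) ∨ (b = p ∧ G.Adj a q))
  symm := ⟨by rintro a b ⟨h, h1, h2, h3⟩; exact ⟨h.symm, h2, h1, by tauto⟩⟩
  loopless := ⟨by rintro a ⟨h, _⟩; exact h rfl⟩

end Surgery

section Lifts

variable {G H : SimpleGraph V}

lemma hasK4Minor_mono (hle : H ≤ G) : HasK4Minor H → HasK4Minor G := by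
  rintro ⟨S, h1, h2, h3, h4⟩
  refine ⟨S, h1, fun i => (h2 i).mono (fun a b hab => hle hab), h3,
    fun i j hij => ?_⟩
  obtain ⟨a, ha, b, hb, hab⟩ := h4 hij
  exact ⟨a, ha, b, hb, hle hab⟩

lemma isolated_branch_free {x : V} (hx : ∀ b, ¬ H.Adj x b) (S : Fin 4 → Set V)
    (hconn : ∀ i, (H.induce (S i)).Connected)
    (hadj : Pairwise fun i j => ∃ a ∈ S i, ∃ b ∈ S j, H.Adj a b) :
    ∀ i, x ∉ S i := by
  intro i hxi
  have hsing : ∀ y ∈ S i, y = x := by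
    intro y hy
    obtain ⟨w, -⟩ := walks_of_induce_connected (hconn i) hxi hy
    cases w with
    | nil => rfl
    | cons h _ => exact absurd h (hx _)
  obtain ⟨j, hij⟩ : ∃ j, j ≠ i := by
    exact exists_ne i
  obtain ⟨a, ha, b, hb, hab⟩ := hadj hij.symm
  rw [hsing a ha] at hab
  exact hx b hab

/-- transfer walks edgewise -/
lemma walk_transfer {T : Set V}
    (hedge : ∀ a b, H.Adj a b → a ∈ T → b ∈ T →
      ∃ w : G.Walk a b, ∀ z ∈ w.support, z ∈ T) :
    ∀ {u v : V} (w : H.Walk u v), (∀ z ∈ w.support, z ∈ T) →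
      ∃ w' : G.Walk u v, ∀ z ∈ w'.support, z ∈ T := by
  intro u v w
  induction w with
  | nil => exact fun h => ⟨Walk.nil, h⟩
  | @cons a b c h p ih =>
    intro hsup
    have ha : a ∈ T := hsup a (Walk.start_mem_support _)
    have hb : b ∈ T := hsup b (by simp [Walk.support_cons])
    obtain ⟨w1, hw1⟩ := hedge a b h ha hb
    obtain ⟨w2, hw2⟩ := ih (fun z hz => hsup z (by simp [Walk.support_cons, hz]))
    refine ⟨w1.append w2, fun z hz => ?_⟩
    rw [Walk.mem_support_append_iff] at hz
    rcases hz with hz | hz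
    · exact hw1 z hz
    · exact hw2 z hz

lemma support_single {a b : V} (h : G.Adj a b) :
    ∀ z ∈ h.toWalk.support, z = a ∨ z = b := by
  intro z hz
  simpa [Walk.support_cons] using hz

lemma support_double {a x b : V} (h1 : G.Adj a x) (h2 : G.Adj x b) :
    ∀ z ∈ (Walk.cons h1 (Walk.cons h2 Walk.nil)).support, z = a ∨ z = x ∨ z = b := by
  intro z hz
  simpa [Walk.support_cons] using hz

/-- the common branch-set lifting lemma -/
lemma k4_lift {x p : V} (hiso : ∀ b, ¬ H.Adj x b) (hxp : G.Adj x p)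
    (hedge : ∀ a b, H.Adj a b →
      (G.Adj a b ∨ (G.Adj a x ∧ G.Adj x b ∧ (a = p ∨ b = p)))) :
    HasK4Minor H → HasK4Minor G := by
  rintro ⟨S, h1, h2, h3, h4⟩
  have hxS : ∀ i, x ∉ S i := isolated_branch_free hiso S h2 h4
  set S' : Fin 4 → Set V := fun i => S i ∪ {z | z = x ∧ p ∈ S i} with hS'
  have hsub : ∀ i, S i ⊆ S' i := fun i => Set.subset_union_left
  have hxmem : ∀ i, p ∈ S i → x ∈ S' i := fun i hp => Or.inr ⟨rfl, hp⟩
  refine ⟨S', fun i => (h1 i).mono (hsub i), ?_, ?_, ?_⟩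
  · -- connectivity
    intro i
    obtain ⟨v1, hv1⟩ := h1 i
    by_cases hp : p ∈ S i
    · refine induce_connected_of_walks (v0 := p) (hsub i hp) ?_
      intro u hu
      rcases hu with hu | ⟨rfl, -⟩
      · -- u in S i : use H-walk and transfer
        obtain ⟨w, hw⟩ := walks_of_induce_connected (h2 i) hu hp
        have := walk_transfer (G := G) (H := H) (T := S' i) ?_ w
          (fun z hz => hsub i (hw z hz))
        · exact this
        · intro a b hab ha hb
          rcases hedge a b hab with hG | ⟨hax, hxb, -⟩
          · refine ⟨hG.toWalk, fun z hz => ?_⟩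
            rcases support_single hG z hz with rfl | rfl
            · exact ha
            · exact hb
          · refine ⟨Walk.cons hax (Walk.cons hxb Walk.nil), fun z hz => ?_⟩
            rcases support_double hax hxb z hz with rfl | rfl | rfl
            · exact ha
            · exact hxmem i hp
            · exact hb
      · refine ⟨hxp.toWalk, fun z hz => ?_⟩
        rcases support_single hxp z hz with rfl | rfl
        · exact hxmem i hp
        · exact hsub i hp
    · -- p not in S i : S' i behaves like S i, all edges are G-edges
      refine induce_connected_of_walks (v0 := v1) (hsub i hv1) ?_
      intro u hu
      rcases hu with hu | ⟨rfl, hp'⟩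
      · obtain ⟨w, hw⟩ := walks_of_induce_connected (h2 i) hu hv1
        refine walk_transfer (G := G) (H := H) (T := S' i) ?_ w
          (fun z hz => hsub i (hw z hz))
        intro a b hab ha hb
        have haS : a ∈ S i := by
          rcases ha with h | ⟨rfl, hp'⟩; exact h; exact absurd hp' hp
        have hbS : b ∈ S i := by
          rcases hb with h | ⟨rfl, hp'⟩; exact h; exact absurd hp' hp
        rcases hedge a b hab with hG | ⟨-, -, hor⟩
        · refine ⟨hG.toWalk, fun z hz => ?_⟩
          rcases support_single hG z hz with rfl | rfl
          · exact ha
          · exact hb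
        · exfalso
          rcases hor with rfl | rfl
          · exact hp haS
          · exact hp hbS
      · exact absurd hp' hp
  · -- disjointness
    intro i j hij
    rw [Set.disjoint_left]
    rintro z (hz | ⟨hzx, hpi⟩) (hz' | ⟨hzx', hpj⟩)
    · exact (h3 hij).le_bot ⟨hz, hz'⟩
    · exact hxS i (by rwa [hzx'] at hz)
    · exact hxS j (by rwa [hzx] at hz')
    · exact (h3 hij).le_bot ⟨hpi, hpj⟩
  · -- cross adjacency
    intro i j hij
    obtain ⟨a, ha, b, hb, hab⟩ := h4 hij
    rcases hedge a b hab with hG | ⟨hax, hxb, hor⟩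
    · exact ⟨a, hsub i ha, b, hsub j hb, hG⟩
    · rcases hor with rfl | rfl
      · exact ⟨x, hxmem i ha, b, hsub j hb, hxb⟩
      · exact ⟨a, hsub i ha, x, hxmem j hb, hax⟩

lemma k4_lift_suppress {x p q : V} (hpq : p ≠ q) (hxp : G.Adj x p) (hxq : G.Adj x q) :
    HasK4Minor ((dver G x) ⊔ aedge p q) → HasK4Minor G := by
  apply k4_lift (x := x) (p := p)
  · rintro b (⟨-, hx, -⟩ | ⟨hne, hc⟩)
    · exact hx rfl
    · rcases hc with ⟨rfl, rfl⟩ | ⟨rfl, rfl⟩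
      · exact hxp.ne rfl
      · exact hxq.ne rfl
  · exact hxp
  · rintro a b (⟨hab, -, -⟩ | ⟨hne, hc⟩)
    · exact Or.inl hab
    · rcases hc with ⟨rfl, rfl⟩ | ⟨rfl, rfl⟩
      · exact Or.inr ⟨hxp.symm, hxq, Or.inl rfl⟩
      · exact Or.inr ⟨hxq.symm, hxp, Or.inr rfl⟩

lemma k4_lift_contr {p q : V} (hpq : G.Adj p q) :
    HasK4Minor (contr G p q) → HasK4Minor G := by
  apply k4_lift (x := q) (p := p)
  · rintro b ⟨-, hq, -, -⟩
    exact hq rfl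
  · exact hpq.symm
  · rintro a b ⟨hne, haq, hbq, (hab | ⟨rfl, hqb⟩ | ⟨rfl, haq'⟩)⟩
    · exact Or.inl hab
    · exact Or.inr ⟨hpq, hqb, Or.inl rfl⟩
    · exact Or.inr ⟨haq', hpq.symm, Or.inr rfl⟩

end Lifts

section Degrees

variable {G H : SimpleGraph V}

/-- has two distinct neighbours -/
def deg2 (H : SimpleGraph V) (x : V) : Prop :=
  ∃ a b, a ≠ b ∧ H.Adj x a ∧ H.Adj x b

/-- has three distinct neighbours -/
def deg3 (H : SimpleGraph V) (x : V) : Prop :=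
  ∃ a b c, a ≠ b ∧ a ≠ c ∧ b ≠ c ∧ H.Adj x a ∧ H.Adj x b ∧ H.Adj x c

/-- has four distinct neighbours -/
def deg4 (H : SimpleGraph V) (x : V) : Prop :=
  ∃ a b c d, a ≠ b ∧ a ≠ c ∧ a ≠ d ∧ b ≠ c ∧ b ≠ d ∧ c ≠ d ∧
    H.Adj x a ∧ H.Adj x b ∧ H.Adj x c ∧ H.Adj x d

lemma nbhd_cases {x : V} (h : ¬ deg3 H x) :
    (∀ b, ¬ H.Adj x b) ∨ (∃ w, H.Adj x w ∧ ∀ b, H.Adj x b → b = w) ∨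
      (∃ w1 w2, w1 ≠ w2 ∧ H.Adj x w1 ∧ H.Adj x w2 ∧
        ∀ b, H.Adj x b → b = w1 ∨ b = w2) := by
  classical
  by_cases h1 : ∃ b, H.Adj x b
  · obtain ⟨b, hb⟩ := h1
    by_cases h2 : ∃ c, H.Adj x c ∧ c ≠ b
    · obtain ⟨c, hc, hcb⟩ := h2
      refine Or.inr (Or.inr ⟨b, c, hcb.symm, hb, hc, fun d hd => ?_⟩)
      by_contra hcon
      push_neg at hcon
      exact h ⟨b, c, d, hcb.symm, (Ne.symm hcon.1), (Ne.symm hcon.2), hb, hc, hd⟩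
    · push_neg at h2
      exact Or.inr (Or.inl ⟨b, hb, fun d hd => by
        by_contra hne; exact hne (h2 d hd)⟩)
  · push_neg at h1
    exact Or.inl h1

lemma pick_of2 {a b x : V} (hab : a ≠ b) : ∃ u, (u = a ∨ u = b) ∧ u ≠ x := by
  classical
  by_cases h : a = x
  · exact ⟨b, Or.inr rfl, fun hbx => hab (h.trans hbx.symm)⟩
  · exact ⟨a, Or.inl rfl, h⟩

lemma pick_of3 {a b c x y : V} (h1 : a ≠ b) (h2 : a ≠ c) (h3 : b ≠ c) :
    ∃ u, (u = a ∨ u = b ∨ u = c) ∧ u ≠ x ∧ u ≠ y := by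
  classical
  by_cases ha : a ≠ x ∧ a ≠ y
  · exact ⟨a, Or.inl rfl, ha⟩
  by_cases hb : b ≠ x ∧ b ≠ y
  · exact ⟨b, Or.inr (Or.inl rfl), hb⟩
  refine ⟨c, Or.inr (Or.inr rfl), ?_, ?_⟩
  · rintro rfl
    have hay : a = y := by tauto
    have hby : b = y := by tauto
    exact h1 (hay.trans hby.symm)
  · rintro rfl
    have hay : a = x := by tauto
    have hby : b = x := by tauto
    exact h1 (hay.trans hby.symm)

lemma pick2_of3 {a b c x : V} (h1 : a ≠ b) (h2 : a ≠ c) (h3 : b ≠ c) :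
    ∃ u w, u ≠ w ∧ (u = a ∨ u = b ∨ u = c) ∧ (w = a ∨ w = b ∨ w = c) ∧
      u ≠ x ∧ w ≠ x := by
  classical
  by_cases ha : a = x
  · exact ⟨b, c, h3, Or.inr (Or.inl rfl), Or.inr (Or.inr rfl),
      fun h => h1 (ha.trans h.symm), fun h => h2 (ha.trans h.symm)⟩
  by_cases hb : b = x
  · exact ⟨a, c, h2, Or.inl rfl, Or.inr (Or.inr rfl), ha,
      fun h => h3 (hb.trans h.symm)⟩
  · exact ⟨a, b, h1, Or.inl rfl, Or.inr (Or.inl rfl), ha, hb⟩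

lemma pick3_of4 {a b c d x : V} (h1 : a ≠ b) (h2 : a ≠ c) (h3 : a ≠ d)
    (h4 : b ≠ c) (h5 : b ≠ d) (h6 : c ≠ d) :
    ∃ u v w, u ≠ v ∧ u ≠ w ∧ v ≠ w ∧
      (u = a ∨ u = b ∨ u = c ∨ u = d) ∧ (v = a ∨ v = b ∨ v = c ∨ v = d) ∧
      (w = a ∨ w = b ∨ w = c ∨ w = d) ∧ u ≠ x ∧ v ≠ x ∧ w ≠ x := by
  classical
  by_cases ha : a = x
  · exact ⟨b, c, d, h4, h5, h6, by tauto, by tauto, by tauto,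
      fun h => h1 (ha.trans h.symm), fun h => h2 (ha.trans h.symm),
      fun h => h3 (ha.trans h.symm)⟩
  by_cases hb : b = x
  · exact ⟨a, c, d, h2, h3, h6, by tauto, by tauto, by tauto, ha,
      fun h => h4 (hb.trans h.symm), fun h => h5 (hb.trans h.symm)⟩
  by_cases hc : c = x
  · exact ⟨a, b, d, h1, h3, h5, by tauto, by tauto, by tauto, ha, hb,
      fun h => h6 (hc.trans h.symm)⟩
  · exact ⟨a, b, c, h1, h2, h4, by tauto, by tauto, by tauto, ha, hb, hc⟩

lemma connected_singleton (G : SimpleGraph V) (v : V) :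
    (G.induce {v}).Connected := by
  refine induce_connected_of_walks (v0 := v) rfl ?_
  intro u hu
  rcases hu with rfl
  exact ⟨Walk.nil, by simp⟩

lemma k4_of_four {a b c d : V} (h1 : a ≠ b) (h2 : a ≠ c) (h3 : a ≠ d)
    (h4 : b ≠ c) (h5 : b ≠ d) (h6 : c ≠ d)
    (hab : G.Adj a b) (hac : G.Adj a c) (had : G.Adj a d)
    (hbc : G.Adj b c) (hbd : G.Adj b d) (hcd : G.Adj c d) :
    HasK4Minor G := by
  refine ⟨![{a}, {b}, {c}, {d}], ?_, ?_, ?_, ?_⟩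
  · intro i; fin_cases i <;> exact ⟨_, rfl⟩
  · intro i; fin_cases i <;> exact connected_singleton G _
  · intro i j hij
    fin_cases i <;> fin_cases j <;>
      simp_all [Set.disjoint_singleton_left] <;> tauto
  · intro i j hij
    fin_cases i <;> fin_cases j <;> simp_all <;>
      first
        | exact hab | exact hac | exact had | exact hbc | exact hbd | exact hcd
        | exact hab.symm | exact hac.symm | exact had.symm | exact hbc.symm
        | exact hbd.symm | exact hcd.symm

/-- every support element of a walk is the endpoint or has an edge -/
lemma walk_support_struct {H : SimpleGraph V} :
    ∀ {u v : V} (w : H.Walk u v), ∀ z ∈ w.support, z = v ∨ ∃ b, H.Adj z b := by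
  intro u v w
  induction w with
  | nil => intro z hz; simp at hz; exact Or.inl hz
  | @cons a b c h p ih =>
    intro z hz
    rw [Walk.support_cons, List.mem_cons] at hz
    rcases hz with rfl | hz
    · exact Or.inr ⟨b, h⟩
    · exact ih z hz

end Degrees

section Mgen

variable {G H : SimpleGraph V}

/-- the inductive hypothesis of the structure lemma -/
def MgenIH (V : Type*) (n : ℕ) : Prop :=
  ∀ (H : SimpleGraph V) (s : Finset V), s.card ≤ n →
    (∀ a b, H.Adj a b → a ∈ s ∧ b ∈ s) →
    ∀ x y : V, x ∈ s → y ∈ s →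
      (∃ z ∈ s, z ≠ x ∧ z ≠ y) →
      (x ≠ y → H.Adj x y ∧ deg2 H x ∧ deg2 H y) →
      (∀ v ∈ s, v ≠ x → v ≠ y → deg3 H v) →
      HasK4Minor H

/-- an edge is contractible if the merged vertex keeps degree 3 and common
neighbours have degree 4 -/
def contractible (H : SimpleGraph V) (p q : V) : Prop :=
  (∃ u1 u2 u3, u1 ≠ u2 ∧ u1 ≠ u3 ∧ u2 ≠ u3 ∧
    ((H.Adj p u1 ∨ H.Adj q u1) ∧ u1 ≠ p ∧ u1 ≠ q) ∧
    ((H.Adj p u2 ∨ H.Adj q u2) ∧ u2 ≠ p ∧ u2 ≠ q) ∧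
    ((H.Adj p u3 ∨ H.Adj q u3) ∧ u3 ≠ p ∧ u3 ≠ q)) ∧
  (∀ z, H.Adj p z → H.Adj q z → deg4 H z)

lemma common_of_fail {p q : V} (hfail : ¬ contractible H p q)
    (hp3 : deg3 H p) (hq3 : deg3 H q) : ∃ z, H.Adj p z ∧ H.Adj q z := by
  classical
  by_cases hB : ∀ z, H.Adj p z → H.Adj q z → deg4 H z
  · have hA : ¬ ∃ u1 u2 u3, u1 ≠ u2 ∧ u1 ≠ u3 ∧ u2 ≠ u3 ∧
        ((H.Adj p u1 ∨ H.Adj q u1) ∧ u1 ≠ p ∧ u1 ≠ q) ∧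
        ((H.Adj p u2 ∨ H.Adj q u2) ∧ u2 ≠ p ∧ u2 ≠ q) ∧
        ((H.Adj p u3 ∨ H.Adj q u3) ∧ u3 ≠ p ∧ u3 ≠ q) :=
      fun h => hfail ⟨h, hB⟩
    obtain ⟨m1, m2, m3, hm12, hm13, hm23, ha1, ha2, ha3⟩ := hp3
    obtain ⟨a, b, hab, haM, hbM, haq, hbq⟩ := pick2_of3 hm12 hm13 hm23 (x := q)
    have hpa : H.Adj p a := by rcases haM with rfl | rfl | rfl <;> assumption
    have hpb : H.Adj p b := by rcases hbM with rfl | rfl | rfl <;> assumption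
    obtain ⟨k1, k2, k3, hk12, hk13, hk23, hb1, hb2, hb3⟩ := hq3
    obtain ⟨c, d, hcd, hcM, hdM, hcp, hdp⟩ := pick2_of3 hk12 hk13 hk23 (x := p)
    have hqc : H.Adj q c := by rcases hcM with rfl | rfl | rfl <;> assumption
    by_cases hca : c = a
    · exact ⟨a, hpa, hca ▸ hqc⟩
    by_cases hcb : c = b
    · exact ⟨b, hpb, hcb ▸ hqc⟩
    · exact absurd ⟨a, b, c, hab, fun h => hca h.symm, fun h => hcb h.symm,
        ⟨Or.inl hpa, hpa.ne', haq⟩, ⟨Or.inl hpb, hpb.ne', hbq⟩,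
        ⟨Or.inr hqc, hcp, hqc.ne'⟩⟩ hA
  · push_neg at hB
    obtain ⟨z, hz1, hz2, -⟩ := hB
    exact ⟨z, hz1, hz2⟩

/-- contraction case -/
lemma mgen_contract {n : ℕ} (IH : MgenIH V n) {s : Finset V}
    (hcard : s.card ≤ n + 1) (hsupp : ∀ a b, H.Adj a b → a ∈ s ∧ b ∈ s)
    (hall : ∀ v ∈ s, deg3 H v) {p q : V} (hpq : H.Adj p q)
    (hc : contractible H p q) : HasK4Minor H := by
  classical
  obtain ⟨⟨u1, u2, u3, h12, h13, h23, ⟨hu1A, hu1p, hu1q⟩, ⟨hu2A, hu2p, hu2q⟩,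
    ⟨hu3A, hu3p, hu3q⟩⟩, hcn⟩ := hc
  apply k4_lift_contr hpq
  have hps : p ∈ s := (hsupp _ _ hpq).1
  have hqs : q ∈ s := (hsupp _ _ hpq).2
  have memU : ∀ u, (H.Adj p u ∨ H.Adj q u) → u ∈ s := by
    rintro u (h | h)
    · exact (hsupp _ _ h).2
    · exact (hsupp _ _ h).2
  have hadj' : ∀ u, (H.Adj p u ∨ H.Adj q u) → u ≠ p → u ≠ q → (contr H p q).Adj p u := by
    rintro u hu hup huq
    exact ⟨fun h => hup h.symm, hpq.ne, huq, by tauto⟩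
  refine IH (contr H p q) (s.erase q) ?_ ?_ p p ?_ ?_ ?_ (fun h => absurd rfl h) ?_
  · rw [Finset.card_erase_of_mem hqs]; omega
  · rintro a b ⟨hne, haq, hbq, hor⟩
    constructor
    · rcases hor with h | ⟨rfl, h⟩ | ⟨rfl, h⟩
      · exact Finset.mem_erase.mpr ⟨haq, (hsupp _ _ h).1⟩
      · exact Finset.mem_erase.mpr ⟨haq, hps⟩
      · exact Finset.mem_erase.mpr ⟨haq, (hsupp _ _ h.symm).2⟩
    · rcases hor with h | ⟨rfl, h⟩ | ⟨rfl, h⟩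
      · exact Finset.mem_erase.mpr ⟨hbq, (hsupp _ _ h).2⟩
      · exact Finset.mem_erase.mpr ⟨hbq, (hsupp _ _ h).2⟩
      · exact Finset.mem_erase.mpr ⟨hbq, hps⟩
  · exact Finset.mem_erase.mpr ⟨hpq.ne, hps⟩
  · exact Finset.mem_erase.mpr ⟨hpq.ne, hps⟩
  · exact ⟨u1, Finset.mem_erase.mpr ⟨hu1q, memU _ hu1A⟩, hu1p, hu1p⟩
  · intro v hv hvp _
    have hvq : v ≠ q := (Finset.mem_erase.mp hv).1
    have hvs : v ∈ s := (Finset.mem_erase.mp hv).2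
    obtain ⟨m1, m2, m3, g12, g13, g23, j1, j2, j3⟩ := hall v hvs
    by_cases hvQ : H.Adj v q
    · by_cases hvP : H.Adj v p
      · obtain ⟨e1, e2, e3, e4, f12, f13, f14, f23, f24, f34, i1, i2, i3, i4⟩ :=
          hcn v hvP.symm hvQ.symm
        obtain ⟨w1, w2, w3, hw12, hw13, hw23, hwM1, hwM2, hwM3, hwq1, hwq2, hwq3⟩ :=
          pick3_of4 f12 f13 f14 f23 f24 f34 (x := q)
        have hAdj : ∀ w, (w = e1 ∨ w = e2 ∨ w = e3 ∨ w = e4) → H.Adj v w := by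
          rintro w (rfl | rfl | rfl | rfl) <;> assumption
        exact ⟨w1, w2, w3, hw12, hw13, hw23,
          ⟨(hAdj _ hwM1).ne, hvq, hwq1, Or.inl (hAdj _ hwM1)⟩,
          ⟨(hAdj _ hwM2).ne, hvq, hwq2, Or.inl (hAdj _ hwM2)⟩,
          ⟨(hAdj _ hwM3).ne, hvq, hwq3, Or.inl (hAdj _ hwM3)⟩⟩
      · obtain ⟨w1, w2, hw12, hwM1, hwM2, hwq1, hwq2⟩ := pick2_of3 g12 g13 g23 (x := q)
        have hAdj : ∀ w, (w = m1 ∨ w = m2 ∨ w = m3) → H.Adj v w := by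
          rintro w (rfl | rfl | rfl) <;> assumption
        have hw1p : w1 ≠ p := fun h => hvP (h ▸ hAdj _ hwM1)
        have hw2p : w2 ≠ p := fun h => hvP (h ▸ hAdj _ hwM2)
        exact ⟨w1, w2, p, hw12, hw1p, hw2p,
          ⟨(hAdj _ hwM1).ne, hvq, hwq1, Or.inl (hAdj _ hwM1)⟩,
          ⟨(hAdj _ hwM2).ne, hvq, hwq2, Or.inl (hAdj _ hwM2)⟩,
          ⟨hvp, hvq, hpq.ne, Or.inr (Or.inr ⟨rfl, hvQ⟩)⟩⟩
    · have hAdj : ∀ w, (w = m1 ∨ w = m2 ∨ w = m3) → H.Adj v w := by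
        rintro w (rfl | rfl | rfl) <;> assumption
      have hne : ∀ w, H.Adj v w → w ≠ q := fun w hw h => hvQ (h ▸ hw)
      exact ⟨m1, m2, m3, g12, g13, g23,
        ⟨j1.ne, hvq, hne _ j1, Or.inl j1⟩,
        ⟨j2.ne, hvq, hne _ j2, Or.inl j2⟩,
        ⟨j3.ne, hvq, hne _ j3, Or.inl j3⟩⟩

end Mgen

section CoreC

variable {H : SimpleGraph V}

lemma mgen_coreC {n : ℕ} (IH : MgenIH V n) {s : Finset V}
    (hcard : s.card ≤ n + 1) (hsupp : ∀ a b, H.Adj a b → a ∈ s ∧ b ∈ s)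
    (hall : ∀ v ∈ s, deg3 H v)
    {v a b c : V} (hva : H.Adj v a) (hvb : H.Adj v b) (hvc : H.Adj v c)
    (hab : H.Adj a b) (hac : H.Adj a c) (hbc : ¬ H.Adj b c)
    (hBC : b ≠ c) : HasK4Minor H := by
  classical
  set Hd := dver (dver H v) a with hHd
  have hHdle : Hd ≤ H := fun {x y} h => h.1.1
  have hHdv : ∀ x y, Hd.Adj x y → x ≠ v ∧ x ≠ a := fun x y h => ⟨h.1.2.1, h.2.1⟩
  by_cases hreach : Hd.Reachable b c
  · -- direct K4 minor
    obtain ⟨w0⟩ := hreach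
    obtain ⟨pw, hpath⟩ := w0.toPath
    cases pw with
    | nil => exact absurd rfl hBC
    | @cons _ b' _ h rest =>
      have hrest_av : ∀ z ∈ rest.support, z ≠ v ∧ z ≠ a := by
        intro z hz
        rcases walk_support_struct rest z hz with rfl | ⟨e, he⟩
        · exact ⟨hvc.ne', hac.ne'⟩
        · exact hHdv _ _ he
      have hbrest : b ∉ rest.support := by
        have := hpath.support_nodup
        rw [Walk.support_cons] at this
        exact (List.nodup_cons.mp this).1
      have hcT : c ∈ {z | z ∈ rest.support} := rest.end_mem_support
      have hbT2 : b' ∈ {z | z ∈ rest.support} := rest.start_mem_support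
      refine ⟨![{v}, {a}, {b}, {z | z ∈ rest.support}], ?_, ?_, ?_, ?_⟩
      · intro i; fin_cases i
        · exact ⟨v, rfl⟩
        · exact ⟨a, rfl⟩
        · exact ⟨b, rfl⟩
        · exact ⟨c, hcT⟩
      · intro i; fin_cases i
        · exact connected_singleton H v
        · exact connected_singleton H a
        · exact connected_singleton H b
        · refine ((induce_connected_of_walks (G := Hd) (v0 := c) hcT ?_).mono
            (fun {x y} hxy => ?_))
          · intro u hu
            exact ⟨rest.dropUntil u hu, fun z hz =>
              Walk.support_dropUntil_subset _ _ hz⟩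
          · exact hHdle hxy
      · intro i j hij
        have hvB : v ∉ {z | z ∈ rest.support} := fun hm => (hrest_av v hm).1 rfl
        have haB : a ∉ {z | z ∈ rest.support} := fun hm => (hrest_av a hm).2 rfl
        have d01 : Disjoint ({v} : Set V) {a} := Set.disjoint_singleton.mpr hva.ne
        have d02 : Disjoint ({v} : Set V) {b} := Set.disjoint_singleton.mpr hvb.ne
        have d12 : Disjoint ({a} : Set V) {b} := Set.disjoint_singleton.mpr hab.ne
        have d03 : Disjoint ({v} : Set V) {z | z ∈ rest.support} :=
          Set.disjoint_singleton_left.mpr hvB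
        have d13 : Disjoint ({a} : Set V) {z | z ∈ rest.support} :=
          Set.disjoint_singleton_left.mpr haB
        have d23 : Disjoint ({b} : Set V) {z | z ∈ rest.support} :=
          Set.disjoint_singleton_left.mpr hbrest
        fin_cases i <;> fin_cases j <;>
          first
            | exact absurd rfl hij
            | exact d01 | exact d02 | exact d03 | exact d12 | exact d13 | exact d23
            | exact d01.symm | exact d02.symm | exact d03.symm | exact d12.symm
            | exact d13.symm | exact d23.symm
      · intro i j hij
        have hHbb' : H.Adj b b' := hHdle h
        fin_cases i <;> fin_cases j <;>
          first
            | exact absurd rfl hij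
            | exact ⟨v, rfl, a, rfl, hva⟩
            | exact ⟨v, rfl, b, rfl, hvb⟩
            | exact ⟨v, rfl, c, hcT, hvc⟩
            | exact ⟨a, rfl, v, rfl, hva.symm⟩
            | exact ⟨a, rfl, b, rfl, hab⟩
            | exact ⟨a, rfl, c, hcT, hac⟩
            | exact ⟨b, rfl, v, rfl, hvb.symm⟩
            | exact ⟨b, rfl, a, rfl, hab.symm⟩
            | exact ⟨b, rfl, b', hbT2, hHbb'⟩
            | exact ⟨c, hcT, v, rfl, hvc.symm⟩
            | exact ⟨c, hcT, a, rfl, hac.symm⟩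
            | exact ⟨b', hbT2, b, rfl, hHbb'.symm⟩
  · -- component separation, recurse
    set CC : Set V := {z | Hd.Reachable b z} with hCC
    have hbCC : b ∈ CC := Set.mem_setOf.mpr (Reachable.refl b)
    have hCCgood : ∀ z ∈ CC, z ≠ v ∧ z ≠ a := by
      rintro z ⟨w⟩
      rcases walk_support_struct w.reverse z w.reverse.start_mem_support with
        rfl | ⟨e, he⟩
      · exact ⟨hvb.ne', hab.ne'⟩
      · exact hHdv _ _ he
    have hCCclosed : ∀ z ∈ CC, ∀ w, Hd.Adj z w → w ∈ CC := by
      rintro z hz w hzw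
      exact Set.mem_setOf.mpr ((Set.mem_setOf.mp hz).trans hzw.reachable)
    set t : Set V := CC ∪ {v, a} with ht
    have hvt : v ∈ t := Or.inr (Or.inl rfl)
    have hat : a ∈ t := Or.inr (Or.inr rfl)
    have hct : c ∉ t := by
      rintro (hc | hc | hc)
      · exact hreach (Set.mem_setOf.mp hc)
      · exact hvc.ne' hc
      · exact hac.ne' hc
    set s2 : Finset V := s.filter (fun z => z ∈ t) with hs2
    have hsub2 : s2 ⊆ s := Finset.filter_subset _ _
    have hcs : c ∈ s := (hsupp _ _ hvc).2
    have hcard2 : s2.card ≤ n := by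
      have hss : s2 ⊂ s := (Finset.ssubset_iff_of_subset hsub2).mpr
        ⟨c, hcs, fun hcmem => hct (Finset.mem_filter.mp hcmem).2⟩
      have := Finset.card_lt_card hss
      omega
    have hK := IH (rest H t) s2 hcard2 ?_ v a ?_ ?_ ?_ ?_ ?_
    · exact hasK4Minor_mono (G := H) (H := rest H t) (fun {x y} hxy => hxy.1) hK
    · rintro x y ⟨hxy, hxt, hyt⟩
      exact ⟨Finset.mem_filter.mpr ⟨(hsupp _ _ hxy).1, hxt⟩,
        Finset.mem_filter.mpr ⟨(hsupp _ _ hxy).2, hyt⟩⟩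
    · exact Finset.mem_filter.mpr ⟨(hsupp _ _ hva).1, hvt⟩
    · exact Finset.mem_filter.mpr ⟨(hsupp _ _ hva).2, hat⟩
    · exact ⟨b, Finset.mem_filter.mpr ⟨(hsupp _ _ hvb).2, Or.inl hbCC⟩,
        hvb.ne', hab.ne'⟩
    · intro _
      refine ⟨⟨hva, hvt, hat⟩, ⟨a, b, hab.ne, ⟨hva, hvt, hat⟩,
        ⟨hvb, hvt, Or.inl hbCC⟩⟩, ⟨v, b, hvb.ne, ⟨hva.symm, hat, hvt⟩,
        ⟨hab, hat, Or.inl hbCC⟩⟩⟩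
    · intro w hw hwv hwa
      have hws : w ∈ s := hsub2 hw
      have hwt : w ∈ t := (Finset.mem_filter.mp hw).2
      have hwCC : w ∈ CC := by
        rcases hwt with h | h | h
        · exact h
        · exact absurd h hwv
        · exact absurd h hwa
      obtain ⟨m1, m2, m3, g12, g13, g23, j1, j2, j3⟩ := hall w hws
      have hmem : ∀ m, H.Adj w m → m ∈ t := by
        intro m hm
        by_cases hmv : m = v
        · exact hmv ▸ hvt
        by_cases hma : m = a
        · exact hma ▸ hat
        · exact Or.inl (hCCclosed w hwCC m ⟨⟨hm, hwv, hmv⟩, hwa, hma⟩)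
      exact ⟨m1, m2, m3, g12, g13, g23, ⟨j1, hwt, hmem _ j1⟩,
        ⟨j2, hwt, hmem _ j2⟩, ⟨j3, hwt, hmem _ j3⟩⟩

end CoreC

section MgenMain

variable {H : SimpleGraph V}

lemma mgen_caseC {n : ℕ} (IH : MgenIH V n) {s : Finset V}
    (hcard : s.card ≤ n + 1) (hsupp : ∀ a b, H.Adj a b → a ∈ s ∧ b ∈ s)
    (hall : ∀ v ∈ s, deg3 H v) (hne : ∃ v0, v0 ∈ s) : HasK4Minor H := by
  classical
  by_cases hcontr : ∃ p q, H.Adj p q ∧ contractible H p q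
  · obtain ⟨p, q, hpq, hc⟩ := hcontr
    exact mgen_contract IH hcard hsupp hall hpq hc
  · push_neg at hcontr
    obtain ⟨v0, hv0⟩ := hne
    have hex : ∃ v ∈ s, ¬ deg4 H v := by
      by_contra hno
      push_neg at hno
      obtain ⟨m1, m2, m3, g12, g13, g23, j1, j2, j3⟩ := hall v0 hv0
      refine hcontr v0 m1 j1 ⟨?_, fun z hz1 _ => hno z (hsupp _ _ hz1).2⟩
      obtain ⟨e1, e2, e3, e4, f12, f13, f14, f23, f24, f34, i1, i2, i3, i4⟩ :=
        hno v0 hv0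
      obtain ⟨w1, w2, w3, hw12, hw13, hw23, hwM1, hwM2, hwM3, hwq1, hwq2, hwq3⟩ :=
        pick3_of4 f12 f13 f14 f23 f24 f34 (x := m1)
      have hAdj : ∀ w, (w = e1 ∨ w = e2 ∨ w = e3 ∨ w = e4) → H.Adj v0 w := by
        rintro w (rfl | rfl | rfl | rfl) <;> assumption
      exact ⟨w1, w2, w3, hw12, hw13, hw23,
        ⟨Or.inl (hAdj _ hwM1), (hAdj _ hwM1).ne', hwq1⟩,
        ⟨Or.inl (hAdj _ hwM2), (hAdj _ hwM2).ne', hwq2⟩,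
        ⟨Or.inl (hAdj _ hwM3), (hAdj _ hwM3).ne', hwq3⟩⟩
    obtain ⟨v, hvs, hv4⟩ := hex
    obtain ⟨a, b, c, gab, gac, gbc, hva, hvb, hvc⟩ := hall v hvs
    have hNv : ∀ z, H.Adj v z → z = a ∨ z = b ∨ z = c := by
      intro z hz
      by_contra hcon
      push_neg at hcon
      exact hv4 ⟨a, b, c, z, gab, gac, Ne.symm hcon.1, gbc, Ne.symm hcon.2.1,
        Ne.symm hcon.2.2, hva, hvb, hvc, hz⟩
    have hcomm : ∀ y, H.Adj v y → ∃ z, H.Adj v z ∧ H.Adj y z := fun y hy =>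
      common_of_fail (hcontr v y hy) (hall v hvs) (hall y (hsupp _ _ hy).2)
    have hA : H.Adj a b ∨ H.Adj a c := by
      obtain ⟨z, hz1, hz2⟩ := hcomm a hva
      rcases hNv z hz1 with rfl | rfl | rfl
      · exact absurd hz2 (H.irrefl)
      · exact Or.inl hz2
      · exact Or.inr hz2
    have hB : H.Adj b a ∨ H.Adj b c := by
      obtain ⟨z, hz1, hz2⟩ := hcomm b hvb
      rcases hNv z hz1 with rfl | rfl | rfl
      · exact Or.inl hz2
      · exact absurd hz2 (H.irrefl)
      · exact Or.inr hz2
    have hC : H.Adj c a ∨ H.Adj c b := by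
      obtain ⟨z, hz1, hz2⟩ := hcomm c hvc
      rcases hNv z hz1 with rfl | rfl | rfl
      · exact Or.inl hz2
      · exact Or.inr hz2
      · exact absurd hz2 (H.irrefl)
    by_cases hbc : H.Adj b c
    · by_cases hab : H.Adj a b
      · by_cases hac : H.Adj a c
        · exact k4_of_four hva.ne hvb.ne hvc.ne gab gac gbc hva hvb hvc hab hac hbc
        · exact mgen_coreC IH hcard hsupp hall hvb hva hvc hab.symm hbc hac gac
      · have hac : H.Adj a c := by
          rcases hA with h | h
          · exact absurd h hab
          · exact h
        exact mgen_coreC IH hcard hsupp hall hvc hva hvb hac.symm hbc.symm hab gab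
    · have hba : H.Adj a b := by
        rcases hB with h | h
        · exact h.symm
        · exact absurd h hbc
      have hca : H.Adj a c := by
        rcases hC with h | h
        · exact h.symm
        · exact absurd h.symm hbc
      exact mgen_coreC IH hcard hsupp hall hva hvb hvc hba hca hbc gbc

lemma mgen_stepB {n : ℕ} (IH : MgenIH V n) {s : Finset V}
    (hcard : s.card ≤ n + 1) (hsupp : ∀ a b, H.Adj a b → a ∈ s ∧ b ∈ s)
    {x y : V} (hxs : x ∈ s) (hys : y ∈ s) (hadjxy : H.Adj x y)
    (hz : ∃ z ∈ s, z ≠ x ∧ z ≠ y)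
    (hdeg : ∀ v ∈ s, v ≠ x → v ≠ y → deg3 H v)
    (hx2 : deg2 H x) (hx3 : ¬ deg3 H x) : HasK4Minor H := by
  classical
  rcases nbhd_cases hx3 with hiso | ⟨w, hw, hwall⟩ | ⟨w1, w2, hw12, hw1, hw2, hwall⟩
  · exact absurd hadjxy (hiso y)
  · obtain ⟨u1, u2, hu, hu1, hu2⟩ := hx2
    exact absurd ((hwall u1 hu1).trans (hwall u2 hu2).symm) hu
  · obtain ⟨aa, hxa, hay, hNx⟩ : ∃ aa, H.Adj x aa ∧ aa ≠ y ∧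
        ∀ b, H.Adj x b → b = y ∨ b = aa := by
      rcases hwall y hadjxy with rfl | rfl
      · exact ⟨w2, hw2, fun h => hw12 h.symm, fun b hb => hwall b hb⟩
      · exact ⟨w1, hw1, hw12, fun b hb => (hwall b hb).elim Or.inr Or.inl⟩
    have has : aa ∈ s := (hsupp _ _ hxa).2
    have hax : aa ≠ x := hxa.ne'
    have hyx : y ≠ x := hadjxy.ne'
    have hnbrx : ∀ v, v ≠ y → v ≠ aa → ¬ H.Adj v x := by
      intro v h1 h2 hv
      rcases hNx v hv.symm with h | h
      · exact h1 h
      · exact h2 h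
    have hda := hdeg aa has hax hay
    by_cases hya : H.Adj y aa
    · by_cases hy3 : deg3 H y
      · apply hasK4Minor_mono (G := H) (H := dver H x) (fun {u v} hab => hab.1)
        refine IH (dver H x) (s.erase x) ?_ ?_ y aa
          (Finset.mem_erase.mpr ⟨hyx, hys⟩) (Finset.mem_erase.mpr ⟨hax, has⟩)
          ?_ ?_ ?_
        · rw [Finset.card_erase_of_mem hxs]; omega
        · rintro u v ⟨h, h1, h2⟩
          exact ⟨Finset.mem_erase.mpr ⟨h1, (hsupp _ _ h).1⟩,
            Finset.mem_erase.mpr ⟨h2, (hsupp _ _ h).2⟩⟩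
        · obtain ⟨z0, hz0s, hz0x, hz0y⟩ := hz
          by_cases hz0a : z0 = aa
          · obtain ⟨m1, m2, m3, g12, g13, g23, j1, j2, j3⟩ := hda
            obtain ⟨u, huM, hux, huy⟩ := pick_of3 g12 g13 g23 (x := x) (y := y)
            have hj : H.Adj aa u := by rcases huM with rfl | rfl | rfl <;> assumption
            exact ⟨u, Finset.mem_erase.mpr ⟨hux, (hsupp _ _ hj).2⟩, huy, hj.ne'⟩
          · exact ⟨z0, Finset.mem_erase.mpr ⟨hz0x, hz0s⟩, hz0y, hz0a⟩
        · intro _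
          refine ⟨⟨hya, hyx, hax⟩, ?_, ?_⟩
          · obtain ⟨m1, m2, m3, g12, g13, g23, j1, j2, j3⟩ := hy3
            obtain ⟨u, w', huw, huM, hwM, hux, hwx⟩ := pick2_of3 g12 g13 g23 (x := x)
            have hju : H.Adj y u := by rcases huM with rfl | rfl | rfl <;> assumption
            have hjw : H.Adj y w' := by rcases hwM with rfl | rfl | rfl <;> assumption
            exact ⟨u, w', huw, ⟨hju, hyx, hux⟩, ⟨hjw, hyx, hwx⟩⟩
          · obtain ⟨m1, m2, m3, g12, g13, g23, j1, j2, j3⟩ := hda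
            obtain ⟨u, w', huw, huM, hwM, hux, hwx⟩ := pick2_of3 g12 g13 g23 (x := x)
            have hju : H.Adj aa u := by rcases huM with rfl | rfl | rfl <;> assumption
            have hjw : H.Adj aa w' := by rcases hwM with rfl | rfl | rfl <;> assumption
            exact ⟨u, w', huw, ⟨hju, hax, hux⟩, ⟨hjw, hax, hwx⟩⟩
        · intro v hv hvy hva
          have hvx : v ≠ x := (Finset.mem_erase.mp hv).1
          obtain ⟨m1, m2, m3, g12, g13, g23, j1, j2, j3⟩ :=
            hdeg v (Finset.mem_erase.mp hv).2 hvx hvy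
          have hmx : ∀ m, H.Adj v m → m ≠ x :=
            fun m hm he => hnbrx v hvy hva (he ▸ hm)
          exact ⟨m1, m2, m3, g12, g13, g23, ⟨j1, hvx, hmx _ j1⟩,
            ⟨j2, hvx, hmx _ j2⟩, ⟨j3, hvx, hmx _ j3⟩⟩
      · rcases nbhd_cases hy3 with hisoY | ⟨wy, hwy, hwallY⟩ |
          ⟨t1, t2, ht12, ht1, ht2, hwallY⟩
        · exact absurd hadjxy.symm (hisoY x)
        · exact absurd ((hwallY x hadjxy.symm).trans (hwallY aa hya).symm) hax.symm
        · have hNy : ∀ b, H.Adj y b → b = x ∨ b = aa := by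
            intro b hb
            rcases hwallY x hadjxy.symm with h1 | h1 <;>
              rcases hwallY aa hya with h2 | h2 <;>
              rcases hwallY b hb with h3 | h3 <;>
              first
                | exact absurd (h2.trans h1.symm) hax
                | exact Or.inl (h3.trans h1.symm)
                | exact Or.inr (h3.trans h2.symm)
          apply hasK4Minor_mono (G := H) (H := dver (dver H x) y)
            (fun {u v} hab => hab.1.1)
          refine IH (dver (dver H x) y) ((s.erase x).erase y) ?_ ?_ aa aa
            (Finset.mem_erase.mpr ⟨hay, Finset.mem_erase.mpr ⟨hax, has⟩⟩)
            (Finset.mem_erase.mpr ⟨hay, Finset.mem_erase.mpr ⟨hax, has⟩⟩)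
            ?_ (fun h => absurd rfl h) ?_
          · have h1 : (s.erase x).card = s.card - 1 := Finset.card_erase_of_mem hxs
            have h2 := Finset.card_erase_le (s := s.erase x) (a := y)
            omega
          · rintro u v ⟨⟨h, h1, h2⟩, h3, h4⟩
            exact ⟨Finset.mem_erase.mpr ⟨h3, Finset.mem_erase.mpr ⟨h1, (hsupp _ _ h).1⟩⟩,
              Finset.mem_erase.mpr ⟨h4, Finset.mem_erase.mpr ⟨h2, (hsupp _ _ h).2⟩⟩⟩
          · obtain ⟨m1, m2, m3, g12, g13, g23, j1, j2, j3⟩ := hda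
            obtain ⟨u, huM, hux, huy⟩ := pick_of3 g12 g13 g23 (x := x) (y := y)
            have hj : H.Adj aa u := by rcases huM with rfl | rfl | rfl <;> assumption
            exact ⟨u, Finset.mem_erase.mpr ⟨huy,
              Finset.mem_erase.mpr ⟨hux, (hsupp _ _ hj).2⟩⟩, hj.ne', hj.ne'⟩
          · intro v hv hva _
            have hvy : v ≠ y := (Finset.mem_erase.mp hv).1
            have hvx : v ≠ x := (Finset.mem_erase.mp (Finset.mem_erase.mp hv).2).1
            have hvs : v ∈ s := (Finset.mem_erase.mp (Finset.mem_erase.mp hv).2).2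
            obtain ⟨m1, m2, m3, g12, g13, g23, j1, j2, j3⟩ := hdeg v hvs hvx hvy
            have hmx : ∀ m, H.Adj v m → m ≠ x :=
              fun m hm he => hnbrx v hvy hva (he ▸ hm)
            have hmy : ∀ m, H.Adj v m → m ≠ y := by
              intro m hm he
              rw [he] at hm
              rcases hNy v hm.symm with h | h
              · exact hvx h
              · exact hva h
            exact ⟨m1, m2, m3, g12, g13, g23,
              ⟨⟨j1, hvx, hmx _ j1⟩, hvy, hmy _ j1⟩,
              ⟨⟨j2, hvx, hmx _ j2⟩, hvy, hmy _ j2⟩,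
              ⟨⟨j3, hvx, hmx _ j3⟩, hvy, hmy _ j3⟩⟩
    · apply k4_lift_suppress (G := H) (x := x) (p := y) (q := aa) hay.symm hadjxy hxa
      refine IH (dver H x ⊔ aedge y aa) (s.erase x) ?_ ?_ y y
        (Finset.mem_erase.mpr ⟨hyx, hys⟩) (Finset.mem_erase.mpr ⟨hyx, hys⟩)
        ⟨aa, Finset.mem_erase.mpr ⟨hax, has⟩, hay, hay⟩ (fun h => absurd rfl h) ?_
      · rw [Finset.card_erase_of_mem hxs]; omega
      · rintro u v (⟨h, h1, h2⟩ | ⟨h0, hc⟩)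
        · exact ⟨Finset.mem_erase.mpr ⟨h1, (hsupp _ _ h).1⟩,
            Finset.mem_erase.mpr ⟨h2, (hsupp _ _ h).2⟩⟩
        · rcases hc with ⟨rfl, rfl⟩ | ⟨rfl, rfl⟩
          · exact ⟨Finset.mem_erase.mpr ⟨hyx, hys⟩, Finset.mem_erase.mpr ⟨hax, has⟩⟩
          · exact ⟨Finset.mem_erase.mpr ⟨hax, has⟩, Finset.mem_erase.mpr ⟨hyx, hys⟩⟩
      · intro v hv hvy _
        have hvx : v ≠ x := (Finset.mem_erase.mp hv).1
        have hvs : v ∈ s := (Finset.mem_erase.mp hv).2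
        by_cases hvaa : v = aa
        · subst hvaa
          obtain ⟨m1, m2, m3, g12, g13, g23, j1, j2, j3⟩ := hda
          by_cases haX : H.Adj v x
          · obtain ⟨u, w', huw, huM, hwM, hux, hwx⟩ := pick2_of3 g12 g13 g23 (x := x)
            have hju : H.Adj v u := by rcases huM with rfl | rfl | rfl <;> assumption
            have hjw : H.Adj v w' := by rcases hwM with rfl | rfl | rfl <;> assumption
            have hjy : ∀ m, H.Adj v m → m ≠ y := by
              intro m hm he
              rw [he] at hm
              exact hya hm.symm
            exact ⟨u, w', y, huw, hjy _ hju, hjy _ hjw,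
              Or.inl ⟨hju, hvx, hux⟩, Or.inl ⟨hjw, hvx, hwx⟩,
              Or.inr ⟨hvy, Or.inr ⟨rfl, rfl⟩⟩⟩
          · have hmx : ∀ m, H.Adj v m → m ≠ x :=
              fun m hm he => haX (he ▸ hm)
            exact ⟨m1, m2, m3, g12, g13, g23, Or.inl ⟨j1, hvx, hmx _ j1⟩,
              Or.inl ⟨j2, hvx, hmx _ j2⟩, Or.inl ⟨j3, hvx, hmx _ j3⟩⟩
        · obtain ⟨m1, m2, m3, g12, g13, g23, j1, j2, j3⟩ := hdeg v hvs hvx hvy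
          have hmx : ∀ m, H.Adj v m → m ≠ x :=
            fun m hm he => hnbrx v hvy hvaa (he ▸ hm)
          exact ⟨m1, m2, m3, g12, g13, g23, Or.inl ⟨j1, hvx, hmx _ j1⟩,
            Or.inl ⟨j2, hvx, hmx _ j2⟩, Or.inl ⟨j3, hvx, hmx _ j3⟩⟩

end MgenMain

section MgenTop

variable {H : SimpleGraph V}

lemma mgen : ∀ (n : ℕ), MgenIH V n := by
  intro n
  induction n with
  | zero =>
    intro H s hcard _ x y hxs _ _ _ _
    rw [Nat.le_zero, Finset.card_eq_zero] at hcard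
    subst hcard
    exact absurd hxs (Finset.notMem_empty x)
  | succ n IH =>
    intro H s hcard hsupp x y hxs hys hz hpair hdeg
    classical
    by_cases hxy : x = y
    · subst hxy
      by_cases hx3 : deg3 H x
      · refine mgen_caseC IH hcard hsupp (fun v hv => ?_) ⟨x, hxs⟩
        by_cases h : v = x
        · exact h ▸ hx3
        · exact hdeg v hv h h
      · rcases nbhd_cases hx3 with hiso | ⟨w, hw, hwall⟩ |
          ⟨w1, w2, hw12, hw1, hw2, hwall⟩
        · -- isolated x
          obtain ⟨z0, hz0s, hz0x, -⟩ := hz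
          obtain ⟨m1, m2, m3, g12, g13, g23, j1, j2, j3⟩ := hdeg z0 hz0s hz0x hz0x
          have hm1x : m1 ≠ x := fun h => hiso z0 (by rw [h] at j1; exact j1.symm)
          refine IH H (s.erase x) ?_ ?_ z0 z0
            (Finset.mem_erase.mpr ⟨hz0x, hz0s⟩) (Finset.mem_erase.mpr ⟨hz0x, hz0s⟩)
            ⟨m1, Finset.mem_erase.mpr ⟨hm1x, (hsupp _ _ j1).2⟩, j1.ne', j1.ne'⟩
            (fun h => absurd rfl h) ?_
          · rw [Finset.card_erase_of_mem hxs]; omega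
          · intro a b hab
            have hax : a ≠ x := fun h => hiso b (h ▸ hab)
            have hbx : b ≠ x := fun h => hiso a (h ▸ hab.symm)
            exact ⟨Finset.mem_erase.mpr ⟨hax, (hsupp _ _ hab).1⟩,
              Finset.mem_erase.mpr ⟨hbx, (hsupp _ _ hab).2⟩⟩
          · intro v hv hvz _
            exact hdeg v (Finset.mem_erase.mp hv).2 (Finset.mem_erase.mp hv).1
              (Finset.mem_erase.mp hv).1
        · -- pendant x
          have hws : w ∈ s := (hsupp _ _ hw).2
          have hwx : w ≠ x := hw.ne'
          apply hasK4Minor_mono (G := H) (H := dver H x) (fun {u v} hab => hab.1)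
          refine IH (dver H x) (s.erase x) ?_ ?_ w w
            (Finset.mem_erase.mpr ⟨hwx, hws⟩) (Finset.mem_erase.mpr ⟨hwx, hws⟩)
            ?_ (fun h => absurd rfl h) ?_
          · rw [Finset.card_erase_of_mem hxs]; omega
          · rintro a b ⟨h, h1, h2⟩
            exact ⟨Finset.mem_erase.mpr ⟨h1, (hsupp _ _ h).1⟩,
              Finset.mem_erase.mpr ⟨h2, (hsupp _ _ h).2⟩⟩
          · obtain ⟨z0, hz0s, hz0x, -⟩ := hz
            by_cases hz0w : z0 = w
            · obtain ⟨m1, m2, m3, g12, g13, g23, j1, j2, j3⟩ := hdeg w hws hwx hwx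
              obtain ⟨u, huM, hux, huw⟩ := pick_of3 g12 g13 g23 (x := x) (y := w)
              have hj : H.Adj w u := by rcases huM with rfl | rfl | rfl <;> assumption
              exact ⟨u, Finset.mem_erase.mpr ⟨hux, (hsupp _ _ hj).2⟩, huw, huw⟩
            · exact ⟨z0, Finset.mem_erase.mpr ⟨hz0x, hz0s⟩, hz0w, hz0w⟩
          · intro v hv hvw _
            have hvx : v ≠ x := (Finset.mem_erase.mp hv).1
            obtain ⟨m1, m2, m3, g12, g13, g23, j1, j2, j3⟩ :=
              hdeg v (Finset.mem_erase.mp hv).2 hvx hvx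
            have hmx : ∀ m, H.Adj v m → m ≠ x := by
              intro m hm he
              rw [he] at hm
              exact hvw (hwall v hm.symm)
            exact ⟨m1, m2, m3, g12, g13, g23, ⟨j1, hvx, hmx _ j1⟩,
              ⟨j2, hvx, hmx _ j2⟩, ⟨j3, hvx, hmx _ j3⟩⟩
        · -- degree two x
          have hw1s : w1 ∈ s := (hsupp _ _ hw1).2
          have hw2s : w2 ∈ s := (hsupp _ _ hw2).2
          have hw1x : w1 ≠ x := hw1.ne'
          have hw2x : w2 ≠ x := hw2.ne'
          have hd1 := hdeg w1 hw1s hw1x hw1x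
          have hd2 := hdeg w2 hw2s hw2x hw2x
          have hnbr : ∀ v, v ≠ w1 → v ≠ w2 → ¬ H.Adj v x := by
            intro v h1 h2 hv
            rcases hwall v hv.symm with h | h
            · exact h1 h
            · exact h2 h
          by_cases hadj12 : H.Adj w1 w2
          · apply hasK4Minor_mono (G := H) (H := dver H x) (fun {u v} hab => hab.1)
            refine IH (dver H x) (s.erase x) ?_ ?_ w1 w2
              (Finset.mem_erase.mpr ⟨hw1x, hw1s⟩) (Finset.mem_erase.mpr ⟨hw2x, hw2s⟩)
              ?_ ?_ ?_
            · rw [Finset.card_erase_of_mem hxs]; omega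
            · rintro a b ⟨h, h1, h2⟩
              exact ⟨Finset.mem_erase.mpr ⟨h1, (hsupp _ _ h).1⟩,
                Finset.mem_erase.mpr ⟨h2, (hsupp _ _ h).2⟩⟩
            · obtain ⟨z0, hz0s, hz0x, -⟩ := hz
              by_cases hz01 : z0 = w1
              · obtain ⟨m1, m2, m3, g12, g13, g23, j1, j2, j3⟩ := hd1
                obtain ⟨u, huM, hux, huw⟩ := pick_of3 g12 g13 g23 (x := x) (y := w2)
                have hj : H.Adj w1 u := by
                  rcases huM with rfl | rfl | rfl <;> assumption
                exact ⟨u, Finset.mem_erase.mpr ⟨hux, (hsupp _ _ hj).2⟩, hj.ne', huw⟩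
              · by_cases hz02 : z0 = w2
                · obtain ⟨m1, m2, m3, g12, g13, g23, j1, j2, j3⟩ := hd2
                  obtain ⟨u, huM, hux, huw⟩ := pick_of3 g12 g13 g23 (x := x) (y := w1)
                  have hj : H.Adj w2 u := by
                    rcases huM with rfl | rfl | rfl <;> assumption
                  exact ⟨u, Finset.mem_erase.mpr ⟨hux, (hsupp _ _ hj).2⟩, huw, hj.ne'⟩
                · exact ⟨z0, Finset.mem_erase.mpr ⟨hz0x, hz0s⟩, hz01, hz02⟩
            · intro _
              refine ⟨⟨hadj12, hw1x, hw2x⟩, ?_, ?_⟩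
              · obtain ⟨m1, m2, m3, g12, g13, g23, j1, j2, j3⟩ := hd1
                obtain ⟨u, w', huw, huM, hwM, hux, hwx⟩ := pick2_of3 g12 g13 g23 (x := x)
                have hju : H.Adj w1 u := by rcases huM with rfl | rfl | rfl <;> assumption
                have hjw : H.Adj w1 w' := by rcases hwM with rfl | rfl | rfl <;> assumption
                exact ⟨u, w', huw, ⟨hju, hw1x, hux⟩, ⟨hjw, hw1x, hwx⟩⟩
              · obtain ⟨m1, m2, m3, g12, g13, g23, j1, j2, j3⟩ := hd2
                obtain ⟨u, w', huw, huM, hwM, hux, hwx⟩ := pick2_of3 g12 g13 g23 (x := x)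
                have hju : H.Adj w2 u := by rcases huM with rfl | rfl | rfl <;> assumption
                have hjw : H.Adj w2 w' := by rcases hwM with rfl | rfl | rfl <;> assumption
                exact ⟨u, w', huw, ⟨hju, hw2x, hux⟩, ⟨hjw, hw2x, hwx⟩⟩
            · intro v hv hv1 hv2
              have hvx : v ≠ x := (Finset.mem_erase.mp hv).1
              obtain ⟨m1, m2, m3, g12, g13, g23, j1, j2, j3⟩ :=
                hdeg v (Finset.mem_erase.mp hv).2 hvx hvx
              have hmx : ∀ m, H.Adj v m → m ≠ x :=
                fun m hm he => hnbr v hv1 hv2 (he ▸ hm)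
              exact ⟨m1, m2, m3, g12, g13, g23, ⟨j1, hvx, hmx _ j1⟩,
                ⟨j2, hvx, hmx _ j2⟩, ⟨j3, hvx, hmx _ j3⟩⟩
          · apply k4_lift_suppress (G := H) (x := x) (p := w1) (q := w2) hw12 hw1 hw2
            refine IH (dver H x ⊔ aedge w1 w2) (s.erase x) ?_ ?_ w1 w1
              (Finset.mem_erase.mpr ⟨hw1x, hw1s⟩) (Finset.mem_erase.mpr ⟨hw1x, hw1s⟩)
              ⟨w2, Finset.mem_erase.mpr ⟨hw2x, hw2s⟩, Ne.symm hw12, Ne.symm hw12⟩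
              (fun h => absurd rfl h) ?_
            · rw [Finset.card_erase_of_mem hxs]; omega
            · rintro a b (⟨h, h1, h2⟩ | ⟨h0, hc⟩)
              · exact ⟨Finset.mem_erase.mpr ⟨h1, (hsupp _ _ h).1⟩,
                  Finset.mem_erase.mpr ⟨h2, (hsupp _ _ h).2⟩⟩
              · rcases hc with ⟨rfl, rfl⟩ | ⟨rfl, rfl⟩
                · exact ⟨Finset.mem_erase.mpr ⟨hw1x, hw1s⟩,
                    Finset.mem_erase.mpr ⟨hw2x, hw2s⟩⟩
                · exact ⟨Finset.mem_erase.mpr ⟨hw2x, hw2s⟩,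
                    Finset.mem_erase.mpr ⟨hw1x, hw1s⟩⟩
            · intro v hv hvw1 _
              have hvx : v ≠ x := (Finset.mem_erase.mp hv).1
              have hvs : v ∈ s := (Finset.mem_erase.mp hv).2
              by_cases hvw2 : v = w2
              · subst hvw2
                obtain ⟨m1, m2, m3, g12, g13, g23, j1, j2, j3⟩ := hd2
                by_cases haX : H.Adj v x
                · obtain ⟨u, w', huw, huM, hwM, hux, hwx⟩ :=
                    pick2_of3 g12 g13 g23 (x := x)
                  have hju : H.Adj v u := by
                    rcases huM with rfl | rfl | rfl <;> assumption
                  have hjw : H.Adj v w' := by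
                    rcases hwM with rfl | rfl | rfl <;> assumption
                  have hj1 : ∀ m, H.Adj v m → m ≠ w1 := by
                    intro m hm he
                    rw [he] at hm
                    exact hadj12 hm.symm
                  exact ⟨u, w', w1, huw, hj1 _ hju, hj1 _ hjw,
                    Or.inl ⟨hju, hvx, hux⟩, Or.inl ⟨hjw, hvx, hwx⟩,
                    Or.inr ⟨Ne.symm hw12, Or.inr ⟨rfl, rfl⟩⟩⟩
                · have hmx : ∀ m, H.Adj v m → m ≠ x :=
                    fun m hm he => haX (he ▸ hm)
                  exact ⟨m1, m2, m3, g12, g13, g23, Or.inl ⟨j1, hvx, hmx _ j1⟩,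
                    Or.inl ⟨j2, hvx, hmx _ j2⟩, Or.inl ⟨j3, hvx, hmx _ j3⟩⟩
              · obtain ⟨m1, m2, m3, g12, g13, g23, j1, j2, j3⟩ := hdeg v hvs hvx hvx
                have hmx : ∀ m, H.Adj v m → m ≠ x :=
                  fun m hm he => hnbr v hvw1 hvw2 (he ▸ hm)
                exact ⟨m1, m2, m3, g12, g13, g23, Or.inl ⟨j1, hvx, hmx _ j1⟩,
                  Or.inl ⟨j2, hvx, hmx _ j2⟩, Or.inl ⟨j3, hvx, hmx _ j3⟩⟩
    · obtain ⟨hadjxy, hdx, hdy⟩ := hpair hxy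
      by_cases hx3 : deg3 H x
      · by_cases hy3 : deg3 H y
        · refine mgen_caseC IH hcard hsupp (fun v hv => ?_) ⟨x, hxs⟩
          by_cases h1 : v = x
          · exact h1 ▸ hx3
          by_cases h2 : v = y
          · exact h2 ▸ hy3
          · exact hdeg v hv h1 h2
        · obtain ⟨z0, hz0s, hz0x, hz0y⟩ := hz
          exact mgen_stepB IH hcard hsupp hys hxs hadjxy.symm
            ⟨z0, hz0s, hz0y, hz0x⟩ (fun v hv h1 h2 => hdeg v hv h2 h1) hdy hy3
      · exact mgen_stepB IH hcard hsupp hxs hys hadjxy hz hdeg hdx hx3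

/-- in a K4-minor-free graph supported in a nonempty finset there is a vertex of
degree at most two -/
lemma exists_small_vertex (hK : ¬ HasK4Minor H) {s : Finset V}
    (hsupp : ∀ a b, H.Adj a b → a ∈ s ∧ b ∈ s) (hne : s.Nonempty) :
    ∃ v ∈ s, ¬ deg3 H v := by
  classical
  by_contra hno
  push_neg at hno
  obtain ⟨v0, hv0⟩ := hne
  obtain ⟨m1, m2, m3, g12, g13, g23, j1, j2, j3⟩ := hno v0 hv0
  exact hK (mgen s.card H s le_rfl hsupp v0 v0 hv0 hv0
    ⟨m1, (hsupp _ _ j1).2, j1.ne', j1.ne'⟩ (fun h => absurd rfl h)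
    (fun v hv _ _ => hno v hv))

end MgenTop

section Kneser

/-- the walk-distance predicate on `k`-subsets: an odd walk of length `ℓ` exists
iff the intersection is small, an even one iff it is large -/
def DD (k : ℕ) {α : Type*} [DecidableEq α] (X Y : Finset α) (ℓ : ℕ) : Prop :=
  (Odd ℓ ∧ 2 * (X ∩ Y).card + 1 ≤ ℓ) ∨ (¬ Odd ℓ ∧ 2 * k ≤ ℓ + 2 * (X ∩ Y).card)

lemma DD_symm {k : ℕ} {α : Type*} [DecidableEq α] {X Y : Finset α} {ℓ : ℕ}
    (h : DD k X Y ℓ) : DD k Y X ℓ := by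
  rwa [DD, Finset.inter_comm] at h

lemma numeric_feas (k i l1 h1 l2 h2 : ℕ) (hik : i ≤ k) (hb1 : l1 ≤ h1) (hh1 : h1 ≤ k)
    (hb2 : l2 ≤ h2) (hh2 : h2 ≤ k) (hd : i + l2 ≤ k + h1) (he : i + l1 ≤ k + h2)
    (hf : k ≤ i + h1 + h2 + 1) (hg : l1 + l2 ≤ k + i) :
    ∃ x y a, l1 ≤ x ∧ x ≤ h1 ∧ l2 ≤ y ∧ y ≤ h2 ∧ a ≤ i ∧ a ≤ x ∧ a ≤ y ∧
      x + i ≤ a + k ∧ y + i ≤ a + k ∧ x + y ≤ a + k ∧ a + k ≤ x + y + i + 1 := by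
  refine ⟨max l1 (max (l2 - (k-i)) ((k-i-1) - h2)), ?_⟩
  set x := max l1 (max (l2 - (k-i)) ((k-i-1) - h2)) with hx
  refine ⟨max l2 (max (x - (k-i)) ((k-i-1) - x)), ?_⟩
  set y := max l2 (max (x - (k-i)) ((k-i-1) - x)) with hy
  refine ⟨max (x + y - k) (max (x - (k-i)) (y - (k-i))), ?_⟩
  omega

lemma exists_inter_card {k : ℕ} (P Q : Finset (Fin (2*k+1)))
    (hP : P.card = k) (hQ : Q.card = k) {x y a : ℕ}
    (ha1 : a ≤ (P ∩ Q).card) (ha2 : a ≤ x) (ha3 : a ≤ y)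
    (hb : x + (P ∩ Q).card ≤ a + k) (hc : y + (P ∩ Q).card ≤ a + k)
    (hd : x + y ≤ a + k) (he : a + k ≤ x + y + (P ∩ Q).card + 1) :
    ∃ X : Finset (Fin (2*k+1)), X.card = k ∧ (X ∩ P).card = x ∧ (X ∩ Q).card = y := by
  classical
  set i := (P ∩ Q).card with hi
  have hR2 : (P ∩ Q).card + (P \ Q).card = k := by
    rw [Finset.card_inter_add_card_sdiff, hP]
  have hR3 : (P ∩ Q).card + (Q \ P).card = k := by
    rw [Finset.inter_comm, Finset.card_inter_add_card_sdiff, hQ]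
  have hPQu : (P ∪ Q).card + (P ∩ Q).card = 2 * k := by
    rw [Finset.card_union_add_card_inter, hP, hQ]; ring
  have hR4 : ((Finset.univ : Finset (Fin (2*k+1))) \ (P ∪ Q)).card = i + 1 := by
    rw [Finset.card_sdiff_of_subset (Finset.subset_univ _), Finset.card_univ, Fintype.card_fin]
    omega
  obtain ⟨A, hAsub, hAcard⟩ := Finset.exists_subset_card_eq (s := P ∩ Q) (n := a) ha1
  obtain ⟨B, hBsub, hBcard⟩ := Finset.exists_subset_card_eq (s := P \ Q)
    (n := x - a) (by omega)
  obtain ⟨C, hCsub, hCcard⟩ := Finset.exists_subset_card_eq (s := Q \ P)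
    (n := y - a) (by omega)
  obtain ⟨D, hDsub, hDcard⟩ := Finset.exists_subset_card_eq
    (s := (Finset.univ : Finset (Fin (2*k+1))) \ (P ∪ Q))
    (n := a + k - x - y) (by omega)
  have hAP : ∀ u ∈ A, u ∈ P := fun u hu => (Finset.mem_inter.mp (hAsub hu)).1
  have hAQ : ∀ u ∈ A, u ∈ Q := fun u hu => (Finset.mem_inter.mp (hAsub hu)).2
  have hBP : ∀ u ∈ B, u ∈ P := fun u hu => (Finset.mem_sdiff.mp (hBsub hu)).1
  have hBQ : ∀ u ∈ B, u ∉ Q := fun u hu => (Finset.mem_sdiff.mp (hBsub hu)).2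
  have hCQ : ∀ u ∈ C, u ∈ Q := fun u hu => (Finset.mem_sdiff.mp (hCsub hu)).1
  have hCP : ∀ u ∈ C, u ∉ P := fun u hu => (Finset.mem_sdiff.mp (hCsub hu)).2
  have hDP : ∀ u ∈ D, u ∉ P := fun u hu =>
    fun hp => (Finset.mem_sdiff.mp (hDsub hu)).2 (Finset.mem_union_left _ hp)
  have hDQ : ∀ u ∈ D, u ∉ Q := fun u hu =>
    fun hq => (Finset.mem_sdiff.mp (hDsub hu)).2 (Finset.mem_union_right _ hq)
  have dAB : Disjoint A B := Finset.disjoint_left.mpr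
    (fun u hu hv => (hBQ _ hv) (hAQ _ hu))
  have dAC : Disjoint A C := Finset.disjoint_left.mpr
    (fun u hu hv => (hCP _ hv) (hAP _ hu))
  have dAD : Disjoint A D := Finset.disjoint_left.mpr
    (fun u hu hv => (hDP _ hv) (hAP _ hu))
  have dBC : Disjoint B C := Finset.disjoint_left.mpr
    (fun u hu hv => (hCP _ hv) (hBP _ hu))
  have dBD : Disjoint B D := Finset.disjoint_left.mpr
    (fun u hu hv => (hDP _ hv) (hBP _ hu))
  have dCD : Disjoint C D := Finset.disjoint_left.mpr
    (fun u hu hv => (hDQ _ hv) (hCQ _ hu))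
  refine ⟨A ∪ B ∪ C ∪ D, ?_, ?_, ?_⟩
  · rw [Finset.card_union_of_disjoint (by
        simp [Finset.disjoint_union_left, dAD, dBD, dCD]),
      Finset.card_union_of_disjoint (by simp [Finset.disjoint_union_left, dAC, dBC]),
      Finset.card_union_of_disjoint dAB, hAcard, hBcard, hCcard, hDcard]
    omega
  · have h1 : (A ∪ B ∪ C ∪ D) ∩ P = A ∪ B := by
      apply Finset.Subset.antisymm
      · intro u hu
        obtain ⟨hu1, hu2⟩ := Finset.mem_inter.mp hu
        rcases Finset.mem_union.mp hu1 with h | h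
        · rcases Finset.mem_union.mp h with h | h
          · exact h
          · exact absurd hu2 (hCP _ h)
        · exact absurd hu2 (hDP _ h)
      · intro u hu
        rcases Finset.mem_union.mp hu with h | h
        · exact Finset.mem_inter.mpr ⟨by simp [h], hAP _ h⟩
        · exact Finset.mem_inter.mpr ⟨by simp [h], hBP _ h⟩
    rw [h1, Finset.card_union_of_disjoint dAB, hAcard, hBcard]
    omega
  · have h1 : (A ∪ B ∪ C ∪ D) ∩ Q = A ∪ C := by
      apply Finset.Subset.antisymm
      · intro u hu
        obtain ⟨hu1, hu2⟩ := Finset.mem_inter.mp hu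
        rcases Finset.mem_union.mp hu1 with h | h
        · rcases Finset.mem_union.mp h with h | h
          · rcases Finset.mem_union.mp h with h | h
            · exact Finset.mem_union_left _ h
            · exact absurd hu2 (hBQ _ h)
          · exact Finset.mem_union_right _ h
        · exact absurd hu2 (hDQ _ h)
      · intro u hu
        rcases Finset.mem_union.mp hu with h | h
        · exact Finset.mem_inter.mpr ⟨by simp [h], hAQ _ h⟩
        · exact Finset.mem_inter.mpr ⟨by simp [h], hCQ _ h⟩
    rw [h1, Finset.card_union_of_disjoint dAC, hAcard, hCcard]
    omega

lemma ext_lemma {k : ℕ} (P Q : Finset (Fin (2*k+1)))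
    (hP : P.card = k) (hQ : Q.card = k) (S1 S2 : Set ℕ)
    (h11 : ∀ ℓ1 ∈ S1, ∀ ℓ2 ∈ S1, Odd (ℓ1 + ℓ2) → 2*k+1 ≤ ℓ1 + ℓ2)
    (h22 : ∀ ℓ1 ∈ S2, ∀ ℓ2 ∈ S2, Odd (ℓ1 + ℓ2) → 2*k+1 ≤ ℓ1 + ℓ2)
    (h12 : ∀ ℓ1 ∈ S1, ∀ ℓ2 ∈ S2, DD k P Q (ℓ1 + ℓ2)) :
    ∃ X : Finset (Fin (2*k+1)), X.card = k ∧
      (∀ ℓ ∈ S1, DD k X P ℓ) ∧ (∀ ℓ ∈ S2, DD k X Q ℓ) := by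
  classical
  set i := (P ∩ Q).card with hidef
  have hik : i ≤ k := hP ▸ Finset.card_le_card (Finset.inter_subset_left)
  set A1 : Set ℕ := {t | 2*t+1 ∈ S1} with hA1
  set B1 : Set ℕ := {t | 2*t ∈ S1} with hB1
  set A2 : Set ℕ := {t | 2*t+1 ∈ S2} with hA2
  set B2 : Set ℕ := {t | 2*t ∈ S2} with hB2
  set m1 := sInf (insert k A1) with hm1
  set e1 := sInf (insert k B1) with he1
  set m2 := sInf (insert k A2) with hm2
  set e2 := sInf (insert k B2) with he2
  have hm1k : m1 ≤ k := Nat.sInf_le (Set.mem_insert _ _)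
  have he1k : e1 ≤ k := Nat.sInf_le (Set.mem_insert _ _)
  have hm2k : m2 ≤ k := Nat.sInf_le (Set.mem_insert _ _)
  have he2k : e2 ≤ k := Nat.sInf_le (Set.mem_insert _ _)
  have hm1mem : m1 = k ∨ (2*m1+1 ∈ S1) := by
    rcases Set.mem_insert_iff.mp (Nat.sInf_mem (s := insert k A1) ⟨k, Set.mem_insert _ _⟩)
      with h | h
    · exact Or.inl h
    · exact Or.inr h
  have he1mem : e1 = k ∨ (2*e1 ∈ S1) := by
    rcases Set.mem_insert_iff.mp (Nat.sInf_mem (s := insert k B1) ⟨k, Set.mem_insert _ _⟩)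
      with h | h
    · exact Or.inl h
    · exact Or.inr h
  have hm2mem : m2 = k ∨ (2*m2+1 ∈ S2) := by
    rcases Set.mem_insert_iff.mp (Nat.sInf_mem (s := insert k A2) ⟨k, Set.mem_insert _ _⟩)
      with h | h
    · exact Or.inl h
    · exact Or.inr h
  have he2mem : e2 = k ∨ (2*e2 ∈ S2) := by
    rcases Set.mem_insert_iff.mp (Nat.sInf_mem (s := insert k B2) ⟨k, Set.mem_insert _ _⟩)
      with h | h
    · exact Or.inl h
    · exact Or.inr h
  have hA1min : ∀ t ∈ A1, m1 ≤ t := fun t ht => Nat.sInf_le (Set.mem_insert_of_mem _ ht)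
  have hB1min : ∀ t ∈ B1, e1 ≤ t := fun t ht => Nat.sInf_le (Set.mem_insert_of_mem _ ht)
  have hA2min : ∀ t ∈ A2, m2 ≤ t := fun t ht => Nat.sInf_le (Set.mem_insert_of_mem _ ht)
  have hB2min : ∀ t ∈ B2, e2 ≤ t := fun t ht => Nat.sInf_le (Set.mem_insert_of_mem _ ht)
  -- the numeric hypotheses
  have hb1 : k - e1 ≤ m1 := by
    rcases hm1mem with h | h
    · omega
    rcases he1mem with h' | h'
    · omega
    · have := h11 _ h _ h' ⟨m1 + e1, by ring⟩
      omega
  have hb2 : k - e2 ≤ m2 := by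
    rcases hm2mem with h | h
    · omega
    rcases he2mem with h' | h'
    · omega
    · have := h22 _ h _ h' ⟨m2 + e2, by ring⟩
      omega
  have hd : i + (k - e2) ≤ k + m1 := by
    rcases hm1mem with h | h
    · omega
    rcases he2mem with h' | h'
    · omega
    · have hdd := h12 _ h _ h'
      rcases hdd with ⟨-, hle⟩ | ⟨hno, -⟩
      · omega
      · exact absurd ⟨m1 + e2, by ring⟩ hno
  have he : i + (k - e1) ≤ k + m2 := by
    rcases hm2mem with h | h
    · omega
    rcases he1mem with h' | h'
    · omega
    · have hdd := h12 _ h' _ h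
      rcases hdd with ⟨-, hle⟩ | ⟨hno, -⟩
      · omega
      · exact absurd ⟨e1 + m2, by ring⟩ hno
  have hf : k ≤ i + m1 + m2 + 1 := by
    rcases hm1mem with h | h
    · omega
    rcases hm2mem with h' | h'
    · omega
    · have hdd := h12 _ h _ h'
      rcases hdd with ⟨hodd, -⟩ | ⟨-, hle⟩
      · exfalso
        rcases hodd with ⟨t, ht⟩
        omega
      · omega
  have hg : (k - e1) + (k - e2) ≤ k + i := by
    rcases he1mem with h | h
    · omega
    rcases he2mem with h' | h'
    · omega
    · have hdd := h12 _ h _ h'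
      rcases hdd with ⟨hodd, -⟩ | ⟨-, hle⟩
      · exfalso
        rcases hodd with ⟨t, ht⟩
        omega
      · omega
  obtain ⟨x, y, a, hx1, hx2, hy1, hy2, ha1, ha2, ha3, hc1, hc2, hc3, hc4⟩ :=
    numeric_feas k i (k - e1) m1 (k - e2) m2 hik hb1 hm1k hb2 hm2k hd he hf hg
  obtain ⟨X, hXcard, hXP, hXQ⟩ := exists_inter_card P Q hP hQ
    (x := x) (y := y) (a := a) (by omega) ha2 ha3 (by omega) (by omega) hc3 (by omega)
  refine ⟨X, hXcard, ?_, ?_⟩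
  · intro ℓ hℓ
    rcases Nat.even_or_odd ℓ with hev | hod
    · obtain ⟨t, ht⟩ := hev
      have htB : t ∈ B1 := by
        rw [hB1]; simp only [Set.mem_setOf_eq]
        rw [show 2*t = ℓ by omega]
        exact hℓ
      have := hB1min t htB
      refine Or.inr ⟨by simp [Nat.odd_iff, ht, Nat.even_iff]; omega, ?_⟩
      rw [hXP]
      omega
    · obtain ⟨t, ht⟩ := hod
      have htA : t ∈ A1 := by
        rw [hA1]; simp only [Set.mem_setOf_eq]
        rw [show 2*t+1 = ℓ by omega]
        exact hℓ
      have := hA1min t htA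
      refine Or.inl ⟨⟨t, ht⟩, ?_⟩
      rw [hXP]
      omega
  · intro ℓ hℓ
    rcases Nat.even_or_odd ℓ with hev | hod
    · obtain ⟨t, ht⟩ := hev
      have htB : t ∈ B2 := by
        rw [hB2]; simp only [Set.mem_setOf_eq]
        rw [show 2*t = ℓ by omega]
        exact hℓ
      have := hB2min t htB
      refine Or.inr ⟨by simp [Nat.odd_iff, ht, Nat.even_iff]; omega, ?_⟩
      rw [hXQ]
      omega
    · obtain ⟨t, ht⟩ := hod
      have htA : t ∈ A2 := by
        rw [hA2]; simp only [Set.mem_setOf_eq]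
        rw [show 2*t+1 = ℓ by omega]
        exact hℓ
      have := hA2min t htA
      refine Or.inl ⟨⟨t, ht⟩, ?_⟩
      rw [hXQ]
      omega

end Kneser

section System

variable {G H : SimpleGraph V}

lemma walk_append_length {a b : V} (w1 : G.Walk a b) (w2 : G.Walk a b) :
    (w1.append w2.reverse).length = w1.length + w2.length := by
  rw [Walk.length_append, Walk.length_reverse]

lemma system (k : ℕ) (G : SimpleGraph V)
    (hOG : ∀ (v : V) (w : G.Walk v v), Odd w.length → 2*k+1 ≤ w.length) :
    ∀ (n : ℕ) (H : SimpleGraph V) (s : Finset V) (L : V → V → ℕ → Prop),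
      s.card ≤ n →
      (∀ a b, H.Adj a b → a ∈ s ∧ b ∈ s) →
      ¬ HasK4Minor H →
      (∀ a b ℓ, L a b ℓ → L b a ℓ) →
      (∀ a b ℓ, L a b ℓ → H.Adj a b) →
      (∀ a b ℓ, L a b ℓ → ∃ w : G.Walk a b, w.length = ℓ) →
      ∃ φ : V → Finset (Fin (2*k+1)),
        (∀ u, (φ u).card = k) ∧ (∀ a b ℓ, L a b ℓ → DD k (φ a) (φ b) ℓ) := by
  classical
  intro n
  induction n with
  | zero =>
    intro H s L hcard hsupp _ _ hLH _
    obtain ⟨X0, -, hX0⟩ := Finset.exists_subset_card_eq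
      (s := (Finset.univ : Finset (Fin (2*k+1)))) (n := k)
      (by rw [Finset.card_univ, Fintype.card_fin]; omega)
    refine ⟨fun _ => X0, fun _ => hX0, fun a b ℓ hL => ?_⟩
    exfalso
    rw [Nat.le_zero, Finset.card_eq_zero] at hcard
    exact absurd ((hsupp a b (hLH a b ℓ hL)).1) (hcard ▸ Finset.notMem_empty a)
  | succ n IH =>
    intro H s L hcard hsupp hK hLsym hLH hLG
    rcases s.eq_empty_or_nonempty with rfl | hne
    · obtain ⟨X0, -, hX0⟩ := Finset.exists_subset_card_eq
        (s := (Finset.univ : Finset (Fin (2*k+1)))) (n := k)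
        (by rw [Finset.card_univ, Fintype.card_fin]; omega)
      refine ⟨fun _ => X0, fun _ => hX0, fun a b ℓ hL => ?_⟩
      exact absurd ((hsupp a b (hLH a b ℓ hL)).1) (Finset.notMem_empty a)
    obtain ⟨v, hvs, hv3⟩ := exists_small_vertex hK hsupp hne
    have hLv : ∀ b ℓ, L v b ℓ → H.Adj v b := fun b ℓ h => hLH v b ℓ h
    rcases nbhd_cases hv3 with hiso | ⟨p, hp, hwall⟩ | ⟨p, q, hpq, hp, hq, hwall⟩
    · -- isolated
      refine IH H (s.erase v) L ?_ ?_ hK hLsym hLH hLG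
      · rw [Finset.card_erase_of_mem hvs]; omega
      · intro a b hab
        have hav : a ≠ v := fun h => hiso b (h ▸ hab)
        have hbv : b ≠ v := fun h => hiso a (h ▸ hab.symm)
        exact ⟨Finset.mem_erase.mpr ⟨hav, (hsupp _ _ hab).1⟩,
          Finset.mem_erase.mpr ⟨hbv, (hsupp _ _ hab).2⟩⟩
    · -- degree one
      have hpv : p ≠ v := hp.ne'
      set L' : V → V → ℕ → Prop := fun a b ℓ => L a b ℓ ∧ a ≠ v ∧ b ≠ v with hL'
      have hc1 : (s.erase v).card ≤ n := by
        rw [Finset.card_erase_of_mem hvs]; omega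
      have hc2 : ∀ a b, (dver H v).Adj a b → a ∈ s.erase v ∧ b ∈ s.erase v := by
        rintro a b ⟨h, h1, h2⟩
        exact ⟨Finset.mem_erase.mpr ⟨h1, (hsupp _ _ h).1⟩,
          Finset.mem_erase.mpr ⟨h2, (hsupp _ _ h).2⟩⟩
      have hc3 : ¬ HasK4Minor (dver H v) := fun h =>
        hK (hasK4Minor_mono (G := H) (H := dver H v) (fun {u w} hab => hab.1) h)
      have hc4 : ∀ a b ℓ, L' a b ℓ → L' b a ℓ := by
        rintro a b ℓ ⟨h, h1, h2⟩
        exact ⟨hLsym a b ℓ h, h2, h1⟩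
      have hc5 : ∀ a b ℓ, L' a b ℓ → (dver H v).Adj a b := by
        rintro a b ℓ ⟨h, h1, h2⟩
        exact ⟨hLH a b ℓ h, h1, h2⟩
      have hc6 : ∀ a b ℓ, L' a b ℓ → ∃ w : G.Walk a b, w.length = ℓ := by
        rintro a b ℓ ⟨h, -, -⟩
        exact hLG a b ℓ h
      obtain ⟨φ', hcard', hDD'⟩ := IH (dver H v) (s.erase v) L' hc1 hc2 hc3 hc4 hc5 hc6
      have hS11 : ∀ ℓ1 ∈ {ℓ | L v p ℓ}, ∀ ℓ2 ∈ {ℓ | L v p ℓ},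
          Odd (ℓ1 + ℓ2) → 2*k+1 ≤ ℓ1 + ℓ2 := by
        intro ℓ1 h1 ℓ2 h2 hodd
        obtain ⟨w1, hw1⟩ := hLG v p ℓ1 h1
        obtain ⟨w2, hw2⟩ := hLG v p ℓ2 h2
        have := hOG v (w1.append w2.reverse)
          (by rw [walk_append_length, hw1, hw2]; exact hodd)
        rw [walk_append_length, hw1, hw2] at this
        exact this
      obtain ⟨X, hXc, hX1, -⟩ := ext_lemma (φ' p) (φ' p) (hcard' p) (hcard' p)
        {ℓ | L v p ℓ} ∅ hS11 (fun ℓ1 h => absurd h (Set.notMem_empty _))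
        (fun ℓ1 _ ℓ2 h => absurd h (Set.notMem_empty _))
      refine ⟨Function.update φ' v X, ?_, ?_⟩
      · intro u
        by_cases hu : u = v
        · subst hu; rw [Function.update_self]; exact hXc
        · rw [Function.update_of_ne hu]; exact hcard' u
      · intro a b ℓ hL
        by_cases hav : a = v
        · rw [hav] at hL ⊢
          have hbp : b = p := hwall b (hLv b ℓ hL)
          rw [hbp] at hL ⊢
          rw [Function.update_self, Function.update_of_ne hpv]
          exact hX1 ℓ hL
        by_cases hbv : b = v
        · rw [hbv] at hL ⊢
          have hap : a = p := hwall a (hLv a ℓ (hLsym a v ℓ hL))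
          rw [hap] at hL ⊢
          rw [Function.update_self, Function.update_of_ne hpv]
          exact DD_symm (hX1 ℓ (hLsym p v ℓ hL))
        · rw [Function.update_of_ne hav, Function.update_of_ne hbv]
          exact hDD' a b ℓ ⟨hL, hav, hbv⟩
    · -- degree two
      have hpv : p ≠ v := hp.ne'
      have hqv : q ≠ v := hq.ne'
      set L' : V → V → ℕ → Prop := fun a b ℓ =>
        (L a b ℓ ∧ a ≠ v ∧ b ≠ v) ∨
        (a = p ∧ b = q ∧ ∃ ℓ1 ℓ2, ℓ = ℓ1 + ℓ2 ∧ L v p ℓ1 ∧ L v q ℓ2) ∨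
        (a = q ∧ b = p ∧ ∃ ℓ1 ℓ2, ℓ = ℓ1 + ℓ2 ∧ L v q ℓ1 ∧ L v p ℓ2) with hL'
      have hc1 : (s.erase v).card ≤ n := by
        rw [Finset.card_erase_of_mem hvs]; omega
      have hc2 : ∀ a b, (dver H v ⊔ aedge p q).Adj a b →
          a ∈ s.erase v ∧ b ∈ s.erase v := by
        rintro a b (⟨h, h1, h2⟩ | ⟨h0, hc⟩)
        · exact ⟨Finset.mem_erase.mpr ⟨h1, (hsupp _ _ h).1⟩,
            Finset.mem_erase.mpr ⟨h2, (hsupp _ _ h).2⟩⟩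
        · rcases hc with ⟨rfl, rfl⟩ | ⟨rfl, rfl⟩
          · exact ⟨Finset.mem_erase.mpr ⟨hpv, (hsupp _ _ hp).2⟩,
              Finset.mem_erase.mpr ⟨hqv, (hsupp _ _ hq).2⟩⟩
          · exact ⟨Finset.mem_erase.mpr ⟨hqv, (hsupp _ _ hq).2⟩,
              Finset.mem_erase.mpr ⟨hpv, (hsupp _ _ hp).2⟩⟩
      have hc3 : ¬ HasK4Minor (dver H v ⊔ aedge p q) := fun h =>
        hK (k4_lift_suppress (G := H) (x := v) hpq hp hq h)
      have hc4 : ∀ a b ℓ, L' a b ℓ → L' b a ℓ := by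
        rintro a b ℓ (⟨h, h1, h2⟩ | ⟨rfl, rfl, ℓ1, ℓ2, rfl, h1, h2⟩ |
          ⟨rfl, rfl, ℓ1, ℓ2, rfl, h1, h2⟩)
        · exact Or.inl ⟨hLsym a b ℓ h, h2, h1⟩
        · exact Or.inr (Or.inr ⟨rfl, rfl, ℓ2, ℓ1, by omega, h2, h1⟩)
        · exact Or.inr (Or.inl ⟨rfl, rfl, ℓ2, ℓ1, by omega, h2, h1⟩)
      have hc5 : ∀ a b ℓ, L' a b ℓ → (dver H v ⊔ aedge p q).Adj a b := by
        rintro a b ℓ (⟨h, h1, h2⟩ | ⟨rfl, rfl, -⟩ | ⟨rfl, rfl, -⟩)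
        · exact Or.inl ⟨hLH a b ℓ h, h1, h2⟩
        · exact Or.inr ⟨hpq, Or.inl ⟨rfl, rfl⟩⟩
        · exact Or.inr ⟨Ne.symm hpq, Or.inr ⟨rfl, rfl⟩⟩
      have hc6 : ∀ a b ℓ, L' a b ℓ → ∃ w : G.Walk a b, w.length = ℓ := by
        rintro a b ℓ (⟨h, -, -⟩ | ⟨rfl, rfl, ℓ1, ℓ2, rfl, h1, h2⟩ |
          ⟨rfl, rfl, ℓ1, ℓ2, rfl, h1, h2⟩)
        · exact hLG a b ℓ h
        · obtain ⟨w1, hw1⟩ := hLG v a ℓ1 h1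
          obtain ⟨w2, hw2⟩ := hLG v b ℓ2 h2
          exact ⟨w1.reverse.append w2, by
            rw [Walk.length_append, Walk.length_reverse, hw1, hw2]⟩
        · obtain ⟨w1, hw1⟩ := hLG v a ℓ1 h1
          obtain ⟨w2, hw2⟩ := hLG v b ℓ2 h2
          exact ⟨w1.reverse.append w2, by
            rw [Walk.length_append, Walk.length_reverse, hw1, hw2]⟩
      obtain ⟨φ', hcard', hDD'⟩ := IH (dver H v ⊔ aedge p q) (s.erase v) L'
        hc1 hc2 hc3 hc4 hc5 hc6
      have hS11 : ∀ ℓ1 ∈ {ℓ | L v p ℓ}, ∀ ℓ2 ∈ {ℓ | L v p ℓ},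
          Odd (ℓ1 + ℓ2) → 2*k+1 ≤ ℓ1 + ℓ2 := by
        intro ℓ1 h1 ℓ2 h2 hodd
        obtain ⟨w1, hw1⟩ := hLG v p ℓ1 h1
        obtain ⟨w2, hw2⟩ := hLG v p ℓ2 h2
        have := hOG v (w1.append w2.reverse)
          (by rw [walk_append_length, hw1, hw2]; exact hodd)
        rw [walk_append_length, hw1, hw2] at this
        exact this
      have hS22 : ∀ ℓ1 ∈ {ℓ | L v q ℓ}, ∀ ℓ2 ∈ {ℓ | L v q ℓ},
          Odd (ℓ1 + ℓ2) → 2*k+1 ≤ ℓ1 + ℓ2 := by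
        intro ℓ1 h1 ℓ2 h2 hodd
        obtain ⟨w1, hw1⟩ := hLG v q ℓ1 h1
        obtain ⟨w2, hw2⟩ := hLG v q ℓ2 h2
        have := hOG v (w1.append w2.reverse)
          (by rw [walk_append_length, hw1, hw2]; exact hodd)
        rw [walk_append_length, hw1, hw2] at this
        exact this
      have hS12 : ∀ ℓ1 ∈ {ℓ | L v p ℓ}, ∀ ℓ2 ∈ {ℓ | L v q ℓ},
          DD k (φ' p) (φ' q) (ℓ1 + ℓ2) := by
        intro ℓ1 h1 ℓ2 h2
        exact hDD' p q (ℓ1 + ℓ2) (Or.inr (Or.inl ⟨rfl, rfl, ℓ1, ℓ2, rfl, h1, h2⟩))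
      obtain ⟨X, hXc, hX1, hX2⟩ := ext_lemma (φ' p) (φ' q) (hcard' p) (hcard' q)
        {ℓ | L v p ℓ} {ℓ | L v q ℓ} hS11 hS22 hS12
      refine ⟨Function.update φ' v X, ?_, ?_⟩
      · intro u
        by_cases hu : u = v
        · subst hu; rw [Function.update_self]; exact hXc
        · rw [Function.update_of_ne hu]; exact hcard' u
      · intro a b ℓ hL
        by_cases hav : a = v
        · rw [hav] at hL ⊢
          rcases hwall b (hLv b ℓ hL) with hbp | hbq
          · rw [hbp] at hL ⊢
            rw [Function.update_self, Function.update_of_ne hpv]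
            exact hX1 ℓ hL
          · rw [hbq] at hL ⊢
            rw [Function.update_self, Function.update_of_ne hqv]
            exact hX2 ℓ hL
        by_cases hbv : b = v
        · rw [hbv] at hL ⊢
          rcases hwall a (hLv a ℓ (hLsym a v ℓ hL)) with hap | haq
          · rw [hap] at hL ⊢
            rw [Function.update_self, Function.update_of_ne hpv]
            exact DD_symm (hX1 ℓ (hLsym p v ℓ hL))
          · rw [haq] at hL ⊢
            rw [Function.update_self, Function.update_of_ne hqv]
            exact DD_symm (hX2 ℓ (hLsym q v ℓ hL))
        · rw [Function.update_of_ne hav, Function.update_of_ne hbv]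
          exact hDD' a b ℓ (Or.inl ⟨hL, hav, hbv⟩)

end System

end SPK

/-- Every finite `K₄`-minor-free graph of odd-girth at least `2k+1` admits a
homomorphism to the Kneser graph `K(2k+1, k)`. -/
theorem SP_to_Kneser {V : Type*} [Fintype V] (k : ℕ) (hk : 1 ≤ k) (G : SimpleGraph V)
    (h1 : ¬ HasK4Minor G) (h2 : oddGirthAtLeast G (2*k+1)) :
    Nonempty (G →g Kneser (2*k+1) k) := by
  classical
  have hOG : ∀ (v : V) (w : G.Walk v v), Odd w.length → 2*k+1 ≤ w.length := by
    intro v w hodd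
    obtain ⟨y, c, hc, hco, hcl⟩ := SPK.odd_closed_walk_cycle w.length w le_rfl hodd
    have := h2 y c hc hco
    omega
  obtain ⟨φ, hcard, hL⟩ := SPK.system k G hOG (Finset.univ.card) G Finset.univ
    (fun a b ℓ => G.Adj a b ∧ ℓ = 1) le_rfl
    (fun a b _ => ⟨Finset.mem_univ a, Finset.mem_univ b⟩) h1
    (fun a b ℓ h => ⟨h.1.symm, h.2⟩)
    (fun a b ℓ h => h.1)
    (fun a b ℓ h => ⟨h.1.toWalk, by simp [h.2]⟩)
  refine ⟨⟨fun v => ⟨φ v, hcard v⟩, ?_⟩⟩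
  intro a b hab
  have hdd := hL a b 1 ⟨hab, rfl⟩
  have hint : ((φ a) ∩ (φ b)).card = 0 := by
    rcases hdd with ⟨-, hle⟩ | ⟨hno, -⟩
    · omega
    · exact absurd odd_one hno
  have hdisj : Disjoint (φ a) (φ b) :=
    Finset.disjoint_iff_inter_eq_empty.mpr (Finset.card_eq_zero.mp hint)
  have hne : φ a ≠ φ b := by
    intro h
    rw [h, Finset.inter_self, hcard b] at hint
    omega
  exact ⟨fun h => hne (congrArg Subtype.val h), Or.inl hdisj⟩
end

section
/- Let B be a graph of odd-girth 2k+1 and let (B̃, d_B) be a k-partial distance graph of B having the all k-good triple property. Then every K_4-minor-free graph of odd-girth at least 2k+1 admits a homomorphism to B. -/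
open SimpleGraph

/-- A triple `{p,q,r}` of integers in `[1,k]` is `k`-good: if `p+q+r` is odd it is
at least `2k+1`; if it is even, the triangular inequalities hold. -/
def kGoodTriple (k p q r : ℕ) : Prop :=
  1 ≤ p ∧ p ≤ k ∧ 1 ≤ q ∧ q ≤ k ∧ 1 ≤ r ∧ r ≤ k ∧
  (Odd (p + q + r) → 2*k+1 ≤ p + q + r) ∧
  (Even (p + q + r) → p ≤ q + r ∧ q ≤ p + r ∧ r ≤ p + q)

/-- `Bt` is a `k`-partial distance graph of `B`: a graph on the vertices of `B`
whose edges `xy` carry weight `d_B(x,y) ≤ k`. -/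
def IsPartialDistGraph {V : Type*} (B Bt : SimpleGraph V) (k : ℕ) : Prop :=
  ∀ x y, Bt.Adj x y → B.dist x y ≤ k

/-- The all `k`-good triple property of a `k`-partial distance graph `Bt` of `B`:
`Bt` has an edge, and for every edge `xy` of `Bt` with `d_B(x,y) = p` and every
`k`-good triple `{p,q,r}`, there are vertices `z₁, z₂` joined to `x` and `y` in `Bt`
with `d_B(x,z₁) = q`, `d_B(y,z₁) = r`, `d_B(x,z₂) = r`, `d_B(y,z₂) = q`. -/
def AllKGoodTripleProp {V : Type*} (B Bt : SimpleGraph V) (k : ℕ) : Prop :=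
  (∃ x y, Bt.Adj x y) ∧
  ∀ x y, Bt.Adj x y → ∀ q r, kGoodTriple k (B.dist x y) q r →
    ∃ z₁ z₂, Bt.Adj x z₁ ∧ Bt.Adj y z₁ ∧ Bt.Adj x z₂ ∧ Bt.Adj y z₂ ∧
      B.dist x z₁ = q ∧ B.dist y z₁ = r ∧ B.dist x z₂ = r ∧ B.dist y z₂ = q

namespace K4F

variable {W : Type*} {G : SimpleGraph W}


lemma edge_last_of_nodup {a v : W} : ∀ {t : W} (q : G.Walk t a), q.support.Nodup →
    s(a, v) ∈ q.edges → v ∈ q.support ∧ (t = v → q.length = 1) := by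
  intro t q
  induction q with
  | nil => intro _ h2; simp at h2
  | @cons t w a h q ih =>
    intro hnd he
    have hsup : (Walk.cons h q).support = t :: q.support := rfl
    rw [hsup, List.nodup_cons] at hnd
    obtain ⟨htq, hndq⟩ := hnd
    have hta : t ≠ a := fun h' => htq (h' ▸ q.end_mem_support)
    rw [Walk.edges_cons, List.mem_cons] at he
    rcases he with he | he
    · rw [Sym2.eq_iff] at he
      rcases he with ⟨h1, h2⟩ | ⟨h1, h2⟩
      · exact absurd h1.symm hta
      · subst h2
        subst h1
        refine ⟨(Walk.cons h q).start_mem_support, fun _ => ?_⟩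
        cases q with
        | nil => simp
        | @cons _ w' _ h' q' =>
          exfalso
          rw [Walk.support_cons, List.nodup_cons] at hndq
          exact hndq.1 q'.end_mem_support
    · have := ih hndq he
      exact ⟨List.mem_cons_of_mem _ this.1, fun htv => absurd (htv ▸ this.1) htq⟩

lemma walk_reduce {a b : W} (p : G.Walk a b) :
    (∃ q : G.Walk a b, q.length ≤ p.length ∧ q.length % 2 = p.length % 2 ∧ q.IsPath) ∨
    (∃ (x : W) (c : G.Walk x x), c.IsCycle ∧ Odd c.length ∧ c.length ≤ p.length) := by
  classical
  induction p with
  | nil => exact Or.inl ⟨Walk.nil, le_rfl, rfl, Walk.IsPath.nil⟩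
  | @cons a w b h p ih =>
    rcases ih with ⟨q, hle, hpar, hq⟩ | ⟨x, c, hc, hodd, hlen⟩
    · by_cases ha : a ∈ q.support
      · set q₁ := q.takeUntil a ha with hq₁
        set q₂ := q.dropUntil a ha with hq₂
        have hsplit : q₁.append q₂ = q := q.take_spec ha
        have hlen12 : q₁.length + q₂.length = q.length := by
          rw [← hsplit, Walk.length_append]
        have hq₁p : q₁.IsPath := hq.takeUntil ha
        have hq₂p : q₂.IsPath := hq.dropUntil ha
        have hlc : (Walk.cons h p).length = p.length + 1 := Walk.length_cons _ _
        rcases Nat.even_or_odd (q₁.length + 1) with hev | hod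
        · rw [Nat.even_iff] at hev
          refine Or.inl ⟨q₂, ?_, ?_, hq₂p⟩
          · omega
          · omega
        · refine Or.inr ⟨a, Walk.cons h q₁, ?_, by simpa using hod, by rw [Walk.length_cons]; omega⟩
          rw [Walk.cons_isCycle_iff]
          refine ⟨hq₁p, fun hmem => ?_⟩
          have := edge_last_of_nodup q₁ hq₁p.support_nodup hmem
          have h1 : q₁.length = 1 := this.2 rfl
          rw [Nat.odd_iff] at hod
          omega
      · exact Or.inl ⟨Walk.cons h q, by rw [Walk.length_cons, Walk.length_cons]; omega,
          by rw [Walk.length_cons, Walk.length_cons]; omega, hq.cons ha⟩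
    · exact Or.inr ⟨x, c, hc, hodd, by rw [Walk.length_cons]; omega⟩

lemma exists_odd_cycle_of_odd_closed {u : W} (p : G.Walk u u) (ho : Odd p.length) :
    ∃ (x : W) (c : G.Walk x x), c.IsCycle ∧ Odd c.length ∧ c.length ≤ p.length := by
  rcases walk_reduce p with ⟨q, hle, hpar, hq⟩ | h
  · exfalso
    cases q with
    | nil =>
      rw [Nat.odd_iff] at ho
      simp at hpar
      omega
    | cons h' q' =>
      have : u ∉ q'.support := by
        have := hq.support_nodup
        rw [Walk.support_cons, List.nodup_cons] at this
        exact this.1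
      exact this q'.end_mem_support
  · exact h



variable (G) in
noncomputable def del (k : ℕ) (a b : W) : ℕ :=
  if 0 < G.dist a b then min (G.dist a b) k else k

variable {k : ℕ}

lemma del_comm (a b : W) : del G k a b = del G k b a := by
  unfold del; rw [dist_comm]

lemma del_le (a b : W) : del G k a b ≤ k := by
  unfold del; split <;> simp

lemma del_pos (hk : 1 ≤ k) (a b : W) : 1 ≤ del G k a b := by
  unfold del; split <;> omega


lemma dist_triangle' {a b c : W} (h1 : G.Reachable a b) (h2 : G.Reachable b c) :
    G.dist a c ≤ G.dist a b + G.dist b c := by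
  obtain ⟨p, hp⟩ := h1.exists_walk_length_eq_dist
  obtain ⟨q, hq⟩ := h2.exists_walk_length_eq_dist
  calc G.dist a c ≤ (p.append q).length := dist_le _
  _ = _ := by rw [Walk.length_append, hp, hq]

lemma del_good (hk : 1 ≤ k) (h2 : oddGirthAtLeast G (2*k+1)) {x y z : W}
    (hxy : x ≠ y) (hxz : x ≠ z) (hzy : z ≠ y) :
    kGoodTriple k (del G k x y) (del G k x z) (del G k z y) := by
  have hcase : ∀ a b : W, a ≠ b →
      (G.Reachable a b ∧ 0 < G.dist a b ∧ G.dist a b ≤ k ∧ del G k a b = G.dist a b) ∨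
      (del G k a b = k ∧ (G.Reachable a b → k < G.dist a b)) := by
    intro a b hab
    unfold del
    by_cases h : 0 < G.dist a b
    · rw [if_pos h]
      by_cases h' : G.dist a b ≤ k
      · exact Or.inl ⟨Reachable.of_dist_ne_zero (by omega), h, h', by omega⟩
      · exact Or.inr ⟨by omega, fun _ => by omega⟩
    · rw [if_neg h]
      refine Or.inr ⟨rfl, fun hr => ?_⟩
      exact absurd (hr.pos_dist_of_ne hab) h
  refine ⟨del_pos hk _ _, del_le _ _, del_pos hk _ _, del_le _ _, del_pos hk _ _, del_le _ _,
    ?_, ?_⟩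
  · -- odd case
    intro hodd
    rcases hcase x y hxy with hP | hP
    · rcases hcase x z hxz with hQ | hQ
      · rcases hcase z y hzy with hR | hR
        · -- all true : walk argument
          obtain ⟨wq, hwq⟩ := hQ.1.exists_walk_length_eq_dist
          obtain ⟨wr, hwr⟩ := hR.1.exists_walk_length_eq_dist
          obtain ⟨wp, hwp⟩ := hP.1.exists_walk_length_eq_dist
          set c : G.Walk x x := wq.append (wr.append wp.reverse) with hc
          have hclen : c.length = del G k x z + del G k z y + del G k x y := by
            rw [hc, Walk.length_append, Walk.length_append, Walk.length_reverse,
              hwq, hwr, hwp, hQ.2.2.2, hR.2.2.2, hP.2.2.2]; ring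
          have hco : Odd c.length := by
            rw [Nat.odd_iff] at hodd ⊢; omega
          obtain ⟨x', c', hc', hodd', hle'⟩ := exists_odd_cycle_of_odd_closed c hco
          have := h2 x' c' hc' hodd'
          omega
        · -- R fallback, P Q true
          have hr : G.Reachable z y := (hQ.1.symm.trans hP.1)
          have := hR.2 hr
          have htri : G.dist z y ≤ G.dist z x + G.dist x y := dist_triangle' hQ.1.symm hP.1
          have hcm : G.dist z x = G.dist x z := SimpleGraph.dist_comm
          have := hP.2.2.2; have := hQ.2.2.2; have := hR.1
          omega
      · rcases hcase z y hzy with hR | hR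
        · -- Q fallback, P R true
          have hq : G.Reachable x z := (hP.1.trans hR.1.symm)
          have := hQ.2 hq
          have htri : G.dist x z ≤ G.dist x y + G.dist y z := dist_triangle' hP.1 hR.1.symm
          have hcm : G.dist y z = G.dist z y := SimpleGraph.dist_comm
          have := hP.2.2.2; have := hR.2.2.2; have := hQ.1
          omega
        · -- Q R fallback
          have := del_pos (G := G) hk x y
          have := hQ.1; have := hR.1
          omega
    · rcases hcase x z hxz with hQ | hQ
      · rcases hcase z y hzy with hR | hR
        · -- P fallback, Q R true
          have hp : G.Reachable x y := (hQ.1.trans hR.1)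
          have := hP.2 hp
          have htri : G.dist x y ≤ G.dist x z + G.dist z y := dist_triangle' hQ.1 hR.1
          have := hQ.2.2.2; have := hR.2.2.2; have := hP.1
          omega
        · have := del_pos (G := G) hk x z
          have := hP.1; have := hR.1
          omega
      · have := del_pos (G := G) hk z y
        have := hP.1; have := hQ.1
        omega
  · -- even case
    intro _
    have key : ∀ a b c : W, a ≠ b → a ≠ c → c ≠ b →
        del G k a b ≤ del G k a c + del G k c b := by
      intro a b c hab hac hcb
      rcases hcase a c hac with hQ | hQ
      · rcases hcase c b hcb with hR | hR
        · rcases hcase a b hab with hP | hP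
          · have htri : G.dist a b ≤ G.dist a c + G.dist c b := dist_triangle' hQ.1 hR.1
            rw [hP.2.2.2, hQ.2.2.2, hR.2.2.2]; omega
          · have := hP.2 (hQ.1.trans hR.1)
            have htri : G.dist a b ≤ G.dist a c + G.dist c b := dist_triangle' hQ.1 hR.1
            rw [hP.1, hQ.2.2.2, hR.2.2.2]; omega
        · have := del_le (G := G) (k := k) a b
          have := del_pos (G := G) hk a c
          have := hR.1
          omega
      · have := del_le (G := G) (k := k) a b
        have := del_pos (G := G) hk c b
        have := hQ.1
        omega
    refine ⟨?_, ?_, ?_⟩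
    · exact key x y z hxy hxz hzy
    · have h1 := key x z y hxz hxy (Ne.symm hzy)
      rw [del_comm y z] at h1; exact h1
    · have h1 := key z y x hzy (Ne.symm hxz) hxy
      rw [del_comm z x] at h1; omega


lemma reachable_ne_exists_adj {X : Type*} {J : SimpleGraph X} {x z : X}
    (h : J.Reachable x z) (hne : x ≠ z) : ∃ w, J.Adj x w := by
  obtain ⟨p⟩ := h
  cases p with
  | nil => exact absurd rfl hne
  | cons h' _ => exact ⟨_, h'⟩

lemma induce_mono_graph {J J' : SimpleGraph W} (h : J ≤ J') (S : Set W) :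
    J.induce S ≤ J'.induce S := by
  intro a b hab
  simp only [comap_adj, Function.Embedding.coe_subtype] at hab ⊢
  exact h hab

lemma reach_induce_mono {J : SimpleGraph W} {S T : Set W} (hST : S ⊆ T) {a b : W}
    (ha : a ∈ S) (hb : b ∈ S)
    (h : (J.induce S).Reachable ⟨a, ha⟩ ⟨b, hb⟩) :
    (J.induce T).Reachable ⟨a, hST ha⟩ ⟨b, hST hb⟩ :=
  h.map (J.induceHomOfLE hST).toHom

lemma k4_mono {J J' : SimpleGraph W} (h : J ≤ J') : HasK4Minor J → HasK4Minor J' := by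
  rintro ⟨S, h1, h2, h3, h4⟩
  refine ⟨S, h1, fun i => (h2 i).mono (induce_mono_graph h _), h3, fun i j hij => ?_⟩
  obtain ⟨a, ha, b, hb, hab⟩ := h4 hij
  exact ⟨a, ha, b, hb, h hab⟩

lemma not_mem_branch_of_isolated {J : SimpleGraph W} {y : W} (hy : ∀ t, ¬ J.Adj y t)
    {S : Fin 4 → Set W} (hconn : ∀ i, (J.induce (S i)).Connected)
    (hadj : Pairwise fun i j => ∃ a ∈ S i, ∃ b ∈ S j, J.Adj a b) : ∀ i, y ∉ S i := by
  intro i hyi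
  have hij : i ≠ (if i = 0 then 1 else 0) := by
    split
    · next h => rw [h]; decide
    · next h => exact h
  obtain ⟨a, ha, b, hb, hab⟩ := hadj hij
  by_cases hay : a = y
  · exact hy b (hay ▸ hab)
  · obtain ⟨w, hw⟩ := reachable_ne_exists_adj ((hconn i) ⟨y, hyi⟩ ⟨a, ha⟩)
      (fun h' => hay (congrArg Subtype.val h').symm)
    simp only [comap_adj, Function.Embedding.coe_subtype] at hw
    exact hy _ hw

variable (J : SimpleGraph W) (M : Set W) (m : W) in
def Merge : SimpleGraph W where
  Adj s t := s ≠ t ∧ ((s ∉ M ∧ t ∉ M ∧ J.Adj s t) ∨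
    (s = m ∧ t ∉ M ∧ ∃ u ∈ M, J.Adj u t) ∨ (t = m ∧ s ∉ M ∧ ∃ u ∈ M, J.Adj u s))
  symm := by
    constructor
    rintro s t ⟨hne, h⟩
    refine ⟨hne.symm, ?_⟩
    rcases h with ⟨h1, h2, h3⟩ | h | h
    · exact Or.inl ⟨h2, h1, h3.symm⟩
    · exact Or.inr (Or.inr h)
    · exact Or.inr (Or.inl h)
  loopless := ⟨fun a h => h.1 rfl⟩

lemma merge_isolated {J : SimpleGraph W} {M : Set W} {m y : W} (hy : y ∈ M) (hym : y ≠ m) :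
    ∀ t, ¬ (Merge J M m).Adj y t := by
  rintro t ⟨hne, h⟩
  rcases h with ⟨h1, _, _⟩ | ⟨h1, _, _⟩ | ⟨_, h1, _⟩
  · exact h1 hy
  · exact hym h1
  · exact h1 hy

lemma merge_adj_of_adj {J : SimpleGraph W} {M : Set W} {m : W} {s t : W}
    (hs : s ∉ M) (ht : t ∉ M) (h : J.Adj s t) : (Merge J M m).Adj s t :=
  ⟨h.ne, Or.inl ⟨hs, ht, h⟩⟩

lemma merge_adj_m {J : SimpleGraph W} {M : Set W} {m : W} {u t : W} (hm : m ∈ M)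
    (hu : u ∈ M) (ht : t ∉ M) (h : J.Adj u t) : (Merge J M m).Adj m t :=
  ⟨fun he => ht (he ▸ hm), Or.inr (Or.inl ⟨rfl, ht, u, hu, h⟩)⟩

lemma merge_walk_transfer {J : SimpleGraph W} {M : Set W} {m : W} (hm : m ∈ M)
    (hMc : (J.induce M).Connected) {T : Set W} (hMT : M ⊆ T) :
    ∀ (x y : T) (_ : ((Merge J M m).induce T).Walk x y),
      (J.induce T).Reachable x y := by
  intro x y p
  induction p with
  | nil => exact Reachable.refl _
  | @cons x c y h p ih =>
    simp only [comap_adj, Function.Embedding.coe_subtype] at h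
    obtain ⟨hne, hcase⟩ := h
    rcases hcase with ⟨h1, h2, h3⟩ | ⟨h1, h2, u, hu, h3⟩ | ⟨h1, h2, u, hu, h3⟩
    · refine (Adj.reachable ?_).trans ih
      simp only [comap_adj, Function.Embedding.coe_subtype]
      exact h3
    · -- x.1 = m
      have hxm : x = ⟨m, hMT hm⟩ := Subtype.ext h1
      have r1 : (J.induce T).Reachable x ⟨u, hMT hu⟩ := by
        rw [hxm]
        exact (reach_induce_mono hMT hu hm (hMc ⟨u, hu⟩ ⟨m, hm⟩)).symm
      have r2 : (J.induce T).Adj ⟨u, hMT hu⟩ c := by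
        simp only [comap_adj, Function.Embedding.coe_subtype]
        exact h3
      exact (r1.trans r2.reachable).trans ih
    · -- c.1 = m
      have hcm : c = ⟨m, hMT hm⟩ := Subtype.ext h1
      have r1 : (J.induce T).Adj x ⟨u, hMT hu⟩ := by
        simp only [comap_adj, Function.Embedding.coe_subtype]
        exact h3.symm
      have r2 : (J.induce T).Reachable ⟨u, hMT hu⟩ c := by
        rw [hcm]
        exact reach_induce_mono hMT hu hm (hMc ⟨u, hu⟩ ⟨m, hm⟩)
      exact (r1.reachable.trans r2).trans ih

lemma merge_minor {J : SimpleGraph W} {M : Set W} {m : W} (hm : m ∈ M)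
    (hMc : (J.induce M).Connected) : HasK4Minor (Merge J M m) → HasK4Minor J := by
  rintro ⟨S, hne, hconn, hdisj, hadj⟩
  have hiso : ∀ y ∈ M, y ≠ m → ∀ i, y ∉ S i := fun y hy hym =>
    not_mem_branch_of_isolated (merge_isolated hy hym) hconn hadj
  classical
  have hmem : ∀ i a, a ∈ (if m ∈ S i then S i ∪ M else S i) →
      a ∈ S i ∨ (m ∈ S i ∧ a ∈ M) := by
    intro i a ha
    by_cases hmi : m ∈ S i
    · rw [if_pos hmi] at ha
      rcases ha with h | h
      · exact Or.inl h
      · exact Or.inr ⟨hmi, h⟩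
    · rw [if_neg hmi] at ha
      exact Or.inl ha
  refine ⟨fun i => if m ∈ S i then S i ∪ M else S i, fun i => ?_, fun i => ?_, ?_, ?_⟩
  · by_cases hmi : m ∈ S i
    · simp only [if_pos hmi]
      exact (hne i).mono Set.subset_union_left
    · simp only [if_neg hmi]
      exact hne i
  · -- connectivity
    by_cases hmi : m ∈ S i
    · have hrm : ∀ (x : W) (hx : x ∈ S i ∪ M),
          (J.induce (S i ∪ M)).Reachable ⟨x, hx⟩ ⟨m, Or.inr hm⟩ := by
        intro x hx
        rcases hx with hxS | hxM
        case inr => exact reach_induce_mono Set.subset_union_right hxM hm (hMc ⟨x, hxM⟩ ⟨m, hm⟩)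
        case inl =>
          obtain ⟨p⟩ := (hconn i) ⟨x, hxS⟩ ⟨m, hmi⟩
          have : ((Merge J M m).induce (S i ∪ M)).Reachable ⟨x, Or.inl hxS⟩ ⟨m, Or.inl hmi⟩ :=
            reach_induce_mono Set.subset_union_left hxS hmi ⟨p⟩
          exact merge_walk_transfer hm hMc Set.subset_union_right _ _ this.some
      have hgood : (J.induce (S i ∪ M)).Connected := by
        have : Nonempty ↥(S i ∪ M) := ⟨⟨m, Or.inr hm⟩⟩
        exact Connected.mk (fun a b => (hrm a.1 a.2).trans (hrm b.1 b.2).symm)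
      show (J.induce (if m ∈ S i then S i ∪ M else S i)).Connected
      rw [if_pos hmi]
      exact hgood
    · have hgood : (J.induce (S i)).Connected := by
        refine (hconn i).mono ?_
        intro a b hab
        simp only [comap_adj, Function.Embedding.coe_subtype] at hab ⊢
        obtain ⟨hne', hcase⟩ := hab
        rcases hcase with ⟨_, _, h3⟩ | ⟨h1, _, _⟩ | ⟨h1, _, _⟩
        · exact h3
        · exact absurd (h1 ▸ a.2) hmi
        · exact absurd (h1 ▸ b.2) hmi
      show (J.induce (if m ∈ S i then S i ∪ M else S i)).Connected
      rw [if_neg hmi]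
      exact hgood
  · -- disjoint
    intro i j hij
    rw [Set.disjoint_left]
    intro a hai haj
    rcases hmem i a hai with h1 | ⟨hmi, h1⟩ <;> rcases hmem j a haj with h2 | ⟨hmj, h2⟩
    · exact Set.disjoint_left.mp (hdisj hij) h1 h2
    · by_cases ham : a = m
      · exact Set.disjoint_left.mp (hdisj hij) (ham ▸ h1) hmj
      · exact hiso a h2 ham i h1
    · by_cases ham : a = m
      · exact Set.disjoint_left.mp (hdisj hij) hmi (ham ▸ h2)
      · exact hiso a h1 ham j h2
    · exact Set.disjoint_left.mp (hdisj hij) hmi hmj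
  · -- adjacency
    intro i j hij
    obtain ⟨a, ha, b, hb, hab⟩ := hadj hij
    have hsubi : S i ⊆ (if m ∈ S i then S i ∪ M else S i) := by
      split
      · exact Set.subset_union_left
      · exact le_rfl
    have hsubj : S j ⊆ (if m ∈ S j then S j ∪ M else S j) := by
      split
      · exact Set.subset_union_left
      · exact le_rfl
    obtain ⟨hne', hcase⟩ := hab
    rcases hcase with ⟨_, _, h3⟩ | ⟨h1, _, u, hu, h3⟩ | ⟨h1, _, u, hu, h3⟩
    · exact ⟨a, hsubi ha, b, hsubj hb, h3⟩
    · -- a = m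
      have hmi : m ∈ S i := h1 ▸ ha
      refine ⟨u, ?_, b, hsubj hb, h3⟩
      simp only [if_pos hmi]
      exact Or.inr hu
    · -- b = m
      have hmj : m ∈ S j := h1 ▸ hb
      refine ⟨a, hsubi ha, u, ?_, h3.symm⟩
      simp only [if_pos hmj]
      exact Or.inr hu

def Deg3 (J : SimpleGraph W) (w : W) : Prop :=
  ∃ a b c, a ≠ b ∧ a ≠ c ∧ b ≠ c ∧ J.Adj w a ∧ J.Adj w b ∧ J.Adj w c

lemma deg3_merge {J : SimpleGraph W} {M : Set W} {m w : W} (hm : m ∈ M) (hw : w ∉ M)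
    (huniq : ∀ p q, p ∈ M → q ∈ M → J.Adj w p → J.Adj w q → p = q)
    (h3 : Deg3 J w) : Deg3 (Merge J M m) w := by
  classical
  obtain ⟨a, b, c, hab, hac, hbc, ha, hb, hc⟩ := h3
  set f : W → W := fun u => if u ∈ M then m else u with hf
  have hadj : ∀ u, J.Adj w u → (Merge J M m).Adj w (f u) := by
    intro u hu
    by_cases huM : u ∈ M
    · simp only [hf, if_pos huM]
      exact ((merge_adj_m hm huM hw hu.symm)).symm
    · simp only [hf, if_neg huM]
      exact merge_adj_of_adj hw huM hu
  have hinj : ∀ u v, u ≠ v → J.Adj w u → J.Adj w v → f u ≠ f v := by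
    intro u v huv hu hv
    simp only [hf]
    by_cases huM : u ∈ M <;> by_cases hvM : v ∈ M
    · exact absurd (huniq u v huM hvM hu hv) huv
    · simp only [if_pos huM, if_neg hvM]
      exact fun h => hvM (h ▸ hm)
    · simp only [if_neg huM, if_pos hvM]
      exact fun h => huM (h ▸ hm)
    · simpa [if_neg huM, if_neg hvM] using huv
  exact ⟨f a, f b, f c, hinj a b hab ha hb, hinj a c hac ha hc, hinj b c hbc hb hc,
    hadj a ha, hadj b hb, hadj c hc⟩



variable (J : SimpleGraph W) (X : Set W) in
def Del : SimpleGraph W where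
  Adj s t := J.Adj s t ∧ s ∉ X ∧ t ∉ X
  symm := ⟨fun s t ⟨h, hs, ht⟩ => ⟨h.symm, ht, hs⟩⟩
  loopless := ⟨fun s h => J.loopless.irrefl s h.1⟩

variable (J : SimpleGraph W) (A : Set W) in
def Restrict : SimpleGraph W where
  Adj s t := J.Adj s t ∧ s ∈ A ∧ t ∈ A
  symm := ⟨fun s t ⟨h, hs, ht⟩ => ⟨h.symm, ht, hs⟩⟩
  loopless := ⟨fun s h => J.loopless.irrefl s h.1⟩

lemma Del_le {J : SimpleGraph W} {X : Set W} : Del J X ≤ J := fun _ _ h => h.1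
lemma Restrict_le {J : SimpleGraph W} {A : Set W} : Restrict J A ≤ J := fun _ _ h => h.1

lemma connected_of_reach_point {J : SimpleGraph W} {S : Set W} (x0 : W) (h0 : x0 ∈ S)
    (h : ∀ y (hy : y ∈ S), (J.induce S).Reachable ⟨y, hy⟩ ⟨x0, h0⟩) :
    (J.induce S).Connected := by
  haveI : Nonempty ↥S := ⟨⟨x0, h0⟩⟩
  exact Connected.mk fun u v => (h u.1 u.2).trans (h v.1 v.2).symm

variable (J : SimpleGraph W) in
def supp : Set W := {w | ∃ t, J.Adj w t}

lemma supp_mono {J J' : SimpleGraph W} (h : J ≤ J') : supp J ⊆ supp J' :=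
  fun _ ⟨t, ht⟩ => ⟨t, h ht⟩

lemma del_walk_support {J : SimpleGraph W} {X : Set W} {a b : W} (p : (Del J X).Walk a b)
    (ha : a ∉ X) : ∀ z ∈ p.support, z ∉ X := by
  induction p with
  | nil => intro z hz; rw [Walk.support_nil, List.mem_singleton] at hz; exact hz ▸ ha
  | @cons s t u h p ih =>
    intro z hz
    rw [Walk.support_cons, List.mem_cons] at hz
    rcases hz with rfl | hz
    · exact ha
    · exact ih h.2.2 z hz

lemma del_reach_not_mem {J : SimpleGraph W} {X : Set W} {y w : W}
    (h : (Del J X).Reachable y w) (hy : y ∉ X) : w ∉ X := by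
  obtain ⟨p⟩ := h
  exact del_walk_support p hy w p.end_mem_support

lemma singleton_induce_connected (J : SimpleGraph W) (v : W) :
    (J.induce {v}).Connected := by
  have : Nonempty ↥({v} : Set W) := ⟨⟨v, rfl⟩⟩
  refine Connected.mk ?_
  rintro ⟨x, hx⟩ ⟨y, hy⟩
  simp only [Set.mem_singleton_iff] at hx hy
  subst hx; subst hy
  exact Reachable.refl _

lemma induce_support_connected {J : SimpleGraph W} {a b : W} (p : J.Walk a b) :
    (J.induce {z | z ∈ p.support}).Connected := by
  induction p with
  | nil =>
    refine connected_of_reach_point _ (Walk.nil.start_mem_support) (fun y hy => ?_)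
    have hy' := hy
    simp only [Set.mem_setOf_eq, Walk.support_nil, List.mem_singleton] at hy'
    subst hy'
    exact Reachable.refl _
  | @cons s t u h p ih =>
    have hsub : {z | z ∈ p.support} ⊆ {z | z ∈ (Walk.cons h p).support} := by
      intro z hz
      simp only [Set.mem_setOf_eq, Walk.support_cons, List.mem_cons]
      exact Or.inr hz
    have hs : s ∈ {z | z ∈ (Walk.cons h p).support} := by simp
    have ht : t ∈ {z | z ∈ p.support} := by simp
    have hreach : ∀ (x : W) (hx : x ∈ {z | z ∈ (Walk.cons h p).support}),
        (J.induce {z | z ∈ (Walk.cons h p).support}).Reachable ⟨x, hx⟩ ⟨s, hs⟩ := by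
      intro x hx
      have hx' := hx
      simp only [Set.mem_setOf_eq, Walk.support_cons, List.mem_cons] at hx'
      rcases hx' with rfl | hx'
      · exact Reachable.refl _
      · have r1 : (J.induce {z | z ∈ (Walk.cons h p).support}).Reachable ⟨x, hx⟩ ⟨t, hsub ht⟩ :=
          reach_induce_mono hsub hx' ht (ih ⟨x, hx'⟩ ⟨t, ht⟩)
        refine r1.trans (Adj.reachable ?_)
        simp only [comap_adj, Function.Embedding.coe_subtype]
        exact h.symm
    exact connected_of_reach_point _ hs (fun y hy => hreach y hy)

lemma pairwise_fin4 {P : Fin 4 → Fin 4 → Prop} (hsymm : ∀ i j, P i j → P j i)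
    (h01 : P 0 1) (h02 : P 0 2) (h03 : P 0 3) (h12 : P 1 2) (h13 : P 1 3) (h23 : P 2 3) :
    Pairwise P := by
  intro i j hij
  fin_cases i <;> fin_cases j <;>
    first
      | exact absurd rfl hij
      | assumption
      | exact hsymm _ _ h01
      | exact hsymm _ _ h02
      | exact hsymm _ _ h03
      | exact hsymm _ _ h12
      | exact hsymm _ _ h13
      | exact hsymm _ _ h23

lemma k4_of_cut {J : SimpleGraph W} {v b a c : W}
    (hvb : J.Adj v b) (hva : J.Adj v a) (hvc : J.Adj v c)
    (hba : J.Adj b a) (hbc : J.Adj b c) (hac : a ≠ c)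
    (hreach : (Del J {v, b}).Reachable a c) : HasK4Minor J := by
  classical
  obtain ⟨p0⟩ := hreach
  have hp : p0.bypass.IsPath := Walk.bypass_isPath p0
  set p := p0.bypass with hpdef
  clear_value p
  cases p with
  | nil => exact absurd rfl hac
  | @cons a w c e p' =>
    have hanotin : a ∉ ({v, b} : Set W) := by
      simp only [Set.mem_insert_iff, Set.mem_singleton_iff]
      push_neg
      exact ⟨hva.ne', hba.ne'⟩
    have havoid : ∀ z ∈ (Walk.cons e p').support, z ∉ ({v, b} : Set W) :=
      del_walk_support _ hanotin
    have hvp' : v ∉ p'.support := fun hmem => (havoid v (by simp [hmem])) (by simp)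
    have hbp' : b ∉ p'.support := fun hmem => (havoid b (by simp [hmem])) (by simp)
    have hap' : a ∉ p'.support := by
      have := hp.support_nodup
      rw [Walk.support_cons, List.nodup_cons] at this
      exact this.1
    have hcp' : c ∈ p'.support := p'.end_mem_support
    have hwp' : w ∈ p'.support := p'.start_mem_support
    refine ⟨![{v}, {b}, {a}, {z | z ∈ p'.support}], ?_, ?_, ?_, ?_⟩
    · intro i
      fin_cases i
      · exact ⟨v, rfl⟩
      · exact ⟨b, rfl⟩
      · exact ⟨a, rfl⟩
      · exact ⟨w, hwp'⟩
    · intro i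
      fin_cases i
      · exact singleton_induce_connected J v
      · exact singleton_induce_connected J b
      · exact singleton_induce_connected J a
      · exact (induce_support_connected (J := Del J {v,b}) p').mono
          (induce_mono_graph Del_le _)
    · refine pairwise_fin4 (fun i j h => h.symm) ?_ ?_ ?_ ?_ ?_ ?_ <;>
        simp only [Matrix.cons_val_zero, Matrix.cons_val_one, Matrix.head_cons,
          Matrix.cons_val_two, Matrix.tail_cons, Matrix.cons_val_three]
      · simpa using hvb.ne
      · simpa using hva.ne
      · rw [Set.disjoint_left]
        rintro z rfl
        exact hvp'
      · simpa using hba.ne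
      · rw [Set.disjoint_left]
        rintro z rfl
        exact hbp'
      · rw [Set.disjoint_left]
        rintro z rfl
        exact hap'
    · refine pairwise_fin4 (fun i j ⟨x, hx, y, hy, hxy⟩ => ⟨y, hy, x, hx, hxy.symm⟩)
        ?_ ?_ ?_ ?_ ?_ ?_ <;>
        simp only [Matrix.cons_val_zero, Matrix.cons_val_one, Matrix.head_cons,
          Matrix.cons_val_two, Matrix.tail_cons, Matrix.cons_val_three]
      · exact ⟨v, rfl, b, rfl, hvb⟩
      · exact ⟨v, rfl, a, rfl, hva⟩
      · exact ⟨v, rfl, c, hcp', hvc⟩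
      · exact ⟨b, rfl, a, rfl, hba⟩
      · exact ⟨b, rfl, c, hcp', hbc⟩
      · exact ⟨a, rfl, w, hwp', Del_le e⟩


lemma cut_rec {J : SimpleGraph W} {u0 v0 x1 x2 y1 y2 : W}
    (h01 : J.Adj u0 v0)
    (hint : ∀ w, w ≠ u0 → w ≠ v0 → (∃ t, J.Adj w t) → Deg3 J w)
    (hx : J.Adj x1 x2)
    (hy1 : J.Adj y1 x1) (hy2 : J.Adj y2 x1)
    (hy1m : y1 ∉ ({x1, x2} : Set W)) (hy2m : y2 ∉ ({x1, x2} : Set W))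
    (hnr : ¬ (Del J {x1, x2}).Reachable y1 y2)
    (hIH : ∀ (J' : SimpleGraph W) (t1 t2 : W), J'.Adj t1 t2 →
        (∀ w, w ≠ t1 → w ≠ t2 → (∃ s, J'.Adj w s) → Deg3 J' w) →
        (∃ w, w ≠ t1 ∧ w ≠ t2 ∧ Deg3 J' w) → supp J' ⊂ supp J → HasK4Minor J') :
    HasK4Minor J := by
  set X : Set W := {x1, x2} with hX
  set D : SimpleGraph W := Del J X with hD
  have hx1X : x1 ∈ X := by rw [hX]; exact Or.inl rfl
  have hx2X : x2 ∈ X := by rw [hX]; exact Or.inr rfl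
  have main : ∀ ya yb : W, J.Adj ya x1 → J.Adj yb x1 → ya ∉ X → yb ∉ X →
      ¬ D.Reachable ya yb → u0 ∉ {w | D.Reachable ya w} → v0 ∉ {w | D.Reachable ya w} →
      HasK4Minor J := by
    intro ya yb hya hyb hyam hybm hnr' hu0 hv0
    set Sa : Set W := {w | D.Reachable ya w} with hSa
    have hSaX : ∀ w ∈ Sa, w ∉ X := fun w h => del_reach_not_mem h hyam
    set J' : SimpleGraph W := Restrict J (Sa ∪ X) with hJ'
    have hclosure : ∀ w ∈ Sa, ∀ t, J.Adj w t → t ∈ Sa ∪ X := by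
      intro w hw t hadj
      by_cases htX : t ∈ X
      · exact Or.inr htX
      · exact Or.inl (hw.trans (Adj.reachable ⟨hadj, hSaX w hw, htX⟩))
    have htrans : ∀ w ∈ Sa, Deg3 J w → Deg3 J' w := by
      rintro w hw ⟨a', b', c', h1, h2, h3, ha, hb, hc⟩
      exact ⟨a', b', c', h1, h2, h3,
        ⟨ha, Or.inl hw, hclosure w hw _ ha⟩,
        ⟨hb, Or.inl hw, hclosure w hw _ hb⟩,
        ⟨hc, Or.inl hw, hclosure w hw _ hc⟩⟩
    have hXne : ∀ w : W, w ∉ X → w ≠ x1 ∧ w ≠ x2 := by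
      intro w hw
      constructor <;> intro h <;> subst h
      · exact hw hx1X
      · exact hw hx2X
    have hyaSa : ya ∈ Sa := Reachable.refl _
    have hk4' : HasK4Minor J' := by
      refine hIH J' x1 x2 ⟨hx, Or.inr hx1X, Or.inr hx2X⟩ ?_ ?_ ?_
      · intro w hw1 hw2 hws
        have hwX : w ∉ X := by
          rw [hX]
          simp only [Set.mem_insert_iff, Set.mem_singleton_iff]
          push_neg
          exact ⟨hw1, hw2⟩
        obtain ⟨s, hs⟩ := hws
        have hwSa : w ∈ Sa := by
          rcases hs.2.1 with h | h
          · exact h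
          · exact absurd h hwX
        refine htrans w hwSa (hint w ?_ ?_ ⟨s, hs.1⟩)
        · rintro rfl; exact hu0 hwSa
        · rintro rfl; exact hv0 hwSa
      · refine ⟨ya, (hXne ya hyam).1, (hXne ya hyam).2, ?_⟩
        refine htrans ya hyaSa (hint ya ?_ ?_ ⟨x1, hya⟩)
        · rintro rfl; exact hu0 hyaSa
        · rintro rfl; exact hv0 hyaSa
      · constructor
        · exact supp_mono Restrict_le
        · intro hsup
          have hybsupp : yb ∈ supp J := ⟨x1, hyb⟩
          obtain ⟨s, hs⟩ := hsup hybsupp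
          rcases hs.2.1 with h | h
          · exact hnr' h
          · exact hybm h
    exact k4_mono Restrict_le hk4'
  by_cases hc : u0 ∈ {w | D.Reachable y1 w} ∨ v0 ∈ {w | D.Reachable y1 w}
  · -- use y2 as anchor
    have hedge : ∀ p q : W, J.Adj p q → p ∉ X → q ∉ X → ∀ y : W,
        D.Reachable y p → D.Reachable y q := by
      intro p q hpq hpX hqX y hyp
      exact hyp.trans (Adj.reachable ⟨hpq, hpX, hqX⟩)
    have hu0v0 : ∀ w : W, D.Reachable y1 w → ¬ D.Reachable y2 w := by
      intro w h1 h2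
      exact hnr (h1.trans h2.symm)
    refine main y2 y1 hy2 hy1 hy2m hy1m (fun h => hnr h.symm) ?_ ?_
    · intro hu2
      rcases hc with h | h
      · exact hu0v0 u0 h hu2
      · -- v0 ∈ S1, u0 ∈ S2
        by_cases hu0X : u0 ∈ X
        · exact absurd hu0X (del_reach_not_mem hu2 hy2m)
        · by_cases hv0X : v0 ∈ X
          · exact absurd hv0X (del_reach_not_mem h hy1m)
          · exact hu0v0 u0 (hedge v0 u0 h01.symm hv0X hu0X y1 h) hu2
    · intro hv2
      rcases hc with h | h
      · by_cases hu0X : u0 ∈ X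
        · exact absurd hu0X (del_reach_not_mem h hy1m)
        · by_cases hv0X : v0 ∈ X
          · exact absurd hv0X (del_reach_not_mem hv2 hy2m)
          · exact hu0v0 v0 (hedge u0 v0 h01 hu0X hv0X y1 h) hv2
      · exact hu0v0 v0 h hv2
  · push_neg at hc
    exact main y1 y2 hy1 hy2 hy1m hy2m hnr hc.1 hc.2


lemma merge_supp_sub {J : SimpleGraph W} {M : Set W} {m : W} (hmsup : ∃ t, J.Adj m t) :
    supp (Merge J M m) ⊆ supp J := by
  rintro w ⟨t, hne, hcase⟩
  rcases hcase with ⟨_, _, h3⟩ | ⟨h1, _, _⟩ | ⟨_, _, u, _, h3⟩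
  · exact ⟨t, h3⟩
  · exact h1 ▸ hmsup
  · exact ⟨u, h3.symm⟩

lemma merge_supp_elem {J : SimpleGraph W} {M : Set W} {m w s : W} (hm : m ∈ M) (hw : w ∉ M)
    (h : (Merge J M m).Adj w s) : ∃ t, J.Adj w t := by
  obtain ⟨hne, hcase⟩ := h
  rcases hcase with ⟨_, _, h3⟩ | ⟨h1, _, _⟩ | ⟨_, _, u, _, h3⟩
  · exact ⟨s, h3⟩
  · exact absurd (h1 ▸ hm) hw
  · exact ⟨u, h3.symm⟩

lemma supp_ssubset {J J' : SimpleGraph W} (hsub : supp J' ⊆ supp J) {y : W}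
    (hy : y ∈ supp J) (hn : y ∉ supp J') : supp J' ⊂ supp J :=
  ⟨hsub, fun hsup => hn (hsup hy)⟩

lemma pair_induce_connected {J : SimpleGraph W} {x y : W} (h : J.Adj x y) :
    (J.induce {x, y}).Connected := by
  refine connected_of_reach_point x (Or.inl rfl) (fun z hz => ?_)
  rcases hz with rfl | hz
  · exact Reachable.refl _
  · rw [Set.mem_singleton_iff] at hz
    subst hz
    refine Adj.reachable ?_
    simp only [comap_adj, Function.Embedding.coe_subtype]
    exact h.symm

lemma triple_induce_connected {J : SimpleGraph W} {v a b : W} (hva : J.Adj v a)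
    (hvb : J.Adj v b) : (J.induce {v, a, b}).Connected := by
  refine connected_of_reach_point v (Or.inl rfl) (fun z hz => ?_)
  rcases hz with rfl | hz
  · exact Reachable.refl _
  · refine Adj.reachable ?_
    simp only [comap_adj, Function.Embedding.coe_subtype]
    rcases hz with rfl | hz
    · exact hva.symm
    · rw [Set.mem_singleton_iff] at hz
      subst hz
      exact hvb.symm

lemma pick3 {n1 n2 n3 e1 e2 : W} (h12 : n1 ≠ n2) (h13 : n1 ≠ n3) (h23 : n2 ≠ n3)
    {P : W → Prop} (hp1 : P n1) (hp2 : P n2) (hp3 : P n3) :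
    ∃ w, P w ∧ w ≠ e1 ∧ w ≠ e2 := by
  by_cases h1 : n1 ≠ e1 ∧ n1 ≠ e2
  · exact ⟨n1, hp1, h1.1, h1.2⟩
  by_cases h2 : n2 ≠ e1 ∧ n2 ≠ e2
  · exact ⟨n2, hp2, h2.1, h2.2⟩
  have h1' : n1 = e1 ∨ n1 = e2 := by tauto
  have h2' : n2 = e1 ∨ n2 = e2 := by tauto
  refine ⟨n3, hp3, ?_, ?_⟩
  · intro h3
    rcases h1' with h | h
    · exact h13 (h.trans h3.symm)
    · rcases h2' with h' | h'
      · exact h23 (h'.trans h3.symm)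
      · exact h12 (h.trans h'.symm)
  · intro h3
    rcases h1' with h | h
    · rcases h2' with h' | h'
      · exact h12 (h.trans h'.symm)
      · exact h23 (h'.trans h3.symm)
    · exact h13 (h.trans h3.symm)

lemma deg3_merge_center {J : SimpleGraph W} {x y : W} (hxy : J.Adj x y)
    (hnc : ∀ t, ¬(J.Adj x t ∧ J.Adj y t))
    (h3x : Deg3 J x) (h3y : Deg3 J y) : Deg3 (Merge J {x, y} x) x := by
  obtain ⟨a1, a2, a3, g12, g13, g23, ga1, ga2, ga3⟩ := h3x
  obtain ⟨b1, b2, b3, f12, f13, f23, gb1, gb2, gb3⟩ := h3y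
  obtain ⟨p1, p2, hp12, hp1y, hp2y, hpa1, hpa2⟩ :
      ∃ p1 p2, p1 ≠ p2 ∧ p1 ≠ y ∧ p2 ≠ y ∧ J.Adj x p1 ∧ J.Adj x p2 := by
    by_cases h1 : a1 = y
    · subst h1
      exact ⟨a2, a3, g23, Ne.symm g12, Ne.symm g13, ga2, ga3⟩
    · by_cases h2 : a2 = y
      · subst h2
        exact ⟨a1, a3, g13, h1, Ne.symm g23, ga1, ga3⟩
      · exact ⟨a1, a2, g12, h1, h2, ga1, ga2⟩
  obtain ⟨q, hqx, hq⟩ : ∃ q, q ≠ x ∧ J.Adj y q := by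
    by_cases h1 : b1 = x
    · subst h1
      exact ⟨b2, Ne.symm f12, gb2⟩
    · exact ⟨b1, h1, gb1⟩
  have hqp1 : q ≠ p1 := fun h => hnc q ⟨h ▸ hpa1, hq⟩
  have hqp2 : q ≠ p2 := fun h => hnc q ⟨h ▸ hpa2, hq⟩
  have hxM : x ∈ ({x, y} : Set W) := Or.inl rfl
  have hyM : y ∈ ({x, y} : Set W) := Or.inr rfl
  have hmem : ∀ z : W, z ≠ x → z ≠ y → z ∉ ({x, y} : Set W) := by
    rintro z h1 h2 (rfl | rfl) <;> simp_all
  exact ⟨p1, p2, q, hp12, fun h => hqp1 h.symm, fun h => hqp2 h.symm,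
    merge_adj_m hxM hxM (hmem p1 hpa1.ne' hp1y) hpa1,
    merge_adj_m hxM hxM (hmem p2 hpa2.ne' hp2y) hpa2,
    merge_adj_m hxM hyM (hmem q hqx hq.ne') hq⟩


lemma gen [Finite W] : ∀ (n : ℕ) (J : SimpleGraph W) (u0 v0 : W), J.Adj u0 v0 →
    (∀ w, w ≠ u0 → w ≠ v0 → (∃ t, J.Adj w t) → Deg3 J w) →
    (∃ w, w ≠ u0 ∧ w ≠ v0 ∧ Deg3 J w) →
    (supp J).ncard ≤ n → HasK4Minor J := by
  intro n
  induction n with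
  | zero =>
    rintro J u0 v0 h01 hint ⟨w, _, _, a, b, c, _, _, _, ha, _⟩ hcard
    exfalso
    have hw : w ∈ supp J := ⟨a, ha⟩
    have h0 : (supp J).ncard = 0 := by omega
    rw [Set.ncard_eq_zero (Set.toFinite _)] at h0
    rw [h0] at hw
    exact hw
  | succ n ih =>
    intro J u0 v0 h01 hint hex hcard
    have hIH : ∀ (J' : SimpleGraph W) (t1 t2 : W), J'.Adj t1 t2 →
        (∀ w, w ≠ t1 → w ≠ t2 → (∃ s, J'.Adj w s) → Deg3 J' w) →
        (∃ w, w ≠ t1 ∧ w ≠ t2 ∧ Deg3 J' w) → supp J' ⊂ supp J → HasK4Minor J' := by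
      intro J' t1 t2 h1 h2 h3 hss
      refine ih J' t1 t2 h1 h2 h3 ?_
      have := Set.ncard_lt_ncard hss (Set.toFinite _)
      omega
    by_cases hCN : ∀ a b, J.Adj a b → s(a, b) ≠ s(u0, v0) → ∃ t, J.Adj a t ∧ J.Adj b t
    · -- Case 2 : every non-terminal edge is in a triangle
      obtain ⟨v, hvu, hvv, h3v⟩ := hex
      by_cases hBR : ∃ b a c, J.Adj v b ∧ J.Adj v a ∧ J.Adj v c ∧ a ≠ c ∧ J.Adj b a ∧ J.Adj b c
      · obtain ⟨b, a, c, hvb, hva, hvc, hac, hba, hbc⟩ := hBR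
        by_cases hreach : (Del J {v, b}).Reachable a c
        · exact k4_of_cut hvb hva hvc hba hbc hac hreach
        · refine cut_rec h01 hint hvb hva.symm hvc.symm ?_ ?_ hreach hIH
          · intro hmem
            rcases hmem with h | h
            · exact hva.ne' h
            · rw [Set.mem_singleton_iff] at h
              exact hba.ne' h
          · intro hmem
            rcases hmem with h | h
            · exact hvc.ne' h
            · rw [Set.mem_singleton_iff] at h
              exact hbc.ne' h
      · -- matching case
        have hU : ∀ b' t1 t2 : W, J.Adj v b' → J.Adj v t1 → J.Adj v t2 →
            J.Adj b' t1 → J.Adj b' t2 → t1 = t2 := by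
          intro b' t1 t2 hb' ht1 ht2 hb1 hb2
          by_contra hne
          exact hBR ⟨b', t1, t2, hb', ht1, ht2, hne, hb1, hb2⟩
        have hCNv : ∀ w, J.Adj v w → ∃ t, J.Adj v t ∧ J.Adj w t := by
          intro w hw
          refine hCN v w hw ?_
          intro heq
          rw [Sym2.eq_iff] at heq
          rcases heq with ⟨h1, _⟩ | ⟨h1, _⟩
          · exact hvu h1
          · exact hvv h1
        obtain ⟨a, n2, n3, g12, g13, g23, hva, hn2, hn3⟩ := h3v
        obtain ⟨b, hvb, hab⟩ := hCNv a hva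
        obtain ⟨c, hvc, hca, hcb⟩ : ∃ c, J.Adj v c ∧ c ≠ a ∧ c ≠ b := by
          by_cases h2b : n2 = b
          · exact ⟨n3, hn3, Ne.symm g13, h2b ▸ Ne.symm g23⟩
          · exact ⟨n2, hn2, Ne.symm g12, h2b⟩
        obtain ⟨d, hvd, hcd⟩ := hCNv c hvc
        have hda : d ≠ a := by
          intro h
          exact hcb (hU a c b hva hvc hvb (h ▸ hcd).symm hab)
        have hdb : d ≠ b := by
          intro h
          exact hca (hU b c a hvb hvc hva (h ▸ hcd).symm hab.symm)
        have hdc : d ≠ c := hcd.ne'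
        by_cases hT : ∃ t, t ≠ v ∧ J.Adj t a ∧ J.Adj t b
        · obtain ⟨t, htv, hta, htb⟩ := hT
          by_cases hreach : (Del J {a, b}).Reachable v t
          · exact k4_of_cut hab hta.symm hva.symm htb.symm hvb.symm htv hreach.symm
          · refine cut_rec h01 hint hab hva hta ?_ ?_ hreach hIH
            · intro hmem
              rcases hmem with h | h
              · exact hva.ne h
              · rw [Set.mem_singleton_iff] at h
                exact hvb.ne h
            · intro hmem
              rcases hmem with h | h
              · exact hta.ne h
              · rw [Set.mem_singleton_iff] at h
                exact htb.ne h
        · -- triangle contraction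
          have hT' : ∀ t, t ≠ v → J.Adj t a → J.Adj t b → False := by
            intro t h1 h2 h3
            exact hT ⟨t, h1, h2, h3⟩
          set M : Set W := {v, a, b} with hM
          have hvM : v ∈ M := Or.inl rfl
          have haM : a ∈ M := Or.inr (Or.inl rfl)
          have hbM : b ∈ M := Or.inr (Or.inr rfl)
          have hmemM : ∀ z, z ≠ v → z ≠ a → z ≠ b → z ∉ M := by
            intro z h1 h2 h3 hm
            rcases hm with h | h | h
            · exact h1 h
            · exact h2 h
            · rw [Set.mem_singleton_iff] at h
              exact h3 h
          have hcM : c ∉ M := hmemM c hvc.ne' hca hcb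
          have hdM : d ∉ M := hmemM d hvd.ne' hda hdb
          set Mg := Merge J M v with hMg
          have huniqM : ∀ w, w ∉ M → ∀ p q, p ∈ M → q ∈ M →
              J.Adj w p → J.Adj w q → p = q := by
            intro w hwM p q hp hq hwp hwq
            have hwv : w ≠ v := fun h => hwM (h ▸ hvM)
            have hwa : w ≠ a := fun h => hwM (h ▸ haM)
            have hwb : w ≠ b := fun h => hwM (h ▸ hbM)
            have hKva : J.Adj w v → J.Adj w a → False :=
              fun h1 h2 => hwb (hU a w b hva h1.symm hvb h2.symm hab)
            have hKvb : J.Adj w v → J.Adj w b → False :=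
              fun h1 h2 => hwa (hU b w a hvb h1.symm hva h2.symm hab.symm)
            have hKab : J.Adj w a → J.Adj w b → False :=
              fun h1 h2 => hT' w hwv h1 h2
            have hmm : ∀ r, r ∈ M → r = v ∨ r = a ∨ r = b := by
              intro r hr
              rcases hr with h | h | h
              · exact Or.inl h
              · exact Or.inr (Or.inl h)
              · rw [Set.mem_singleton_iff] at h
                exact Or.inr (Or.inr h)
            rcases hmm p hp with h | h | h <;> rcases hmm q hq with h' | h' | h'
            · exact h.trans h'.symm
            · exact (hKva (h ▸ hwp) (h' ▸ hwq)).elim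
            · exact (hKvb (h ▸ hwp) (h' ▸ hwq)).elim
            · exact (hKva (h' ▸ hwq) (h ▸ hwp)).elim
            · exact h.trans h'.symm
            · exact (hKab (h ▸ hwp) (h' ▸ hwq)).elim
            · exact (hKvb (h' ▸ hwq) (h ▸ hwp)).elim
            · exact (hKab (h' ▸ hwq) (h ▸ hwp)).elim
            · exact h.trans h'.symm
          have hMconn : (J.induce M).Connected := triple_induce_connected hva hvb
          have hssub : supp Mg ⊂ supp J := by
            refine supp_ssubset (merge_supp_sub ⟨a, hva⟩) (⟨b, hab⟩ : a ∈ supp J) ?_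
            rintro ⟨t', ht'⟩
            exact merge_isolated haM hva.ne' t' ht'
          have htransfer : ∀ w, w ∉ M → w ≠ u0 → w ≠ v0 → (∃ t', J.Adj w t') → Deg3 Mg w :=
            fun w hwM h1 h2 hsup => deg3_merge hvM hwM (huniqM w hwM) (hint w h1 h2 hsup)
          have hfin : ∀ t1 t2 : W, Mg.Adj t1 t2 →
              (∀ w, w ≠ t1 → w ≠ t2 → (∃ s, Mg.Adj w s) → Deg3 Mg w) →
              (∃ w, w ≠ t1 ∧ w ≠ t2 ∧ Deg3 Mg w) → HasK4Minor J :=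
            fun t1 t2 h1 h2 h3 => merge_minor hvM hMconn (hIH Mg t1 t2 h1 h2 h3 hssub)
          have hMgvc : Mg.Adj v c := merge_adj_m hvM hvM hcM hvc
          have hMgvd : Mg.Adj v d := merge_adj_m hvM hvM hdM hvd
          by_cases hau : a = u0
          · by_cases hbv : b = v0
            · refine hfin v c hMgvc ?_ ?_
              · rintro w hw1 hw2 ⟨s, hs⟩
                by_cases hwM : w ∈ M
                · rcases hwM with rfl | rfl | rfl
                  · exact absurd rfl hw1
                  · exact ((merge_isolated haM hva.ne' s) hs).elim
                  · exact ((merge_isolated hbM hvb.ne' s) hs).elim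
                · refine htransfer w hwM ?_ ?_ (merge_supp_elem hvM hwM hs)
                  · intro h; apply hwM; rw [h, ← hau]; exact haM
                  · intro h; apply hwM; rw [h, ← hbv]; exact hbM
              · refine ⟨d, hvd.ne', hdc, ?_⟩
                refine htransfer d hdM ?_ ?_ ⟨v, hvd.symm⟩
                · intro h; exact hda (h.trans hau.symm)
                · intro h; exact hdb (h.trans hbv.symm)
            · have hv0M : v0 ∉ M := by
                refine hmemM v0 (Ne.symm hvv) ?_ ?_
                · intro h; exact h01.ne (h.trans hau).symm
                · intro h; exact hbv h.symm
              have hadjT : Mg.Adj v v0 := merge_adj_m hvM haM hv0M (by rw [hau]; exact h01)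
              refine hfin v v0 hadjT ?_ ?_
              · rintro w hw1 hw2 ⟨s, hs⟩
                by_cases hwM : w ∈ M
                · rcases hwM with rfl | rfl | rfl
                  · exact absurd rfl hw1
                  · exact ((merge_isolated haM hva.ne' s) hs).elim
                  · exact ((merge_isolated hbM hvb.ne' s) hs).elim
                · refine htransfer w hwM ?_ hw2 (merge_supp_elem hvM hwM hs)
                  intro h; apply hwM; rw [h, ← hau]; exact haM
              · by_cases hcv0 : c = v0
                · refine ⟨d, hvd.ne', ?_, ?_⟩
                  · intro h; exact hdc (h.trans hcv0.symm)
                  · refine htransfer d hdM ?_ ?_ ⟨v, hvd.symm⟩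
                    · intro h; apply hdM; rw [h, ← hau]; exact haM
                    · intro h; exact hdc (h.trans hcv0.symm)
                · refine ⟨c, hvc.ne', hcv0, ?_⟩
                  refine htransfer c hcM ?_ hcv0 ⟨v, hvc.symm⟩
                  intro h; apply hcM; rw [h, ← hau]; exact haM
          · by_cases hav : a = v0
            · by_cases hbu : b = u0
              · refine hfin v c hMgvc ?_ ?_
                · rintro w hw1 hw2 ⟨s, hs⟩
                  by_cases hwM : w ∈ M
                  · rcases hwM with rfl | rfl | rfl
                    · exact absurd rfl hw1
                    · exact ((merge_isolated haM hva.ne' s) hs).elim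
                    · exact ((merge_isolated hbM hvb.ne' s) hs).elim
                  · refine htransfer w hwM ?_ ?_ (merge_supp_elem hvM hwM hs)
                    · intro h; apply hwM; rw [h, ← hbu]; exact hbM
                    · intro h; apply hwM; rw [h, ← hav]; exact haM
                · refine ⟨d, hvd.ne', hdc, ?_⟩
                  refine htransfer d hdM ?_ ?_ ⟨v, hvd.symm⟩
                  · intro h; exact hdb (h.trans hbu.symm)
                  · intro h; exact hda (h.trans hav.symm)
              · have hu0M : u0 ∉ M := by
                  refine hmemM u0 (Ne.symm hvu) ?_ ?_
                  · intro h; exact h01.ne (h.trans hav)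
                  · intro h; exact hbu h.symm
                have hadjT : Mg.Adj v u0 := merge_adj_m hvM haM hu0M (by rw [hav]; exact h01.symm)
                refine hfin v u0 hadjT ?_ ?_
                · rintro w hw1 hw2 ⟨s, hs⟩
                  by_cases hwM : w ∈ M
                  · rcases hwM with rfl | rfl | rfl
                    · exact absurd rfl hw1
                    · exact ((merge_isolated haM hva.ne' s) hs).elim
                    · exact ((merge_isolated hbM hvb.ne' s) hs).elim
                  · refine htransfer w hwM hw2 ?_ (merge_supp_elem hvM hwM hs)
                    intro h; apply hwM; rw [h, ← hav]; exact haM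
                · by_cases hcu0 : c = u0
                  · refine ⟨d, hvd.ne', ?_, ?_⟩
                    · intro h; exact hdc (h.trans hcu0.symm)
                    · refine htransfer d hdM ?_ ?_ ⟨v, hvd.symm⟩
                      · intro h; exact hdc (h.trans hcu0.symm)
                      · intro h; apply hdM; rw [h, ← hav]; exact haM
                  · refine ⟨c, hvc.ne', hcu0, ?_⟩
                    refine htransfer c hcM hcu0 ?_ ⟨v, hvc.symm⟩
                    intro h; apply hcM; rw [h, ← hav]; exact haM
            · by_cases hbu : b = u0
              · have hv0M : v0 ∉ M := by
                  refine hmemM v0 (Ne.symm hvv) ?_ ?_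
                  · intro h; exact hav h.symm
                  · intro h; exact h01.ne (h.trans hbu).symm
                have hadjT : Mg.Adj v v0 := merge_adj_m hvM hbM hv0M (by rw [hbu]; exact h01)
                refine hfin v v0 hadjT ?_ ?_
                · rintro w hw1 hw2 ⟨s, hs⟩
                  by_cases hwM : w ∈ M
                  · rcases hwM with rfl | rfl | rfl
                    · exact absurd rfl hw1
                    · exact ((merge_isolated haM hva.ne' s) hs).elim
                    · exact ((merge_isolated hbM hvb.ne' s) hs).elim
                  · refine htransfer w hwM ?_ hw2 (merge_supp_elem hvM hwM hs)
                    intro h; apply hwM; rw [h, ← hbu]; exact hbM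
                · by_cases hcv0 : c = v0
                  · refine ⟨d, hvd.ne', ?_, ?_⟩
                    · intro h; exact hdc (h.trans hcv0.symm)
                    · refine htransfer d hdM ?_ ?_ ⟨v, hvd.symm⟩
                      · intro h; apply hdM; rw [h, ← hbu]; exact hbM
                      · intro h; exact hdc (h.trans hcv0.symm)
                  · refine ⟨c, hvc.ne', hcv0, ?_⟩
                    refine htransfer c hcM ?_ hcv0 ⟨v, hvc.symm⟩
                    intro h; apply hcM; rw [h, ← hbu]; exact hbM
              · by_cases hbv : b = v0
                · have hu0M : u0 ∉ M := by
                    refine hmemM u0 (Ne.symm hvu) ?_ ?_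
                    · intro h; exact hau h.symm
                    · intro h; exact h01.ne (h.trans hbv)
                  have hadjT : Mg.Adj v u0 :=
                    merge_adj_m hvM hbM hu0M (by rw [hbv]; exact h01.symm)
                  refine hfin v u0 hadjT ?_ ?_
                  · rintro w hw1 hw2 ⟨s, hs⟩
                    by_cases hwM : w ∈ M
                    · rcases hwM with rfl | rfl | rfl
                      · exact absurd rfl hw1
                      · exact ((merge_isolated haM hva.ne' s) hs).elim
                      · exact ((merge_isolated hbM hvb.ne' s) hs).elim
                    · refine htransfer w hwM hw2 ?_ (merge_supp_elem hvM hwM hs)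
                      intro h; apply hwM; rw [h, ← hbv]; exact hbM
                  · by_cases hcu0 : c = u0
                    · refine ⟨d, hvd.ne', ?_, ?_⟩
                      · intro h; exact hdc (h.trans hcu0.symm)
                      · refine htransfer d hdM ?_ ?_ ⟨v, hvd.symm⟩
                        · intro h; exact hdc (h.trans hcu0.symm)
                        · intro h; apply hdM; rw [h, ← hbv]; exact hbM
                    · refine ⟨c, hvc.ne', hcu0, ?_⟩
                      refine htransfer c hcM hcu0 ?_ ⟨v, hvc.symm⟩
                      intro h; apply hcM; rw [h, ← hbv]; exact hbM
                · -- both a,b internal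
                  have hu0M : u0 ∉ M :=
                    hmemM u0 (Ne.symm hvu) (fun h => hau h.symm) (fun h => hbu h.symm)
                  have hv0M : v0 ∉ M :=
                    hmemM v0 (Ne.symm hvv) (fun h => hav h.symm) (fun h => hbv h.symm)
                  have hadjT : Mg.Adj u0 v0 := merge_adj_of_adj hu0M hv0M h01
                  have h3a : Deg3 J a := hint a hau hav ⟨b, hab⟩
                  obtain ⟨a1, a2, a3, g12', g13', g23', k1, k2, k3⟩ := h3a
                  obtain ⟨e, hae, hev, heb⟩ := pick3 g12' g13' g23' (e1 := v) (e2 := b) k1 k2 k3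
                  have heM : e ∉ M := hmemM e hev hae.ne' heb
                  have hec : e ≠ c := by
                    intro h
                    exact hcb (hU a c b hva hvc hvb (h ▸ hae) hab)
                  have hed : e ≠ d := by
                    intro h
                    exact hdb (hU a d b hva hvd hvb (h ▸ hae) hab)
                  have hcenter : Deg3 Mg v :=
                    ⟨c, d, e, hcd.ne, Ne.symm hec, Ne.symm hed, hMgvc, hMgvd,
                      merge_adj_m hvM haM heM hae⟩
                  refine hfin u0 v0 hadjT ?_ ⟨v, hvu, hvv, hcenter⟩
                  rintro w hw1 hw2 ⟨s, hs⟩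
                  by_cases hwv : w = v
                  · rw [hwv]; exact hcenter
                  · by_cases hwM : w ∈ M
                    · rcases hwM with rfl | rfl | rfl
                      · exact absurd rfl hwv
                      · exact ((merge_isolated haM hva.ne' s) hs).elim
                      · exact ((merge_isolated hbM hvb.ne' s) hs).elim
                    · exact htransfer w hwM hw1 hw2 (merge_supp_elem hvM hwM hs)
    · -- Case 1 : some non-terminal edge with no common neighbour
      simp only [not_forall] at hCN
      obtain ⟨a, b, hab, hne_e, hnc⟩ := hCN
      have hnc' : ∀ t, ¬(J.Adj a t ∧ J.Adj b t) := fun t h => hnc ⟨t, h⟩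
      have case1core : ∀ (x y u0' v0' : W), J.Adj x y → J.Adj u0' v0' →
          (∀ w, w ≠ u0' → w ≠ v0' → (∃ t, J.Adj w t) → Deg3 J w) →
          (∀ t, ¬(J.Adj x t ∧ J.Adj y t)) →
          x ≠ u0' → x ≠ v0' → y ≠ v0' → HasK4Minor J := by
        intro x y u0' v0' hxy h01' hint' hnc2 hxu hxv hyv
        set M : Set W := {x, y} with hM
        have hxM : x ∈ M := Or.inl rfl
        have hyM : y ∈ M := Or.inr rfl
        have hxy_ne : x ≠ y := hxy.ne
        have hmemM : ∀ z, z ≠ x → z ≠ y → z ∉ M := by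
          intro z h1 h2 hm
          rcases hm with h | h
          · exact h1 h
          · rw [Set.mem_singleton_iff] at h
            exact h2 h
        set Mg := Merge J M x with hMg
        have huniqM : ∀ w, w ∉ M → ∀ p q, p ∈ M → q ∈ M →
            J.Adj w p → J.Adj w q → p = q := by
          intro w hwM p q hp hq hwp hwq
          have hmm : ∀ r, r ∈ M → r = x ∨ r = y := by
            intro r hr
            rcases hr with h | h
            · exact Or.inl h
            · rw [Set.mem_singleton_iff] at h
              exact Or.inr h
          rcases hmm p hp with h | h <;> rcases hmm q hq with h' | h'
          · exact h.trans h'.symm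
          · exact absurd ⟨(h ▸ hwp).symm, (h' ▸ hwq).symm⟩ (hnc2 w)
          · exact absurd ⟨(h' ▸ hwq).symm, (h ▸ hwp).symm⟩ (hnc2 w)
          · exact h.trans h'.symm
        have hMconn : (J.induce M).Connected := pair_induce_connected hxy
        have hssub : supp Mg ⊂ supp J := by
          refine supp_ssubset (merge_supp_sub ⟨y, hxy⟩) (⟨x, hxy.symm⟩ : y ∈ supp J) ?_
          rintro ⟨t', ht'⟩
          exact merge_isolated hyM (Ne.symm hxy_ne) t' ht'
        have htransfer : ∀ w, w ∉ M → w ≠ u0' → w ≠ v0' → (∃ t', J.Adj w t') → Deg3 Mg w :=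
          fun w hwM h1 h2 hsup => deg3_merge hxM hwM (huniqM w hwM) (hint' w h1 h2 hsup)
        have hfin : ∀ t1 t2 : W, Mg.Adj t1 t2 →
            (∀ w, w ≠ t1 → w ≠ t2 → (∃ s, Mg.Adj w s) → Deg3 Mg w) →
            (∃ w, w ≠ t1 ∧ w ≠ t2 ∧ Deg3 Mg w) → HasK4Minor J :=
          fun t1 t2 h1 h2 h3 => merge_minor hxM hMconn (hIH Mg t1 t2 h1 h2 h3 hssub)
        by_cases hyu : y = u0'
        · have hv0M : v0' ∉ M := by
            refine hmemM v0' (Ne.symm hxv) ?_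
            intro h
            exact h01'.ne (hyu.symm.trans h.symm)
          have hadjT : Mg.Adj x v0' := merge_adj_m hxM hyM hv0M (by rw [← hyu] at h01'; exact h01')
          refine hfin x v0' hadjT ?_ ?_
          · rintro w hw1 hw2 ⟨s, hs⟩
            by_cases hwM : w ∈ M
            · rcases hwM with rfl | rfl
              · exact absurd rfl hw1
              · exact ((merge_isolated hyM (Ne.symm hxy_ne) s) hs).elim
            · refine htransfer w hwM ?_ hw2 (merge_supp_elem hxM hwM hs)
              intro h; apply hwM; rw [h, ← hyu]; exact hyM
          · have h3x : Deg3 J x := hint' x hxu hxv ⟨y, hxy⟩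
            obtain ⟨a1, a2, a3, g12, g13, g23, k1, k2, k3⟩ := h3x
            obtain ⟨w', hw'adj, hw'y, hw'v0⟩ := pick3 g12 g13 g23 (e1 := y) (e2 := v0') k1 k2 k3
            have hw'M : w' ∉ M := hmemM w' hw'adj.ne' hw'y
            refine ⟨w', hw'adj.ne', hw'v0, ?_⟩
            refine htransfer w' hw'M ?_ hw'v0 ⟨x, hw'adj.symm⟩
            intro h; apply hw'M; rw [h, ← hyu]; exact hyM
        · have hu0M : u0' ∉ M := hmemM u0' (Ne.symm hxu) (fun h => hyu h.symm)
          have hv0M : v0' ∉ M := hmemM v0' (Ne.symm hxv) (fun h => hyv h.symm)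
          have hadjT : Mg.Adj u0' v0' := merge_adj_of_adj hu0M hv0M h01'
          have h3x : Deg3 J x := hint' x hxu hxv ⟨y, hxy⟩
          have h3y : Deg3 J y := hint' y hyu hyv ⟨x, hxy.symm⟩
          have hcenter : Deg3 Mg x := deg3_merge_center hxy hnc2 h3x h3y
          refine hfin u0' v0' hadjT ?_ ⟨x, hxu, hxv, hcenter⟩
          rintro w hw1 hw2 ⟨s, hs⟩
          by_cases hwM : w ∈ M
          · rcases hwM with rfl | rfl
            · exact hcenter
            · exact ((merge_isolated hyM (Ne.symm hxy_ne) s) hs).elim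
          · exact htransfer w hwM hw1 hw2 (merge_supp_elem hxM hwM hs)
      by_cases hau : a = u0
      · refine case1core b a u0 v0 hab.symm h01 hint (fun t h => hnc' t ⟨h.2, h.1⟩)
          (by rw [← hau]; exact hab.ne') ?_ ?_
        · intro h
          exact hne_e (by rw [hau, h])
        · intro h
          exact h01.ne (hau.symm.trans h)
      · by_cases hav : a = v0
        · refine case1core b a v0 u0 hab.symm h01.symm (fun w h1 h2 => hint w h2 h1)
            (fun t h => hnc' t ⟨h.2, h.1⟩) (by rw [← hav]; exact hab.ne') ?_ ?_
          · intro h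
            exact hne_e (by rw [hav, h, Sym2.eq_swap])
          · exact hau
        · by_cases hbu : b = u0
          · refine case1core a b u0 v0 hab h01 hint hnc' hau hav ?_
            intro h
            exact h01.ne (hbu.symm.trans h)
          · by_cases hbv : b = v0
            · refine case1core a b v0 u0 hab h01.symm (fun w h1 h2 => hint w h2 h1) hnc'
                hav hau ?_
              intro h
              exact hbu h
            · exact case1core a b u0 v0 hab h01 hint hnc' hau hav hbv


lemma exists_low_degree [Finite W] {J : SimpleGraph W} (hK : ¬ HasK4Minor J)
    {u v : W} (huv : J.Adj u v) : ∃ z, (∃ t, J.Adj z t) ∧ ¬ Deg3 J z := by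
  by_contra hno
  push_neg at hno
  apply hK
  have h3u : Deg3 J u := hno u ⟨v, huv⟩
  obtain ⟨n1, n2, n3, g12, g13, g23, k1, k2, k3⟩ := h3u
  obtain ⟨w, hw, hwu, hwv⟩ := pick3 g12 g13 g23 (e1 := u) (e2 := v) k1 k2 k3
  exact gen ((supp J).ncard) J u v huv (fun z _ _ hs => hno z hs)
    ⟨w, hwu, hwv, hno w ⟨u, hw.symm⟩⟩ le_rfl

lemma good_aux {k p q : ℕ} (hk : 1 ≤ k) (hp1 : 1 ≤ p) (hpk : p ≤ k) (hq1 : 1 ≤ q)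
    (hqk : q ≤ k) :
    kGoodTriple k p q (if p = q then min 2 k else max p q - min p q) := by
  set r := if p = q then min 2 k else max p q - min p q with hr
  have hr1 : 1 ≤ r := by rw [hr]; split <;> omega
  have hrk : r ≤ k := by rw [hr]; split <;> omega
  refine ⟨hp1, hpk, hq1, hqk, hr1, hrk, ?_, ?_⟩
  · intro ho
    rw [Nat.odd_iff] at ho
    rw [hr] at ho ⊢
    revert ho
    split <;> intro ho <;> omega
  · intro he
    rw [Nat.even_iff] at he
    rw [hr] at he ⊢
    revert he
    split <;> intro he <;> omega

lemma build {V : Type*} [Finite W] (k : ℕ) (hk : 1 ≤ k) (G : SimpleGraph W)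
    (B Bt : SimpleGraph V) (hBc : B.Connected)
    (h2 : oddGirthAtLeast G (2*k+1))
    (hPD : IsPartialDistGraph B Bt k)
    (hAll : AllKGoodTripleProp B Bt k) :
    ∀ (n : ℕ) (H : SimpleGraph W), ¬ HasK4Minor H → H.edgeSet.ncard ≤ n →
    ∃ φ : W → V, (∀ a b, H.Adj a b → Bt.Adj (φ a) (φ b) ∧ B.dist (φ a) (φ b) = del G k a b) ∧
      (∀ a, ∃ t, Bt.Adj (φ a) t) := by
  classical
  obtain ⟨x0, y0, hx0⟩ := hAll.1
  intro n
  induction n with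
  | zero =>
    intro H hK hcard
    have hE : H.edgeSet = ∅ := by
      rw [← Set.ncard_eq_zero (Set.toFinite _)]
      omega
    refine ⟨fun _ => x0, fun a b hab => ?_, fun a => ⟨y0, hx0⟩⟩
    exfalso
    have : s(a, b) ∈ H.edgeSet := hab
    rw [hE] at this
    exact this
  | succ n ih =>
    intro H hK hcard
    by_cases hE : H.edgeSet = ∅
    · refine ⟨fun _ => x0, fun a b hab => ?_, fun a => ⟨y0, hx0⟩⟩
      exfalso
      have : s(a, b) ∈ H.edgeSet := hab
      rw [hE] at this
      exact this
    · obtain ⟨u, v, huv⟩ : ∃ u v, H.Adj u v := by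
        obtain ⟨e, he⟩ := Set.nonempty_iff_ne_empty.mpr hE
        induction e using Sym2.ind with
        | _ u v => exact ⟨u, v, he⟩
      obtain ⟨z, ⟨x, hzx⟩, hnd3⟩ := exists_low_degree hK huv
      -- helper for edge counting : removing one incident edge
      have hcount1 : (Del H {z}).edgeSet.ncard ≤ n := by
        have hsub : (Del H {z}).edgeSet ⊆ H.edgeSet \ {s(z, x)} := by
          intro e he
          induction e using Sym2.ind with
          | _ a b =>
            obtain ⟨hab, haz, hbz⟩ := he
            refine ⟨hab, ?_⟩
            rw [Set.mem_singleton_iff, Sym2.eq_iff]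
            rintro (⟨h1, _⟩ | ⟨_, h2⟩)
            · exact haz h1
            · exact hbz h2
        have hmem : s(z, x) ∈ H.edgeSet := hzx
        have := Set.ncard_diff_singleton_add_one hmem (Set.toFinite _)
        have hle := Set.ncard_le_ncard hsub (Set.toFinite _)
        omega
      have hKd : ¬ HasK4Minor (Del H {z}) := fun h => hK (k4_mono Del_le h)
      -- main extension helper
      have hext : ∀ (φx φy zz : V) (q r : ℕ), Bt.Adj φx zz → Bt.Adj φy zz →
          B.dist φx zz = q → B.dist φy zz = r → True := fun _ _ _ _ _ _ _ _ _ => trivial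
      by_cases h2n : ∃ y, H.Adj z y ∧ y ≠ x
      · -- z has exactly two neighbours x and y
        obtain ⟨y, hzy, hyx⟩ := h2n
        have huniq : ∀ t, H.Adj z t → t = x ∨ t = y := by
          intro t ht
          by_contra hcon
          push_neg at hcon
          exact hnd3 ⟨x, y, t, Ne.symm hyx, Ne.symm hcon.1, Ne.symm hcon.2, hzx, hzy, ht⟩
        have hgood := del_good (G := G) hk h2 (x := x) (y := y) (z := z)
          (fun h => hyx (h.symm)) hzx.ne' hzy.ne
        by_cases hxyadj : H.Adj x y
        · -- neighbours already adjacent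
          obtain ⟨φ', hφ'e, hφ'i⟩ := ih (Del H {z}) hKd hcount1
          have hxyD : (Del H {z}).Adj x y := ⟨hxyadj, hzx.ne', hzy.ne'⟩
          obtain ⟨hBtxy, hdxy⟩ := hφ'e x y hxyD
          obtain ⟨z₁, z₂, ha1, ha2, _, _, hd1, hd2, _, _⟩ :=
            hAll.2 (φ' x) (φ' y) hBtxy (del G k x z) (del G k z y) (by rw [hdxy]; exact hgood)
          refine ⟨Function.update φ' z z₁, ?_, ?_⟩
          · intro a b hab
            by_cases haz : a = z
            · subst haz
              rcases huniq b hab with rfl | rfl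
              · rw [Function.update_self, Function.update_of_ne hzx.ne']
                refine ⟨ha1.symm, ?_⟩
                rw [B.dist_comm, hd1, del_comm]
              · rw [Function.update_self, Function.update_of_ne hzy.ne']
                refine ⟨ha2.symm, ?_⟩
                rw [B.dist_comm, hd2, del_comm]
            · by_cases hbz : b = z
              · subst hbz
                rcases huniq a hab.symm with rfl | rfl
                · rw [Function.update_self, Function.update_of_ne hzx.ne']
                  exact ⟨ha1, hd1⟩
                · rw [Function.update_self, Function.update_of_ne hzy.ne']
                  refine ⟨ha2, by rw [hd2, del_comm]⟩
              · rw [Function.update_of_ne haz, Function.update_of_ne hbz]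
                exact hφ'e a b ⟨hab, haz, hbz⟩
          · intro a
            by_cases haz : a = z
            · subst haz
              rw [Function.update_self]
              exact ⟨φ' x, ha1.symm⟩
            · rw [Function.update_of_ne haz]
              exact hφ'i a
        · -- neighbours not adjacent : add the edge xy
          set H' : SimpleGraph W :=
            { Adj := fun a b => s(a, b) = s(x, y) ∨ (H.Adj a b ∧ a ≠ z ∧ b ≠ z)
              symm := by
                constructor
                intro a b hab
                rcases hab with h | ⟨h, h1, h2⟩
                · exact Or.inl (Sym2.eq_swap.trans h)
                · exact Or.inr ⟨h.symm, h2, h1⟩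
              loopless := by
                constructor
                intro a ha
                rcases ha with h | ⟨h, _, _⟩
                · rw [Sym2.eq_iff] at h
                  rcases h with ⟨h1, h2⟩ | ⟨h1, h2⟩
                  · exact hyx (h2.symm.trans h1)
                  · exact hyx (h1.symm.trans h2)
                · exact H.loopless.irrefl a h } with hH'
          have hxM : x ∈ ({x, z} : Set W) := Or.inl rfl
          have hzM : z ∈ ({x, z} : Set W) := Or.inr rfl
          have hKd' : ¬ HasK4Minor H' := by
            intro hmin
            apply hK
            refine merge_minor hxM (pair_induce_connected hzx.symm) (k4_mono ?_ hmin)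
            intro a b hab
            rcases hab with h | ⟨h, h1, h2⟩
            · rw [Sym2.eq_iff] at h
              have hyM : y ∉ ({x, z} : Set W) := by
                intro hy
                rcases hy with h' | h'
                · exact hyx h'
                · rw [Set.mem_singleton_iff] at h'
                  exact hzy.ne' h'
              rcases h with ⟨h1, h2⟩ | ⟨h1, h2⟩
              · rw [h1, h2]
                exact merge_adj_m hxM hzM hyM hzy
              · rw [h1, h2]
                exact (merge_adj_m hxM hzM hyM hzy).symm
            · by_cases hax : a = x
              · have hbM : b ∉ ({x, z} : Set W) := by
                  intro hb
                  rcases hb with h' | h'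
                  · exact h.ne (hax.trans h'.symm)
                  · rw [Set.mem_singleton_iff] at h'
                    exact h2 h'
                rw [hax]
                exact merge_adj_m hxM hxM hbM (hax ▸ h)
              · by_cases hbx : b = x
                · have haM : a ∉ ({x, z} : Set W) := by
                    intro hb
                    rcases hb with h' | h'
                    · exact hax h'
                    · rw [Set.mem_singleton_iff] at h'
                      exact h1 h'
                  rw [hbx]
                  exact (merge_adj_m hxM hxM haM (hbx ▸ h.symm)).symm
                · refine merge_adj_of_adj ?_ ?_ h
                  · intro hb
                    rcases hb with h' | h'
                    · exact hax h'
                    · rw [Set.mem_singleton_iff] at h'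
                      exact h1 h'
                  · intro hb
                    rcases hb with h' | h'
                    · exact hbx h'
                    · rw [Set.mem_singleton_iff] at h'
                      exact h2 h'
          have hcount' : H'.edgeSet.ncard ≤ n := by
            have hsub : H'.edgeSet ⊆ ((H.edgeSet \ {s(z, x)}) \ {s(z, y)}) ∪ {s(x, y)} := by
              intro e he
              induction e using Sym2.ind with
              | _ a b =>
                rcases he with h | ⟨hab, haz, hbz⟩
                · exact Or.inr h
                · refine Or.inl ⟨⟨hab, ?_⟩, ?_⟩
                  · rw [Set.mem_singleton_iff, Sym2.eq_iff]
                    rintro (⟨h1, _⟩ | ⟨_, h2⟩)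
                    · exact haz h1
                    · exact hbz h2
                  · rw [Set.mem_singleton_iff, Sym2.eq_iff]
                    rintro (⟨h1, h2⟩ | ⟨h1, h2⟩)
                    · exact haz h1
                    · exact hbz h2
            have hm1 : s(z, x) ∈ H.edgeSet := hzx
            have hm2 : s(z, y) ∈ H.edgeSet \ {s(z, x)} := by
              refine ⟨hzy, ?_⟩
              rw [Set.mem_singleton_iff, Sym2.eq_iff]
              rintro (⟨_, h2⟩ | ⟨h1, h2⟩)
              · exact hyx h2
              · exact hzy.ne' h2
            have e1 := Set.ncard_diff_singleton_add_one hm1 (Set.toFinite _)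
            have e2 := Set.ncard_diff_singleton_add_one hm2 (Set.toFinite _)
            have e3 := Set.ncard_union_le ((H.edgeSet \ {s(z, x)}) \ {s(z, y)}) {s(x, y)}
            have e4 := Set.ncard_le_ncard hsub (Set.toFinite _)
            have e5 : ({s(x, y)} : Set (Sym2 W)).ncard = 1 := Set.ncard_singleton _
            omega
          obtain ⟨φ', hφ'e, hφ'i⟩ := ih H' hKd' hcount'
          have hxyH' : H'.Adj x y := Or.inl rfl
          obtain ⟨hBtxy, hdxy⟩ := hφ'e x y hxyH'
          obtain ⟨z₁, z₂, ha1, ha2, _, _, hd1, hd2, _, _⟩ :=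
            hAll.2 (φ' x) (φ' y) hBtxy (del G k x z) (del G k z y) (by rw [hdxy]; exact hgood)
          refine ⟨Function.update φ' z z₁, ?_, ?_⟩
          · intro a b hab
            by_cases haz : a = z
            · subst haz
              rcases huniq b hab with rfl | rfl
              · rw [Function.update_self, Function.update_of_ne hzx.ne']
                refine ⟨ha1.symm, ?_⟩
                rw [B.dist_comm, hd1, del_comm]
              · rw [Function.update_self, Function.update_of_ne hzy.ne']
                refine ⟨ha2.symm, ?_⟩
                rw [B.dist_comm, hd2, del_comm]
            · by_cases hbz : b = z
              · subst hbz
                rcases huniq a hab.symm with rfl | rfl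
                · rw [Function.update_self, Function.update_of_ne hzx.ne']
                  exact ⟨ha1, hd1⟩
                · rw [Function.update_self, Function.update_of_ne hzy.ne']
                  refine ⟨ha2, by rw [hd2, del_comm]⟩
              · rw [Function.update_of_ne haz, Function.update_of_ne hbz]
                exact hφ'e a b (Or.inr ⟨hab, haz, hbz⟩)
          · intro a
            by_cases haz : a = z
            · subst haz
              rw [Function.update_self]
              exact ⟨φ' x, ha1.symm⟩
            · rw [Function.update_of_ne haz]
              exact hφ'i a
      · -- z has a single neighbour x
        push_neg at h2n
        have huniq1 : ∀ t, H.Adj z t → t = x := fun t ht => h2n t ht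
        obtain ⟨φ', hφ'e, hφ'i⟩ := ih (Del H {z}) hKd hcount1
        obtain ⟨t0, ht0⟩ := hφ'i x
        set p := B.dist (φ' x) t0 with hp
        have hp1 : 1 ≤ p := hBc.pos_dist_of_ne ht0.ne
        have hpk : p ≤ k := hPD _ _ ht0
        set q := del G k x z with hq
        have hq1 : 1 ≤ q := del_pos hk x z
        have hqk : q ≤ k := del_le x z
        have hgood := good_aux (p := p) (q := q) hk hp1 hpk hq1 hqk
        obtain ⟨z₁, z₂, ha1, _, _, _, hd1, _, _, _⟩ :=
          hAll.2 (φ' x) t0 ht0 q (if p = q then min 2 k else max p q - min p q) hgood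
        refine ⟨Function.update φ' z z₁, ?_, ?_⟩
        · intro a b hab
          by_cases haz : a = z
          · subst haz
            have hbx := huniq1 b hab
            subst hbx
            rw [Function.update_self, Function.update_of_ne hzx.ne']
            refine ⟨ha1.symm, ?_⟩
            rw [B.dist_comm, hd1, del_comm]
          · by_cases hbz : b = z
            · subst hbz
              have hax := huniq1 a hab.symm
              subst hax
              rw [Function.update_self, Function.update_of_ne hzx.ne']
              exact ⟨ha1, hd1⟩
            · rw [Function.update_of_ne haz, Function.update_of_ne hbz]
              exact hφ'e a b ⟨hab, haz, hbz⟩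
        · intro a
          by_cases haz : a = z
          · subst haz
            rw [Function.update_self]
            exact ⟨φ' x, ha1.symm⟩
          · rw [Function.update_of_ne haz]
            exact hφ'i a

end K4F

/-- If `B` is a connected graph of odd-girth `2k+1` admitting a `k`-partial distance
graph with the all `k`-good triple property, then every finite `K₄`-minor-free graph
of odd-girth at least `2k+1` admits a homomorphism to `B`. -/
theorem bound_of_allKGoodTriple {V W : Type*} [Fintype W] (k : ℕ) (hk : 1 ≤ k)
    (B Bt : SimpleGraph V) (hBc : B.Connected)
    (hOG : hasOddGirth B (2*k+1))
    (hPD : IsPartialDistGraph B Bt k)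
    (hAll : AllKGoodTripleProp B Bt k)
    (G : SimpleGraph W) (h1 : ¬ HasK4Minor G) (h2 : oddGirthAtLeast G (2*k+1)) :
    Nonempty (G →g B) := by
  classical
  obtain ⟨φ, hφe, -⟩ :=
    K4F.build k hk G B Bt hBc h2 hPD hAll (G.edgeSet.ncard) G h1 le_rfl
  refine ⟨⟨φ, ?_⟩⟩
  intro a b hab
  obtain ⟨hBt, hdist⟩ := hφe a b hab
  have hd1 : G.dist a b = 1 := SimpleGraph.dist_eq_one_iff_adj.mpr hab
  have hdel : K4F.del G k a b = 1 := by
    unfold K4F.del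
    rw [hd1, if_pos (by omega : 0 < 1), Nat.min_eq_left hk]
  rw [hdel] at hdist
  exact SimpleGraph.dist_eq_one_iff_adj.mp hdist
end

section
/- Let B be a graph of odd-girth 2k+1 and let (B̃, d_B) be a k-partial distance graph of B with the all k-good triple property. Then for every edge xy of B̃, there is a cycle of length 2k+1 in B containing both x and y. -/
open SimpleGraph

/-- In a path from `b` to `u`, if the edge `{u, b}` occurs, the path has length 1. -/
private lemma path_edge_endpoint {V : Type*} {G : SimpleGraph V} :
    ∀ {b u : V} (p : G.Walk b u), p.IsPath → s(u, b) ∈ p.edges → p.length = 1 := by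
  intro b u p
  induction p with
  | nil => simp
  | @cons b c u h q ih =>
    intro hp he
    rw [SimpleGraph.Walk.edges_cons, List.mem_cons] at he
    rcases he with he | he
    · rw [Sym2.eq_iff] at he
      rcases he with ⟨rfl, rfl⟩ | ⟨rfl, -⟩
      · exact absurd rfl h.ne
      · have : q = SimpleGraph.Walk.nil :=
          (SimpleGraph.Walk.isPath_iff_eq_nil (p := q)).mp (hp.of_cons)
        simp [this]
    · exact absurd (q.snd_mem_support_of_mem_edges he)
        ((SimpleGraph.Walk.cons_isPath_iff h q).mp hp).2

/-- Key lemma: in a graph of odd-girth at least `m`, every closed walk of odd length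
has length at least `m`, and if its length is at most `m` it is a cycle. -/
private lemma odd_closed_walk_key {V : Type*} {G : SimpleGraph V} {m : ℕ}
    (hOG : oddGirthAtLeast G m) :
    ∀ n : ℕ, ∀ (v : V) (w : G.Walk v v), w.length = n → Odd n →
      m ≤ n ∧ (n ≤ m → w.IsCycle) := by
  classical
  intro n
  induction n using Nat.strong_induction_on with
  | _ n ih =>
    intro v w hlen hodd
    obtain ⟨t, ht⟩ := hodd
    have hwn : ¬ w.Nil := by
      rw [SimpleGraph.Walk.nil_iff_length_eq, hlen]; omega
    by_cases hnd : w.support.tail.Nodup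
    · -- no repeated vertex: it is a cycle (unless a degenerate length-2 walk)
      obtain ⟨b, hadj, p, rfl⟩ := SimpleGraph.Walk.not_nil_iff.mp hwn
      have hps : p.support.Nodup := by simpa using hnd
      have hp : p.IsPath := SimpleGraph.Walk.IsPath.mk' hps
      by_cases hedge : s(v, b) ∈ p.edges
      · have h1 := path_edge_endpoint p hp hedge
        rw [SimpleGraph.Walk.length_cons, h1] at hlen
        omega
      · have hc : (SimpleGraph.Walk.cons hadj p).IsCycle :=
          (SimpleGraph.Walk.cons_isCycle_iff p hadj).mpr ⟨hp, hedge⟩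
        refine ⟨?_, fun _ => hc⟩
        have := hOG v (SimpleGraph.Walk.cons hadj p) hc (by rw [hlen]; exact ⟨t, ht⟩)
        omega
    · -- a repeated vertex: split into two shorter closed walks
      obtain ⟨u, hu⟩ : ∃ u, 2 ≤ w.support.tail.count u := by
        by_contra hcon
        push_neg at hcon
        exact hnd (List.nodup_iff_count_le_one.mpr fun a => by have := hcon a; omega)
      have humem : u ∈ w.support :=
        List.mem_of_mem_tail (List.count_pos_iff.mp (by omega))
      set w' := w.rotate u humem with hw'def
      have hlen' : w'.length = n := by
        rw [← SimpleGraph.Walk.length_darts, hw'def,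
          (SimpleGraph.Walk.rotate_darts w u humem).perm.length_eq,
          SimpleGraph.Walk.length_darts, hlen]
      have hcount : 2 ≤ w'.support.tail.count u := by
        rw [(SimpleGraph.Walk.support_rotate w u humem).perm.count_eq]; exact hu
      have hwn' : ¬ w'.Nil := by
        rw [SimpleGraph.Walk.nil_iff_length_eq, hlen']; omega
      obtain ⟨b, hadj, q, hw'⟩ := SimpleGraph.Walk.not_nil_iff.mp hwn'
      have hqcount : 2 ≤ q.support.count u := by
        rw [hw'] at hcount; simpa using hcount
      have hup : u ∈ q.support := List.count_pos_iff.mp (by omega)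
      have hspec := q.take_spec hup
      have hlength : (q.takeUntil u hup).length + (q.dropUntil u hup).length = q.length := by
        rw [← SimpleGraph.Walk.length_append, hspec]
      have hqlen : q.length + 1 = n := by
        rw [hw'] at hlen'; simpa using hlen'
      have hr1 : 1 ≤ (q.dropUntil u hup).length := by
        by_contra h0
        push_neg at h0
        have hnil : (q.dropUntil u hup) = SimpleGraph.Walk.nil :=
          SimpleGraph.Walk.Nil.eq_nil
            (SimpleGraph.Walk.nil_iff_length_eq.mpr (by omega))
        have hq : q = q.takeUntil u hup := by
          conv_lhs => rw [← hspec]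
          rw [hnil, SimpleGraph.Walk.append_nil]
        have := q.count_support_takeUntil_eq_one hup
        rw [← hq] at this
        omega
      -- the two closed walks
      rcases Nat.even_or_odd ((q.dropUntil u hup).length) with he | ho
      · -- the walk `cons hadj (takeUntil)` is the odd one
        obtain ⟨s, hs⟩ := he
        have hodd1 : Odd ((q.takeUntil u hup).length + 1) := ⟨t - s, by omega⟩
        have hlt : (q.takeUntil u hup).length + 1 < n := by omega
        have := (ih _ hlt u (SimpleGraph.Walk.cons hadj (q.takeUntil u hup))
          (by simp) hodd1).1
        exact ⟨by omega, fun hcon => absurd hcon (by omega)⟩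
      · have hlt : (q.dropUntil u hup).length < n := by omega
        have := (ih _ hlt u (q.dropUntil u hup) rfl ho).1
        exact ⟨by omega, fun hcon => absurd hcon (by omega)⟩

/-- If `B` is connected of odd-girth `2k+1` and `Bt` is a `k`-partial distance graph
of `B` with the all `k`-good triple property, then every edge of `Bt` lies on a
`(2k+1)`-cycle of `B` (through both of its endpoints). -/
theorem edge_on_cycle_of_allKGoodTriple {V : Type*} (k : ℕ) (hk : 1 ≤ k)
    (B Bt : SimpleGraph V) (hBc : B.Connected)
    (hOG : hasOddGirth B (2*k+1))
    (hPD : IsPartialDistGraph B Bt k)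
    (hAll : AllKGoodTripleProp B Bt k)
    (x y : V) (hxy : Bt.Adj x y) :
    ∃ (v : V) (w : B.Walk v v),
      w.IsCycle ∧ w.length = 2*k+1 ∧ x ∈ w.support ∧ y ∈ w.support := by
  classical
  have hne := hxy.ne
  have hp1 : 1 ≤ B.dist x y := hBc.pos_dist_of_ne hne
  have hpk : B.dist x y ≤ k := hPD x y hxy
  set p := B.dist x y with hpdef
  have hgood : kGoodTriple k p k (k + 1 - p) := by
    refine ⟨hp1, hpk, hk, le_refl k, by omega, by omega, fun _ => by omega, fun hev => ?_⟩
    obtain ⟨s, hs⟩ := hev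
    omega
  obtain ⟨z₁, z₂, ha1, ha2, -, -, hd1, hd2, -, -⟩ := hAll.2 x y hxy k (k + 1 - p) hgood
  obtain ⟨W1, hW1⟩ := (hBc x y).exists_walk_length_eq_dist
  obtain ⟨W2, hW2⟩ := (hBc y z₁).exists_walk_length_eq_dist
  obtain ⟨W3, hW3⟩ := (hBc z₁ x).exists_walk_length_eq_dist
  rw [hd2] at hW2
  rw [SimpleGraph.dist_comm, hd1] at hW3
  set C : B.Walk x x := W1.append (W2.append W3) with hCdef
  have hClen : C.length = 2 * k + 1 := by
    rw [hCdef, SimpleGraph.Walk.length_append, SimpleGraph.Walk.length_append,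
      hW1, hW2, hW3]
    omega
  have hkey := odd_closed_walk_key hOG.1 (2 * k + 1) x C hClen ⟨k, by omega⟩
  refine ⟨x, C, hkey.2 le_rfl, hClen, C.start_mem_support, ?_⟩
  exact SimpleGraph.Walk.subset_support_append_left _ _ W1.end_mem_support
end

section
/- Let B be a graph and let (B̃, d_B) be a k-partial distance graph of B with the all k-good triple property. Then for each integer p with 1 ≤ p ≤ k, B̃ contains an edge of weight p, i.e., there exist vertices x, y adjacent in B̃ with d_B(x,y) = p. -/
open SimpleGraph

/-- If a `k`-partial distance graph `Bt` of a connected graph `B` has the all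
`k`-good triple property, then for every `p` with `1 ≤ p ≤ k` there is an edge of
`Bt` of weight `p`. -/
theorem edge_of_each_weight_of_allKGoodTriple {V : Type*} (k : ℕ) (hk : 1 ≤ k)
    (B Bt : SimpleGraph V) (hBc : B.Connected)
    (hPD : IsPartialDistGraph B Bt k)
    (hAll : AllKGoodTripleProp B Bt k)
    (p : ℕ) (hp : 1 ≤ p) (hp' : p ≤ k) :
    ∃ x y, Bt.Adj x y ∧ B.dist x y = p := by
  obtain ⟨⟨x, y, hxy⟩, hG⟩ := hAll
  have hwk : B.dist x y ≤ k := hPD x y hxy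
  have hw1 : 0 < B.dist x y := hBc.pos_dist_of_ne hxy.ne
  by_cases hwp : B.dist x y = p
  · exact ⟨x, y, hxy, hwp⟩
  · set w := B.dist x y with hw
    have hgood : kGoodTriple k w p (max w p - min w p) := by
      refine ⟨hw1, hwk, hp, hp', by omega, by omega, ?_, ?_⟩
      · rintro ⟨m, hm⟩; omega
      · intro _; omega
    obtain ⟨z₁, z₂, h1, h2, h3, h4, h5, _⟩ := hG x y hxy p (max w p - min w p) hgood
    exact ⟨x, z₁, h1, h5⟩
end
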